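/- arXiv:1812.04455 — 6 statements merged into one kernel-verified Lean document; each statement's English description precedes it below -/
import Mathlib

section
/- Let χ₁, χ₂, λ₁, λ₂, μ₁, μ₂ be positive real numbers. If λ₂ > λ₁ and χ₂λ₂μ₂ ≤ χ₁λ₁μ₁, then M̲ = χ₁μ₁ − χ₂μ₂. -/
open MeasureTheory Real Set

lemma int_exp_neg_mul (b : ℝ) (hb : 0 < b) :
    ∫ s in Set.Ioi (0:ℝ), Real.exp (-b * s) = 1 / b := by
  have h := integral_comp_mul_left_Ioi (fun x => Real.exp (-x)) 0 hb
  simp only [mul_zero, neg_zero, Real.exp_zero, smul_eq_mul,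
    mul_one] at h
  simp only [neg_mul]
  rw [h, integral_exp_neg_Ioi]
  simp

/-- if lam₂ > lam₁ and χ₂lam₂μ₂ ≤ χ₁lam₁μ₁ then M̲ = χ₁μ₁ − χ₂μ₂. -/
theorem stmt_1 (χ₁ χ₂ lam₁ lam₂ μ₁ μ₂ : ℝ)
    (hχ₁ : 0 < χ₁) (hχ₂ : 0 < χ₂) (hlam₁ : 0 < lam₁) (hlam₂ : 0 < lam₂)
    (hμ₁ : 0 < μ₁) (hμ₂ : 0 < μ₂)
    (hlam : lam₂ > lam₁) (hle : χ₂ * lam₂ * μ₂ ≤ χ₁ * lam₁ * μ₁) :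
    (∫ s in Set.Ioi (0:ℝ),
        max 0 (-(χ₂ * lam₂ * μ₂ * Real.exp (-lam₂ * s) - χ₁ * lam₁ * μ₁ * Real.exp (-lam₁ * s))))
      = χ₁ * μ₁ - χ₂ * μ₂ := by
  have hcong : ∀ s ∈ Set.Ioi (0:ℝ),
      max 0 (-(χ₂ * lam₂ * μ₂ * Real.exp (-lam₂ * s) - χ₁ * lam₁ * μ₁ * Real.exp (-lam₁ * s)))
        = χ₁ * lam₁ * μ₁ * Real.exp (-lam₁ * s) - χ₂ * lam₂ * μ₂ * Real.exp (-lam₂ * s) := by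
    intro s hs
    rw [neg_sub, max_eq_right]
    have hexp : Real.exp (-lam₂ * s) ≤ Real.exp (-lam₁ * s) := by
      apply Real.exp_le_exp.2
      nlinarith [Set.mem_Ioi.1 hs]
    have := mul_le_mul hle hexp (Real.exp_pos _).le (by positivity)
    linarith
  rw [setIntegral_congr_fun measurableSet_Ioi hcong]
  have h1 : IntegrableOn (fun s => χ₁ * lam₁ * μ₁ * Real.exp (-lam₁ * s)) (Set.Ioi (0:ℝ)) := by
    exact (exp_neg_integrableOn_Ioi 0 hlam₁).const_mul _
  have h2 : IntegrableOn (fun s => χ₂ * lam₂ * μ₂ * Real.exp (-lam₂ * s)) (Set.Ioi (0:ℝ)) := by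
    exact (exp_neg_integrableOn_Ioi 0 hlam₂).const_mul _
  rw [integral_sub h1 h2, integral_const_mul, integral_const_mul,
    int_exp_neg_mul _ hlam₁, int_exp_neg_mul _ hlam₂]
  field_simp
end

section
/- Let χ₁, χ₂, λ₁, λ₂, μ₁, μ₂ be positive real numbers. If λ₂ > λ₁ and χ₂λ₂μ₂ ≥ χ₁λ₁μ₁, then M̲ = (λ₂/λ₁ − 1) · χ₂μ₂ · (χ₁λ₁μ₁/(χ₂λ₂μ₂))^{λ₂/(λ₂−λ₁)}. -/
open Real MeasureTheory Set Filter
open scoped Topology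

/-- ∫_{Ioi a} exp(-b x) dx = exp(-b a)/b for b > 0. -/
lemma my_integral_exp_neg (a : ℝ) {b : ℝ} (hb : 0 < b) :
    ∫ x in Set.Ioi a, Real.exp (-b * x) = Real.exp (-b * a) / b := by
  have h := integral_Ioi_of_hasDerivAt_of_tendsto
      (f := fun x => -Real.exp (-b * x) / b) (f' := fun x => Real.exp (-b * x)) (a := a) (m := 0)
      ?_ ?_ (exp_neg_integrableOn_Ioi a hb) ?_
  · rw [h]; ring
  · have : Continuous fun x : ℝ => -Real.exp (-b * x) / b := by
      exact ((Real.continuous_exp.comp (continuous_const.mul continuous_id)).neg).div_const b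
    exact this.continuousWithinAt
  · intro x _
    simpa [hb.ne'] using ((hasDerivAt_id x).const_mul (-b)).exp.neg.div_const b
  · have : Tendsto (fun x : ℝ => -Real.exp (-b * x) / b) atTop (𝓝 (-0 / b)) :=
      (Tendsto.neg (tendsto_exp_atBot.comp
        (tendsto_id.const_mul_atTop_of_neg (neg_neg_iff_pos.2 hb)))).div_const b
    simpa using this

/-- if lam₂ > lam₁ and χ₂lam₂μ₂ ≥ χ₁lam₁μ₁ then
    M̲ = (lam₂/lam₁ − 1)·χ₂μ₂·(χ₁lam₁μ₁/(χ₂lam₂μ₂))^{lam₂/(lam₂−lam₁)}. -/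
theorem stmt_2 (χ₁ χ₂ lam₁ lam₂ μ₁ μ₂ : ℝ)
    (hχ₁ : 0 < χ₁) (hχ₂ : 0 < χ₂) (hlam₁ : 0 < lam₁) (hlam₂ : 0 < lam₂)
    (hμ₁ : 0 < μ₁) (hμ₂ : 0 < μ₂)
    (hlam : lam₂ > lam₁) (hge : χ₂ * lam₂ * μ₂ ≥ χ₁ * lam₁ * μ₁) :
    (∫ s in Set.Ioi (0:ℝ),
        max 0 (-(χ₂ * lam₂ * μ₂ * Real.exp (-lam₂ * s) - χ₁ * lam₁ * μ₁ * Real.exp (-lam₁ * s))))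
      = (lam₂ / lam₁ - 1) * (χ₂ * μ₂) *
        ((χ₁ * lam₁ * μ₁ / (χ₂ * lam₂ * μ₂)) ^ (lam₂ / (lam₂ - lam₁))) := by
  set A := χ₁ * lam₁ * μ₁ with hAdef
  set B := χ₂ * lam₂ * μ₂ with hBdef
  have hA : 0 < A := by positivity
  have hB : 0 < B := by positivity
  have hd : 0 < lam₂ - lam₁ := by linarith
  set s₀ : ℝ := Real.log (B / A) / (lam₂ - lam₁) with hs₀def
  have hs₀ : 0 ≤ s₀ := by
    apply div_nonneg _ hd.le
    exact Real.log_nonneg ((one_le_div hA).mpr hge)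
  -- pointwise identity
  have hpt : ∀ s : ℝ, max 0 (-(B * Real.exp (-lam₂ * s) - A * Real.exp (-lam₁ * s)))
      = (Set.Ioi s₀).indicator (fun s => A * Real.exp (-lam₁ * s) - B * Real.exp (-lam₂ * s)) s := by
    intro s
    have hexp : Real.exp (-lam₁ * s) = Real.exp (-lam₂ * s) * Real.exp ((lam₂ - lam₁) * s) := by
      rw [← Real.exp_add]; congr 1; ring
    have hfac : A * Real.exp (-lam₁ * s) - B * Real.exp (-lam₂ * s)
        = Real.exp (-lam₂ * s) * (A * Real.exp ((lam₂ - lam₁) * s) - B) := by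
      rw [hexp]; ring
    have hiff : s₀ < s ↔ B < A * Real.exp ((lam₂ - lam₁) * s) := by
      rw [hs₀def, div_lt_iff₀ hd, mul_comm s, Real.log_lt_iff_lt_exp (by positivity),
        div_lt_iff₀ hA, mul_comm]
    by_cases hcase : s₀ < s
    · rw [Set.indicator_of_mem (Set.mem_Ioi.mpr hcase)]
      have hpos : 0 < A * Real.exp (-lam₁ * s) - B * Real.exp (-lam₂ * s) := by
        rw [hfac]
        have h1 := hiff.mp hcase
        have h2 := Real.exp_pos (-lam₂ * s)
        nlinarith
      rw [max_eq_right (by linarith)]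
      ring
    · rw [Set.indicator_of_notMem (by simpa using hcase)]
      have hle : A * Real.exp (-lam₁ * s) - B * Real.exp (-lam₂ * s) ≤ 0 := by
        rw [hfac]
        have h1 : A * Real.exp ((lam₂ - lam₁) * s) ≤ B := by
          by_contra h
          exact hcase (hiff.mpr (lt_of_not_ge h))
        have h2 := Real.exp_pos (-lam₂ * s)
        nlinarith
      rw [max_eq_left (by linarith)]
  simp only [hpt]
  rw [MeasureTheory.integral_indicator measurableSet_Ioi,
    Measure.restrict_restrict measurableSet_Ioi]
  have hinter : Set.Ioi s₀ ∩ Set.Ioi (0:ℝ) = Set.Ioi s₀ := by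
    rw [Set.Ioi_inter_Ioi, max_eq_left hs₀]
  rw [hinter]
  have hint : ∫ s in Set.Ioi s₀, (A * Real.exp (-lam₁ * s) - B * Real.exp (-lam₂ * s))
      = A * (Real.exp (-lam₁ * s₀) / lam₁) - B * (Real.exp (-lam₂ * s₀) / lam₂) := by
    rw [MeasureTheory.integral_sub]
    · rw [MeasureTheory.integral_const_mul, MeasureTheory.integral_const_mul,
        my_integral_exp_neg s₀ hlam₁, my_integral_exp_neg s₀ hlam₂]
    · exact (exp_neg_integrableOn_Ioi s₀ hlam₁).const_mul A
    · exact (exp_neg_integrableOn_Ioi s₀ hlam₂).const_mul B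
  rw [hint]
  -- now the algebra with rpow
  have hlogAB : Real.log (A / B) = -Real.log (B / A) := by
    rw [← Real.log_inv, inv_div]
  have he2 : Real.exp (-lam₂ * s₀) = (A / B) ^ (lam₂ / (lam₂ - lam₁)) := by
    rw [Real.rpow_def_of_pos (by positivity), hs₀def, hlogAB]
    congr 1
    ring
  have he1 : Real.exp (-lam₁ * s₀) = (A / B) ^ (lam₂ / (lam₂ - lam₁)) * (B / A) := by
    have h : Real.exp (-lam₁ * s₀) = Real.exp (-lam₂ * s₀) * Real.exp (Real.log (B / A)) := by
      rw [← Real.exp_add]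
      congr 1
      rw [hs₀def]
      field_simp
      ring
    rw [h, he2, Real.exp_log (by positivity)]
  rw [he1, he2]
  have hBμ : χ₂ * μ₂ = B / lam₂ := by
    rw [hBdef]; field_simp
  rw [hBμ]
  generalize (A / B) ^ (lam₂ / (lam₂ - lam₁)) = X
  field_simp
end

section
/- (Theorem C(iii)) Let c < 2√a. Then there is no traveling wave solution with speed c connecting (a/b, aμ₁/(bλ₁), aμ₂/(bλ₂)) and (0,0,0): there exist no bounded functions U, V₁, V₂ : ℝ → ℝ with U nonnegative and of class C², V₁, V₂ of class C² with bounded first derivatives, satisfying 0 = U'' + cU' + (U·(χ₂V₂ − χ₁V₁)')' + U(a − bU) and 0 = Vᵢ'' + cτVᵢ' − λᵢVᵢ + μᵢU on ℝ (i = 1,2), such that (U,V₁,V₂)(x) → (a/b, aμ₁/(bλ₁), aμ₂/(bλ₂)) as x → −∞ and (U,V₁,V₂)(x) → (0,0,0) as x → +∞. -/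
open Filter Set
set_option maxHeartbeats 1000000
open Filter Set
set_option maxHeartbeats 1000000

lemma lin_decay {f f' : ℝ → ℝ} {x₁ δ : ℝ} (hf : ∀ x, x₁ ≤ x → HasDerivAt f (f' x) x)
    (hd : ∀ x, x₁ ≤ x → f' x ≤ -δ) : ∀ y, x₁ ≤ y → f y ≤ f x₁ - δ * (y - x₁) := by
  intro y hy
  rcases eq_or_lt_of_le hy with rfl | h
  · simp
  obtain ⟨ξ, hξ, hslope⟩ := exists_hasDerivAt_eq_slope f f' h
    (fun x hx => (hf x hx.1).continuousAt.continuousWithinAt)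
    (fun x hx => hf x hx.1.le)
  have h1 := hd ξ (le_of_lt hξ.1)
  rw [hslope] at h1
  have hy0 : 0 < y - x₁ := by linarith
  have := (div_le_iff₀ hy0).mp h1
  linarith

lemma invariance {f f' : ℝ → ℝ} (hf : ∀ x, HasDerivAt f (f' x) x) {x₁ m δ : ℝ} (hδ : 0 < δ)
    (h₁ : f x₁ ≤ m) (hstep : ∀ x, x₁ ≤ x → f x ≤ m → f' x ≤ -δ) :
    ∀ y, x₁ ≤ y → f y ≤ m := by
  intro y hy
  by_contra hgt
  push_neg at hgt
  have hcf : Continuous f := by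
    have : Differentiable ℝ f := fun x => (hf x).differentiableAt
    exact this.continuous
  set S := {t | t ∈ Icc x₁ y ∧ f t ≤ m} with hS
  have hSne : S.Nonempty := ⟨x₁, ⟨le_rfl, hy⟩, h₁⟩
  have hSbdd : BddAbove S := ⟨y, fun t ht => ht.1.2⟩
  set z := sSup S with hz
  have hzS : z ∈ S := by
    have hclosed : IsClosed S := by
      have : S = Icc x₁ y ∩ f ⁻¹' (Iic m) := by ext t; simp [hS, and_comm]
      rw [this]; exact isClosed_Icc.inter (isClosed_Iic.preimage hcf)
    exact hclosed.csSup_mem hSne hSbdd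
  have hzy : z < y := by
    rcases lt_or_eq_of_le hzS.1.2 with h | h
    · exact h
    · exact absurd (h ▸ hzS.2) (not_le.mpr hgt)
  have hzd : f' z ≤ -δ := hstep z hzS.1.1 hzS.2
  -- slope tends to f' z < 0, so some t ∈ (z, y) has f t < f z ≤ m
  have hslope := hasDerivAt_iff_tendsto_slope.mp (hf z)
  have hmono : nhdsWithin z (Ioi z) ≤ nhdsWithin z {z}ᶜ :=
    nhdsWithin_mono z (fun t ht => ne_of_gt ht)
  have hslope' : Tendsto (slope f z) (nhdsWithin z (Ioi z)) (nhds (f' z)) :=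
    hslope.mono_left hmono
  have hev : ∀ᶠ t in nhdsWithin z (Ioi z), slope f z t < 0 :=
    hslope'.eventually_lt_const (by linarith)
  have hIoo : Ioo z y ∈ nhdsWithin z (Ioi z) := Ioo_mem_nhdsGT_of_mem ⟨le_rfl, hzy⟩
  have : ∃ t, slope f z t < 0 ∧ t ∈ Ioo z y := by
    have := hev.and (eventually_of_mem hIoo (fun t ht => ht))
    exact this.exists
  obtain ⟨t, hts, htI⟩ := this
  have hft : f t < f z := by
    have h0 : 0 < t - z := by linarith [htI.1]
    have : (f t - f z) / (t - z) < 0 := by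
      simpa [slope_def_field, div_eq_iff] using hts
    have := (div_lt_iff₀ h0).mp this
    linarith
  have htS : t ∈ S := ⟨⟨le_trans hzS.1.1 (le_of_lt htI.1), le_of_lt htI.2⟩,
    le_trans (le_of_lt hft) hzS.2⟩
  have : t ≤ z := le_csSup hSbdd htS
  linarith [htI.1]

lemma landau {f : ℝ → ℝ} (hf : ContDiff ℝ 2 f) {M : ℝ}
    (hM : ∀ x, |deriv (deriv f) x| ≤ M) (h0 : Tendsto f atTop (nhds 0)) :
    Tendsto (deriv f) atTop (nhds 0) := by
  have hM0 : 0 ≤ M := le_trans (abs_nonneg _) (hM 0)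
  have hfd : Differentiable ℝ f := hf.differentiable two_ne_zero
  have hfd1 : ContDiff ℝ 1 (deriv f) := by
    have h2 : ContDiff ℝ ((1:ℕ)+1 : ℕ) f := hf
    exact (contDiff_succ_iff_deriv.mp (by exact_mod_cast h2)).2.2
  have hfd' : Differentiable ℝ (deriv f) := hfd1.differentiable one_ne_zero
  rw [Metric.tendsto_atTop] at h0 ⊢
  intro ε hε
  set h : ℝ := ε / (2 * (M + 1)) with hh
  have hhpos : 0 < h := by positivity
  obtain ⟨N, hN⟩ := h0 (ε * h / 8) (by positivity)
  refine ⟨N, fun x hx => ?_⟩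
  obtain ⟨ξ, hξI, hξ⟩ := exists_hasDerivAt_eq_slope f (deriv f) (by linarith : x < x + h)
    (hfd.continuous.continuousOn) (fun t _ => hfd t |>.hasDerivAt)
  obtain ⟨η, hηI, hη⟩ := exists_hasDerivAt_eq_slope (deriv f) (deriv (deriv f))
    hξI.1 (hfd'.continuous.continuousOn) (fun t _ => hfd' t |>.hasDerivAt)
  have hfx : |f x| ≤ ε * h / 8 := le_of_lt (by simpa using hN x hx)
  have hfxh : |f (x + h)| ≤ ε * h / 8 := le_of_lt (by simpa using hN (x + h) (by linarith))
  have e1 : |deriv f ξ| ≤ ε / 4 := by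
    rw [hξ]
    rw [abs_div]
    rw [abs_of_pos (by linarith : (0:ℝ) < x + h - x)]
    rw [div_le_iff₀ (by linarith : (0:ℝ) < x + h - x)]
    have h4 : |f (x + h) - f x| ≤ ε * h / 4 := by
      have := abs_sub (f (x+h)) (f x)
      linarith [abs_sub_abs_le_abs_sub (f (x+h)) (f x), abs_sub (f (x+h)) (f x)]
    calc |f (x + h) - f x| ≤ ε * h / 4 := h4
      _ = ε / 4 * (x + h - x) := by ring
  have e2 : |deriv f x - deriv f ξ| ≤ M * h := by
    have : deriv f x - deriv f ξ = -(deriv (deriv f) η * (ξ - x)) := by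
      have hne : ξ - x ≠ 0 := by have := hξI.1; intro h'; have : ξ = x := by linarith
                                 linarith [hξI.1]
      field_simp [hne] at hη
      linarith [hη]
    rw [this, abs_neg, abs_mul]
    have h1 : |ξ - x| ≤ h := by
      rw [abs_of_pos (by linarith [hξI.1] : (0:ℝ) < ξ - x)]
      linarith [hξI.2]
    exact mul_le_mul (hM η) h1 (abs_nonneg _) hM0
  have hMh : M * h ≤ ε / 2 := by
    rw [hh, mul_div_assoc']
    rw [div_le_div_iff₀ (by positivity) (by norm_num)]
    nlinarith [hε]
  have habs : |deriv f x| ≤ |deriv f ξ| + |deriv f x - deriv f ξ| := by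
    have := abs_add_le (deriv f ξ) (deriv f x - deriv f ξ)
    simpa using this
  have : |deriv f x| < ε := by linarith
  simpa [Real.dist_eq] using this

lemma key_neg {a c ε p q r : ℝ} (ha : 0 < a) (hc0 : c < 0)
    (hε1 : ε ≤ a/2) (hε2 : ε ≤ -c/2)
    (hp1 : -ε ≤ p - c) (hp2 : p - c ≤ ε) (hq1 : -ε ≤ q - a)
    (hr : r ≤ a/(4*(1-c))) : -r^2 - p*r - q ≤ -(a/8) := by
  have h1c : (0:ℝ) < 1 - c := by linarith
  have hpneg : p ≤ c/2 := by linarith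
  have hq' : a/2 ≤ q := by linarith
  rcases le_or_gt r 0 with hr0 | hr0
  · nlinarith [sq_nonneg r, mul_nonneg (by linarith : (0:ℝ) ≤ -p) (by linarith : (0:ℝ) ≤ -r)]
  · have hpm : -p ≤ (3/2)*(1-c) := by linarith
    have key : (-p) * r ≤ (3/2)*(1-c) * (a/(4*(1-c))) :=
      mul_le_mul hpm hr hr0.le (by positivity)
    have hid : (3/2)*(1-c) * (a/(4*(1-c))) = 3*a/8 := by
      field_simp
      ring
    rw [hid] at key
    nlinarith [sq_nonneg r]

lemma exists_consts {a c : ℝ} (ha : 0 < a) (hc : c < 2 * Real.sqrt a) :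
    ∃ ε m δ : ℝ, 0 < ε ∧ 0 < m ∧ 0 < δ ∧ ε ≤ a / 2 ∧
      ∀ p q r : ℝ, |p - c| ≤ ε → |q - a| ≤ ε → r ≤ m →
        -r^2 - p*r - q ≤ -δ := by
  rcases le_or_gt 0 c with hc0 | hc0
  · -- c ≥ 0, so c² < 4a
    have hs : Real.sqrt a ^ 2 = a := Real.sq_sqrt ha.le
    have hca : c ^ 2 < 4 * a := by nlinarith [Real.sqrt_nonneg a]
    have hden : (0:ℝ) < 2*(2*c+5) := by linarith
    have hX : (0:ℝ) < (4*a - c^2)/(2*(2*c+5)) := div_pos (by linarith) hden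
    have ha2 : (0:ℝ) < a/2 := by positivity
    refine ⟨min 1 (min (a/2) ((4*a - c^2)/(2*(2*c+5)))), 1, (4*a - c^2)/8,
      lt_min one_pos (lt_min ha2 hX), one_pos, by linarith, ?_, ?_⟩
    · exact le_trans (min_le_right _ _) (min_le_left _ _)
    · intro p q r hp hq _
      have hε1 : min 1 (min (a/2) ((4*a - c^2)/(2*(2*c+5)))) ≤ 1 := min_le_left _ _
      have hε2 : min 1 (min (a/2) ((4*a - c^2)/(2*(2*c+5)))) ≤ (4*a - c^2)/(2*(2*c+5)) :=
        le_trans (min_le_right _ _) (min_le_right _ _)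
      have hεpos : 0 < min 1 (min (a/2) ((4*a - c^2)/(2*(2*c+5)))) :=
        lt_min one_pos (lt_min ha2 hX)
      obtain ⟨hp1, hp2⟩ := abs_le.mp hp
      obtain ⟨hq1, hq2⟩ := abs_le.mp hq
      set ε := min 1 (min (a/2) ((4*a - c^2)/(2*(2*c+5)))) with hε
      clear_value ε
      clear hε hq hp hq2
      have hsq : 0 ≤ (r + p/2)^2 := sq_nonneg _
      have hp4 : p^2 ≤ (c + ε)^2 := by nlinarith
      have hεb : (2*c+5)*ε ≤ (4*a - c^2)/2 := by
        have hmul := mul_le_mul_of_nonneg_left hε2 hden.le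
        have hid : (2*(2*c+5)) * ((4*a - c^2)/(2*(2*c+5))) = 4*a - c^2 := by
          field_simp
        nlinarith
      have s1 : -r^2 - p*r - q ≤ p^2/4 - q := by nlinarith
      have s2 : p^2/4 - q ≤ (c+ε)^2/4 - (a - ε) := by nlinarith
      have s3 : (c+ε)^2 ≤ c^2 + (2*c+1)*ε := by nlinarith
      linarith
  · -- c < 0
    have h1c : (0:ℝ) < 1 - c := by linarith
    refine ⟨min (a/2) (-c/2), a/(4*(1-c)), a/8,
      lt_min (by positivity) (by linarith), div_pos ha (by linarith), by positivity,
      min_le_left _ _, ?_⟩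
    intro p q r hp hq hr
    obtain ⟨hp1, hp2⟩ := abs_le.mp hp
    obtain ⟨hq1, hq2⟩ := abs_le.mp hq
    exact key_neg ha hc0 (min_le_left _ _) (min_le_right _ _) hp1 hp2 hq1 hr

lemma riccati_half {A B C k : ℝ} (h1 : -(B*A) ≤ k * (-A)) (h2 : k * (-A) ≤ A^2/2)
    (hC : 0 < C) : -A^2 - B*A - C ≤ -A^2/2 := by linarith

-- arithmetic bound for the Gronwall energy estimate
lemma arith1 {u u' P q Kp Kq : ℝ} (hP : |P| ≤ Kp) (hq : |q| ≤ Kq) :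
    |(-(2*u*u') + 2*P*u'^2 + 2*q*(u*u'))| ≤ (1 + 2*Kp + 2*Kq) * (u^2 + u'^2) := by
  obtain ⟨hP1, hP2⟩ := abs_le.mp hP
  obtain ⟨hq1, hq2⟩ := abs_le.mp hq
  have h0 : 0 ≤ Kp := le_trans (abs_nonneg _) hP
  have h1 : 0 ≤ Kq := le_trans (abs_nonneg _) hq
  rw [abs_le]
  constructor
  · nlinarith [sq_nonneg (u + u'), sq_nonneg (u - u'), sq_nonneg u', sq_nonneg u,
      mul_nonneg (by linarith : (0:ℝ) ≤ Kp + P) (sq_nonneg u'),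
      mul_nonneg (by linarith : (0:ℝ) ≤ Kq + q) (sq_nonneg (u + u')),
      mul_nonneg (by linarith : (0:ℝ) ≤ Kq - q) (sq_nonneg (u - u'))]
  · nlinarith [sq_nonneg (u + u'), sq_nonneg (u - u'), sq_nonneg u', sq_nonneg u,
      mul_nonneg (by linarith : (0:ℝ) ≤ Kp - P) (sq_nonneg u'),
      mul_nonneg (by linarith : (0:ℝ) ≤ Kq - q) (sq_nonneg (u + u')),
      mul_nonneg (by linarith : (0:ℝ) ≤ Kq + q) (sq_nonneg (u - u'))]

/-- Theorem C(iii): there is no traveling wave solution with speed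
c < 2√a connecting (a/b, aμ₁/(bλ₁), aμ₂/(bλ₂)) and (0,0,0). -/
theorem stmt_10 (a b c τ χ₁ χ₂ lam₁ lam₂ μ₁ μ₂ : ℝ)
    (ha : 0 < a) (hb : 0 < b) (hτ : 0 < τ)
    (hχ₁ : 0 < χ₁) (hχ₂ : 0 < χ₂) (hlam₁ : 0 < lam₁) (hlam₂ : 0 < lam₂)
    (hμ₁ : 0 < μ₁) (hμ₂ : 0 < μ₂)
    (hc : c < 2 * Real.sqrt a) :
    ¬ ∃ U V₁ V₂ : ℝ → ℝ,
      (∃ C, ∀ x, |U x| ≤ C) ∧ (∃ C, ∀ x, |V₁ x| ≤ C) ∧ (∃ C, ∀ x, |V₂ x| ≤ C) ∧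
      (∀ x, 0 ≤ U x) ∧ ContDiff ℝ 2 U ∧ ContDiff ℝ 2 V₁ ∧ ContDiff ℝ 2 V₂ ∧
      (∃ C, ∀ x, |deriv V₁ x| ≤ C) ∧ (∃ C, ∀ x, |deriv V₂ x| ≤ C) ∧
      (∀ x : ℝ, 0 = deriv (deriv U) x + c * deriv U x +
          deriv (fun y => U y * deriv (fun z => χ₂ * V₂ z - χ₁ * V₁ z) y) x +
          U x * (a - b * U x)) ∧
      (∀ x : ℝ, 0 = deriv (deriv V₁) x + c * τ * deriv V₁ x - lam₁ * V₁ x + μ₁ * U x) ∧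
      (∀ x : ℝ, 0 = deriv (deriv V₂) x + c * τ * deriv V₂ x - lam₂ * V₂ x + μ₂ * U x) ∧
      Tendsto U atBot (nhds (a / b)) ∧
      Tendsto V₁ atBot (nhds (a * μ₁ / (b * lam₁))) ∧
      Tendsto V₂ atBot (nhds (a * μ₂ / (b * lam₂))) ∧
      Tendsto U atTop (nhds 0) ∧
      Tendsto V₁ atTop (nhds 0) ∧
      Tendsto V₂ atTop (nhds 0) := by
  rintro ⟨U, V₁, V₂, ⟨CU, hCU⟩, ⟨C1, hC1⟩, ⟨C2, hC2⟩, hU0, hUC, hV₁C, hV₂C,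
    ⟨D1, hD1⟩, ⟨D2, hD2⟩, hUeq, hV₁eq, hV₂eq, hUbot, hV₁bot, hV₂bot, hUtop, hV₁top, hV₂top⟩
  -- basic differentiability facts
  have hUd : Differentiable ℝ U := hUC.differentiable two_ne_zero
  have hUd1 : ContDiff ℝ 1 (deriv U) := by
    have h2 : ContDiff ℝ ((1:ℕ)+1:ℕ) U := hUC
    exact (contDiff_succ_iff_deriv.mp (by exact_mod_cast h2)).2.2
  have hUd' : Differentiable ℝ (deriv U) := hUd1.differentiable one_ne_zero
  have hV₁d : Differentiable ℝ V₁ := hV₁C.differentiable two_ne_zero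
  have hV₁d1 : ContDiff ℝ 1 (deriv V₁) := by
    have h2 : ContDiff ℝ ((1:ℕ)+1:ℕ) V₁ := hV₁C
    exact (contDiff_succ_iff_deriv.mp (by exact_mod_cast h2)).2.2
  have hV₁d' : Differentiable ℝ (deriv V₁) := hV₁d1.differentiable one_ne_zero
  have hV₂d : Differentiable ℝ V₂ := hV₂C.differentiable two_ne_zero
  have hV₂d1 : ContDiff ℝ 1 (deriv V₂) := by
    have h2 : ContDiff ℝ ((1:ℕ)+1:ℕ) V₂ := hV₂C
    exact (contDiff_succ_iff_deriv.mp (by exact_mod_cast h2)).2.2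
  have hV₂d' : Differentiable ℝ (deriv V₂) := hV₂d1.differentiable one_ne_zero
  -- nonnegativity of the bounding constants
  have hCU0 : 0 ≤ CU := le_trans (abs_nonneg _) (hCU 0)
  have hC10 : 0 ≤ C1 := le_trans (abs_nonneg _) (hC1 0)
  have hC20 : 0 ≤ C2 := le_trans (abs_nonneg _) (hC2 0)
  have hD10 : 0 ≤ D1 := le_trans (abs_nonneg _) (hD1 0)
  have hD20 : 0 ≤ D2 := le_trans (abs_nonneg _) (hD2 0)
  -- the chemotactic potential φ
  set φ : ℝ → ℝ := fun z => χ₂ * V₂ z - χ₁ * V₁ z with hφdef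
  have hφd : ∀ x, HasDerivAt φ (χ₂ * deriv V₂ x - χ₁ * deriv V₁ x) x := fun x =>
    (((hV₂d x).hasDerivAt).const_mul χ₂).sub (((hV₁d x).hasDerivAt).const_mul χ₁)
  have hdφ : ∀ x, deriv φ x = χ₂ * deriv V₂ x - χ₁ * deriv V₁ x := fun x => (hφd x).deriv
  have hdφfun : deriv φ = fun x => χ₂ * deriv V₂ x - χ₁ * deriv V₁ x := funext hdφ
  have hφd' : ∀ x, HasDerivAt (deriv φ)
      (χ₂ * deriv (deriv V₂) x - χ₁ * deriv (deriv V₁) x) x := by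
    intro x
    rw [hdφfun]
    exact (((hV₂d' x).hasDerivAt).const_mul χ₂).sub (((hV₁d' x).hasDerivAt).const_mul χ₁)
  have hddφ : ∀ x, deriv (deriv φ) x = χ₂ * deriv (deriv V₂) x - χ₁ * deriv (deriv V₁) x :=
    fun x => (hφd' x).deriv
  -- p and Q
  set p : ℝ → ℝ := fun x => c + deriv φ x with hpdef
  set Q : ℝ → ℝ := fun x => deriv (deriv φ) x + a - b * U x with hQdef
  have hprod : ∀ x, deriv (fun y => U y * deriv φ y) x
      = deriv U x * deriv φ x + U x * deriv (deriv φ) x := by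
    intro x
    have h := (((hUd x).hasDerivAt).mul (hφd' x)).deriv
    rw [hddφ x]
    exact h
  have hU'' : ∀ x, deriv (deriv U) x = -(p x * deriv U x) - Q x * U x := by
    intro x
    have h := hUeq x
    rw [hprod x] at h
    simp only [hpdef, hQdef]
    linear_combination -h
  -- bounds on second derivatives of V₁, V₂
  have hM₁ : ∀ x, |deriv (deriv V₁) x| ≤ lam₁*C1 + μ₁*CU + |c*τ| *D1 := by
    intro x
    have h := hV₁eq x
    have heq : deriv (deriv V₁) x = lam₁ * V₁ x - μ₁ * U x - c*τ*deriv V₁ x := by linarith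
    rw [heq]
    have h1 : |lam₁ * V₁ x| ≤ lam₁ * C1 := by
      rw [abs_mul, abs_of_pos hlam₁]; exact mul_le_mul_of_nonneg_left (hC1 x) hlam₁.le
    have h2 : |μ₁ * U x| ≤ μ₁ * CU := by
      rw [abs_mul, abs_of_pos hμ₁]; exact mul_le_mul_of_nonneg_left (hCU x) hμ₁.le
    have h3 : |c*τ*deriv V₁ x| ≤ |c*τ| * D1 := by
      rw [abs_mul]; exact mul_le_mul_of_nonneg_left (hD1 x) (abs_nonneg _)
    calc |lam₁ * V₁ x - μ₁ * U x - c*τ*deriv V₁ x|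
        ≤ |lam₁ * V₁ x - μ₁ * U x| + |c*τ*deriv V₁ x| := abs_sub _ _
      _ ≤ |lam₁ * V₁ x| + |μ₁ * U x| + |c*τ*deriv V₁ x| := by
          linarith [abs_sub (lam₁ * V₁ x) (μ₁ * U x)]
      _ ≤ lam₁*C1 + μ₁*CU + |c*τ| *D1 := by linarith
  have hM₂ : ∀ x, |deriv (deriv V₂) x| ≤ lam₂*C2 + μ₂*CU + |c*τ| *D2 := by
    intro x
    have h := hV₂eq x
    have heq : deriv (deriv V₂) x = lam₂ * V₂ x - μ₂ * U x - c*τ*deriv V₂ x := by linarith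
    rw [heq]
    have h1 : |lam₂ * V₂ x| ≤ lam₂ * C2 := by
      rw [abs_mul, abs_of_pos hlam₂]; exact mul_le_mul_of_nonneg_left (hC2 x) hlam₂.le
    have h2 : |μ₂ * U x| ≤ μ₂ * CU := by
      rw [abs_mul, abs_of_pos hμ₂]; exact mul_le_mul_of_nonneg_left (hCU x) hμ₂.le
    have h3 : |c*τ*deriv V₂ x| ≤ |c*τ| * D2 := by
      rw [abs_mul]; exact mul_le_mul_of_nonneg_left (hD2 x) (abs_nonneg _)
    calc |lam₂ * V₂ x - μ₂ * U x - c*τ*deriv V₂ x|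
        ≤ |lam₂ * V₂ x - μ₂ * U x| + |c*τ*deriv V₂ x| := abs_sub _ _
      _ ≤ |lam₂ * V₂ x| + |μ₂ * U x| + |c*τ*deriv V₂ x| := by
          linarith [abs_sub (lam₂ * V₂ x) (μ₂ * U x)]
      _ ≤ lam₂*C2 + μ₂*CU + |c*τ| *D2 := by linarith
  set M₁ : ℝ := lam₁*C1 + μ₁*CU + |c*τ| *D1 with hM₁def
  set M₂ : ℝ := lam₂*C2 + μ₂*CU + |c*τ| *D2 with hM₂def
  have hM₁0 : 0 ≤ M₁ := le_trans (abs_nonneg _) (hM₁ 0)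
  have hM₂0 : 0 ≤ M₂ := le_trans (abs_nonneg _) (hM₂ 0)
  -- global bounds on p and Q
  set Kp : ℝ := |c| + (χ₂*D2 + χ₁*D1) with hKpdef
  set KQ : ℝ := (χ₂*M₂ + χ₁*M₁) + a + b*CU with hKQdef
  have hφ'bd : ∀ x, |deriv φ x| ≤ χ₂*D2 + χ₁*D1 := by
    intro x
    rw [hdφ x]
    have h1 : |χ₂ * deriv V₂ x| ≤ χ₂ * D2 := by
      rw [abs_mul, abs_of_pos hχ₂]; exact mul_le_mul_of_nonneg_left (hD2 x) hχ₂.le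
    have h2 : |χ₁ * deriv V₁ x| ≤ χ₁ * D1 := by
      rw [abs_mul, abs_of_pos hχ₁]; exact mul_le_mul_of_nonneg_left (hD1 x) hχ₁.le
    calc |χ₂ * deriv V₂ x - χ₁ * deriv V₁ x| ≤ |χ₂ * deriv V₂ x| + |χ₁ * deriv V₁ x| :=
        abs_sub _ _
      _ ≤ χ₂*D2 + χ₁*D1 := by linarith
  have hφ''bd : ∀ x, |deriv (deriv φ) x| ≤ χ₂*M₂ + χ₁*M₁ := by
    intro x
    rw [hddφ x]
    have h1 : |χ₂ * deriv (deriv V₂) x| ≤ χ₂ * M₂ := by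
      rw [abs_mul, abs_of_pos hχ₂]; exact mul_le_mul_of_nonneg_left (hM₂ x) hχ₂.le
    have h2 : |χ₁ * deriv (deriv V₁) x| ≤ χ₁ * M₁ := by
      rw [abs_mul, abs_of_pos hχ₁]; exact mul_le_mul_of_nonneg_left (hM₁ x) hχ₁.le
    calc |χ₂ * deriv (deriv V₂) x - χ₁ * deriv (deriv V₁) x|
        ≤ |χ₂ * deriv (deriv V₂) x| + |χ₁ * deriv (deriv V₁) x| := abs_sub _ _
      _ ≤ χ₂*M₂ + χ₁*M₁ := by linarith
  have hKp : ∀ x, |p x| ≤ Kp := by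
    intro x
    simp only [hpdef]
    calc |c + deriv φ x| ≤ |c| + |deriv φ x| := abs_add_le _ _
      _ ≤ Kp := by have := hφ'bd x; rw [hKpdef]; linarith
  have hKQ : ∀ x, |Q x| ≤ KQ := by
    intro x
    simp only [hQdef]
    have h1 : |deriv (deriv φ) x + a - b * U x| ≤ |deriv (deriv φ) x + a| + |b * U x| :=
      abs_sub _ _
    have h2 : |deriv (deriv φ) x + a| ≤ |deriv (deriv φ) x| + |a| := abs_add_le _ _
    have h3 : |b * U x| ≤ b * CU := by
      rw [abs_mul, abs_of_pos hb]; exact mul_le_mul_of_nonneg_left (hCU x) hb.le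
    have h4 := hφ''bd x
    rw [hKQdef]
    rw [abs_of_pos ha] at h2
    linarith
  -- limits of the derivatives at +∞
  have hd1top : Tendsto (deriv V₁) atTop (nhds 0) := landau hV₁C hM₁ hV₁top
  have hd2top : Tendsto (deriv V₂) atTop (nhds 0) := landau hV₂C hM₂ hV₂top
  have hφ'top : Tendsto (deriv φ) atTop (nhds 0) := by
    rw [hdφfun]
    have h := (hd2top.const_mul χ₂).sub (hd1top.const_mul χ₁)
    simpa using h
  have hdd1top : Tendsto (deriv (deriv V₁)) atTop (nhds 0) := by
    have h := ((hV₁top.const_mul lam₁).sub (hUtop.const_mul μ₁)).sub (hd1top.const_mul (c*τ))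
    simp only [mul_zero, sub_zero] at h
    refine h.congr (fun x => ?_)
    have := hV₁eq x; linarith
  have hdd2top : Tendsto (deriv (deriv V₂)) atTop (nhds 0) := by
    have h := ((hV₂top.const_mul lam₂).sub (hUtop.const_mul μ₂)).sub (hd2top.const_mul (c*τ))
    simp only [mul_zero, sub_zero] at h
    refine h.congr (fun x => ?_)
    have := hV₂eq x; linarith
  have hφ''top : Tendsto (deriv (deriv φ)) atTop (nhds 0) := by
    have h := (hdd2top.const_mul χ₂).sub (hdd1top.const_mul χ₁)
    simp only [mul_zero, sub_zero] at h
    refine h.congr (fun x => (hddφ x).symm)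
  have hptop : Tendsto p atTop (nhds c) := by
    have h := (tendsto_const_nhds : Tendsto (fun _ : ℝ => c) atTop (nhds c)).add hφ'top
    simpa using h
  have hQtop : Tendsto Q atTop (nhds a) := by
    have h := (hφ''top.add (tendsto_const_nhds : Tendsto (fun _ : ℝ => a) atTop (nhds a))).sub
      (hUtop.const_mul b)
    simp only [zero_add, mul_zero, sub_zero] at h
    refine h.congr (fun x => ?_)
    simp only [hQdef]
  -- positivity of U
  have hUpos : ∀ x, 0 < U x := by
    by_contra hneg
    push_neg at hneg
    obtain ⟨x₀, hx₀⟩ := hneg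
    have hU₀ : U x₀ = 0 := le_antisymm hx₀ (hU0 x₀)
    have hU'₀ : deriv U x₀ = 0 := by
      have hmin : IsLocalMin U x₀ :=
        Filter.Eventually.of_forall (fun y => by rw [hU₀]; exact hU0 y)
      exact hmin.deriv_eq_zero
    set L : ℝ := 1 + 2*Kp + 2*KQ with hLdef
    have hzero : ∀ y, y ≤ x₀ → U y = 0 := by
      intro y hy
      have hT : 0 ≤ x₀ - y := by linarith
      have hEderiv : ∀ t : ℝ, HasDerivAt (fun t => (U (x₀ - t))^2 + (deriv U (x₀ - t))^2)
          (-(2*U (x₀-t)*deriv U (x₀-t)) + 2*p (x₀-t)*(deriv U (x₀-t))^2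
            + 2*Q (x₀-t)*(U (x₀-t)*deriv U (x₀-t))) t := by
        intro t
        have hin : HasDerivAt (fun s : ℝ => x₀ - s) (-1) t := by
          simpa using (hasDerivAt_id t).const_sub x₀
        have h1 : HasDerivAt (fun s => U (x₀ - s)) (deriv U (x₀ - t) * (-1)) t :=
          ((hUd (x₀ - t)).hasDerivAt).comp t hin
        have h2 : HasDerivAt (fun s => deriv U (x₀ - s)) (deriv (deriv U) (x₀ - t) * (-1)) t :=
          ((hUd' (x₀ - t)).hasDerivAt).comp t hin
        have h3 := (h1.pow 2).add (h2.pow 2)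
        refine h3.congr_deriv ?_
        rw [hU'' (x₀ - t)]
        push_cast
        ring
      have hcont : ContinuousOn (fun t => (U (x₀ - t))^2 + (deriv U (x₀ - t))^2)
          (Icc 0 (x₀ - y)) :=
        fun t _ => (hEderiv t).continuousAt.continuousWithinAt
      have hder : ∀ t ∈ Ico (0:ℝ) (x₀ - y),
          HasDerivWithinAt (fun t => (U (x₀ - t))^2 + (deriv U (x₀ - t))^2)
          (-(2*U (x₀-t)*deriv U (x₀-t)) + 2*p (x₀-t)*(deriv U (x₀-t))^2
            + 2*Q (x₀-t)*(U (x₀-t)*deriv U (x₀-t))) (Ici t) t :=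
        fun t _ => (hEderiv t).hasDerivWithinAt
      have h0 : ‖(U (x₀ - 0))^2 + (deriv U (x₀ - 0))^2‖ ≤ 0 := by
        simp [hU₀, hU'₀]
      have hbound : ∀ t ∈ Ico (0:ℝ) (x₀ - y),
          ‖(-(2*U (x₀-t)*deriv U (x₀-t)) + 2*p (x₀-t)*(deriv U (x₀-t))^2
            + 2*Q (x₀-t)*(U (x₀-t)*deriv U (x₀-t)))‖
          ≤ L * ‖(U (x₀ - t))^2 + (deriv U (x₀ - t))^2‖ + 0 := by
        intro t _
        have h := arith1 (u := U (x₀ - t)) (u' := deriv U (x₀ - t)) (hKp (x₀ - t)) (hKQ (x₀ - t))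
        have hEnn : (0:ℝ) ≤ (U (x₀ - t))^2 + (deriv U (x₀ - t))^2 := by positivity
        rw [Real.norm_eq_abs, Real.norm_eq_abs, abs_of_nonneg hEnn, add_zero, hLdef]
        exact h
      have hgron := norm_le_gronwallBound_of_norm_deriv_right_le hcont hder h0 hbound
        (x₀ - y) ⟨hT, le_rfl⟩
      rw [gronwallBound_ε0] at hgron
      simp only [sub_sub_cancel, sub_zero, zero_mul] at hgron
      rw [Real.norm_eq_abs, abs_of_nonneg (by positivity)] at hgron
      have h2 : (U y)^2 = 0 :=
        le_antisymm (by nlinarith [sq_nonneg (deriv U y)]) (sq_nonneg _)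
      exact pow_eq_zero_iff two_ne_zero |>.mp h2
    have hUbot0 : Tendsto U atBot (nhds 0) := by
      have hev : U =ᶠ[atBot] fun _ => 0 := eventually_atBot.mpr ⟨x₀, hzero⟩
      exact Tendsto.congr' hev.symm tendsto_const_nhds
    have habeq : a / b = 0 := tendsto_nhds_unique hUbot hUbot0
    have : (0:ℝ) < a / b := div_pos ha hb
    linarith
  -- logarithmic derivative r = U'/U
  set r : ℝ → ℝ := fun x => deriv U x / U x with hrdef
  have hrD : ∀ x, HasDerivAt r (-(r x)^2 - p x * r x - Q x) x := by
    intro x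
    have hne : U x ≠ 0 := ne_of_gt (hUpos x)
    have h := ((hUd' x).hasDerivAt).div ((hUd x).hasDerivAt) hne
    refine h.congr_deriv ?_
    rw [hU'' x]
    simp only [hrdef]
    field_simp
    ring
  -- constants from c < 2√a
  obtain ⟨ε, m, δ, hεpos, hmpos, hδpos, hεa, hkey⟩ := exists_consts ha hc
  have hpev : ∀ᶠ x in atTop, |p x - c| ≤ ε := by
    obtain ⟨R₁, hR₁⟩ := (Metric.tendsto_atTop.mp hptop) ε hεpos
    exact eventually_atTop.mpr ⟨R₁, fun x hx =>
      le_of_lt (by simpa [Real.dist_eq] using hR₁ x hx)⟩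
  have hQev : ∀ᶠ x in atTop, |Q x - a| ≤ ε := by
    obtain ⟨R₂, hR₂⟩ := (Metric.tendsto_atTop.mp hQtop) ε hεpos
    exact eventually_atTop.mpr ⟨R₂, fun x hx =>
      le_of_lt (by simpa [Real.dist_eq] using hR₂ x hx)⟩
  obtain ⟨R, hR⟩ := eventually_atTop.mp (hpev.and hQev)
  by_cases hcase : ∃ x₁, R ≤ x₁ ∧ r x₁ ≤ m
  · -- r eventually drops below m; Riccati blow-up
    obtain ⟨x₁, hx₁R, hrx₁⟩ := hcase
    have hstep : ∀ x, x₁ ≤ x → r x ≤ m → (-(r x)^2 - p x * r x - Q x) ≤ -δ := by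
      intro x hx hrm
      obtain ⟨h1, h2⟩ := hR x (le_trans hx₁R hx)
      exact hkey _ _ _ h1 h2 hrm
    have hinv : ∀ y, x₁ ≤ y → r y ≤ m :=
      invariance hrD hδpos hrx₁ hstep
    have hdec : ∀ y, x₁ ≤ y → r y ≤ r x₁ - δ * (y - x₁) :=
      lin_decay (fun x _ => hrD x) (fun x hx => hstep x hx (hinv x hx))
    set N : ℝ := 2*(|c| + ε) + 1 with hNdef
    have hNpos : 0 < N := by positivity
    set x₂ : ℝ := x₁ + max 0 ((r x₁ + N)/δ) with hx₂def
    have hx₂ : x₁ ≤ x₂ := le_add_of_nonneg_right (le_max_left _ _)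
    have hrN : ∀ y, x₂ ≤ y → r y ≤ -N := by
      intro y hy
      have h1 := hdec y (le_trans hx₂ hy)
      have h2 : (r x₁ + N)/δ ≤ y - x₁ := by
        have h3 := le_max_right 0 ((r x₁ + N)/δ)
        rw [hx₂def] at hy
        linarith
      have h3 : r x₁ + N ≤ δ * (y - x₁) := by
        rw [div_le_iff₀ hδpos] at h2
        linarith
      linarith
    have hx₂R : R ≤ x₂ := le_trans hx₁R hx₂
    have hrneg : ∀ y, x₂ ≤ y → r y < 0 := fun y hy =>
      lt_of_le_of_lt (hrN y hy) (by linarith)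
    have hr2 : ∀ x, x₂ ≤ x → (-(r x)^2 - p x * r x - Q x) ≤ -(r x)^2/2 := by
      intro x hx
      have hrx := hrN x hx
      obtain ⟨hpx, hQx⟩ := hR x (le_trans hx₂R hx)
      obtain ⟨hq1, hq2⟩ := abs_le.mp hQx
      have hQpos : 0 < Q x := by linarith
      obtain ⟨hp1, hp2⟩ := abs_le.mp hpx
      have hcabs : c ≤ |c| := le_abs_self c
      have hcabs' : -|c| ≤ c := neg_abs_le c
      have hrxneg : (0:ℝ) ≤ -(r x) := by
        rw [hNdef] at hrx
        nlinarith [abs_nonneg c]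
      have h1 : -(p x * r x) ≤ (|c|+ε) * (-(r x)) := by
        nlinarith [mul_nonneg (show (0:ℝ) ≤ (|c|+ε) - p x by linarith) hrxneg]
      have h2 : (|c|+ε) * (-(r x)) ≤ (r x)^2/2 := by
        have hge : (0:ℝ) ≤ -(r x) - 2*(|c|+ε) := by
          rw [hNdef] at hrx
          linarith
        nlinarith [mul_nonneg hge hrxneg]
      exact riccati_half h1 h2 hQpos
    have hgD : ∀ x, x₂ ≤ x → HasDerivAt (fun z => -(r z)⁻¹)
        ((-(r x)^2 - p x * r x - Q x) / (r x)^2) x := by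
      intro x hx
      have hne : r x ≠ 0 := ne_of_lt (hrneg x hx)
      have h := ((hrD x).inv hne).neg
      refine h.congr_deriv ?_
      ring
    have hgd' : ∀ x, x₂ ≤ x → (-(r x)^2 - p x * r x - Q x) / (r x)^2 ≤ -(1/2) := by
      intro x hx
      have h2 := hr2 x hx
      have hne : r x ≠ 0 := ne_of_lt (hrneg x hx)
      have hpos : 0 < (r x)^2 := lt_of_le_of_ne (sq_nonneg _) (Ne.symm (pow_ne_zero 2 hne))
      rw [div_le_iff₀ hpos]
      linarith
    have hdecg := lin_decay hgD hgd'
    set y₀ : ℝ := x₂ + 2/N + 2 with hy₀def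
    have hy₀ : x₂ ≤ y₀ := by
      have h2N : 0 < 2/N := by positivity
      rw [hy₀def]; linarith
    have hgy := hdecg y₀ hy₀
    have hgx₂ : -(r x₂)⁻¹ ≤ 1/N := by
      have h1 : N ≤ -(r x₂) := by linarith [hrN x₂ le_rfl]
      have h2 := one_div_le_one_div_of_le hNpos h1
      rw [one_div (-(r x₂)), inv_neg] at h2
      linarith
    have hgypos : 0 < -(r y₀)⁻¹ := by
      have h1 : r y₀ < 0 := hrneg y₀ hy₀
      have h2 : (r y₀)⁻¹ < 0 := inv_lt_zero.mpr h1
      linarith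
    have hyx : y₀ - x₂ = 2/N + 2 := by rw [hy₀def]; ring
    rw [hyx] at hgy
    have hNid : 2/N = 2*(1/N) := by ring
    linarith
  · -- r > m > 0 on [R,∞), so U increasing, contradicting U → 0
    push_neg at hcase
    have hderivpos : ∀ x ∈ interior (Ici R), 0 < deriv U x := by
      intro x hx
      rw [interior_Ici] at hx
      have hrx : m < r x := hcase x (le_of_lt hx)
      have heq : deriv U x = r x * U x := by
        have hne : U x ≠ 0 := ne_of_gt (hUpos x)
        simp only [hrdef]
        exact (div_mul_cancel₀ _ hne).symm
      rw [heq]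
      exact mul_pos (lt_trans hmpos hrx) (hUpos x)
    have hsm : StrictMonoOn U (Ici R) :=
      strictMonoOn_of_deriv_pos (convex_Ici R) hUd.continuous.continuousOn hderivpos
    have hev : ∀ᶠ x in atTop, U R ≤ U x :=
      eventually_atTop.mpr ⟨R+1, fun x hx =>
        (hsm self_mem_Ici (by simp; linarith : x ∈ Ici R) (by linarith)).le⟩
    have hUR : U R ≤ 0 := ge_of_tendsto hUtop hev
    exact absurd hUR (not_le.mpr (hUpos R))
end

section
/- Let c ≥ 0, τ > 0, λ > 0, μ' > 0, and let u : ℝ → ℝ be bounded, uniformly continuous and nonnegative. Define V(x) := μ' ∫₀^∞ ∫_ℝ (e^{−λs}/√(4πs)) · e^{−(x−z)²/(4s)} · u(z + τcs) dz ds. Then V is twice continuously differentiable and bounded, V ≥ 0, V satisfies V''(x) + cτV'(x) − λV(x) + μ'u(x) = 0 for all x ∈ ℝ, and sup_{x∈ℝ} |V(x)| ≤ (μ'/λ) · sup_{x∈ℝ} |u(x)|. -/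
open MeasureTheory

open Set Real


lemma hasDerivAt_const_div (Q t : ℝ) (ht0 : t ≠ 0) :
    HasDerivAt (fun t : ℝ => Q / t) (-Q / t ^ 2) t := by
  have h := (hasDerivAt_inv ht0).const_mul Q
  simpa [div_eq_mul_inv, neg_div, mul_comm] using h

lemma glasser_image {A Q : ℝ} (hA : 0 < A) (hQ : 0 < Q) :
    (fun t : ℝ => A * t - Q / t) '' Ioi 0 = univ := by
  apply eq_univ_of_forall
  intro y
  set r := Real.sqrt (y ^ 2 + 4 * A * Q) with hr
  have hr2 : r ^ 2 = y ^ 2 + 4 * A * Q := Real.sq_sqrt (by positivity)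
  have hry : -y < r := by
    nlinarith [Real.sqrt_nonneg (y ^ 2 + 4 * A * Q), abs_nonneg y, sq_abs y,
      Real.sqrt_nonneg (y^2+4*A*Q)]
  set t := (y + r) / (2 * A) with htdef
  have ht0 : 0 < t := div_pos (by linarith) (by linarith)
  refine ⟨t, ht0, ?_⟩
  have ht2 : 2 * A * t = y + r := by
    rw [htdef]; field_simp
  have hrval : r = 2 * A * t - y := by linarith
  have hsq : (2 * A * t - y) ^ 2 = y ^ 2 + 4 * A * Q := by rw [← hrval]; exact hr2
  have h4 : 4 * A * (Q - (A * t - y) * t) = 0 := by linear_combination (-(1:ℝ)) * hsq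
  have hQt : Q / t = A * t - y := by
    rw [div_eq_iff (ne_of_gt ht0)]
    have h4A : (4:ℝ) * A ≠ 0 := by positivity
    have := mul_eq_zero.mp h4
    rcases this with h | h
    · exact absurd h h4A
    · linarith
  show A * t - Q / t = y
  rw [hQt]; ring

lemma glasser_J {A Q : ℝ} (hA : 0 < A) (hQ : 0 < Q) :
    ∫ t in Ioi (0:ℝ), Real.exp (-(A * t - Q / t) ^ 2) = Real.sqrt π / (2 * A) := by
  set v : ℝ → ℝ := fun t => A * t - Q / t with hv
  have hv' : ∀ t ∈ Ioi (0:ℝ), HasDerivWithinAt v (A + Q / t ^ 2) (Ioi 0) t := by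
    intro t ht
    have ht0 : t ≠ 0 := ne_of_gt ht
    have h1 : HasDerivAt (fun t : ℝ => A * t) A t := by
      simpa using (hasDerivAt_id t).const_mul A
    have := h1.sub (hasDerivAt_const_div Q t ht0)
    have h2 : HasDerivAt v (A + Q / t ^ 2) t := by
      rw [show A + Q / t ^ 2 = A - -Q / t ^ 2 by ring]; exact this
    exact h2.hasDerivWithinAt
  have hinj : InjOn v (Ioi 0) := by
    have : StrictMonoOn v (Ioi 0) := by
      intro a ha b hb hab
      simp only [hv]
      have ha0 : 0 < a := ha
      have hb0 : 0 < b := hb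
      have : Q / b < Q / a := div_lt_div_of_pos_left hQ ha0 hab
      nlinarith
    exact this.injOn
  have key := integral_image_eq_integral_abs_deriv_smul measurableSet_Ioi hv' hinj
    (fun y => Real.exp (-y ^ 2))
  rw [glasser_image hA hQ] at key
  have hgauss : ∫ y : ℝ, Real.exp (-y ^ 2) = Real.sqrt π := by
    simpa using integral_gaussian 1
  rw [Measure.restrict_univ] at key
  have habs : ∀ t ∈ Ioi (0:ℝ), |A + Q / t ^ 2| • Real.exp (-(v t) ^ 2)
      = A * Real.exp (-(v t) ^ 2) + (Q / t ^ 2) * Real.exp (-(v t) ^ 2) := by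
    intro t ht
    have ht0 : (0:ℝ) < t := ht
    rw [abs_of_pos (by positivity), smul_eq_mul]
    ring
  rw [hgauss] at key
  rw [setIntegral_congr_fun measurableSet_Ioi habs] at key
  have hint : IntegrableOn (fun t => |A + Q / t ^ 2| • Real.exp (-(v t) ^ 2)) (Ioi 0) := by
    have := (integrableOn_image_iff_integrableOn_abs_deriv_smul measurableSet_Ioi hv' hinj
      (fun y => Real.exp (-y ^ 2))).mp (by
        rw [glasser_image hA hQ]
        have hgint : Integrable (fun y : ℝ => Real.exp (-y ^ 2)) := by
          simpa using integrable_exp_neg_mul_sq (by norm_num : (0:ℝ) < 1)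
        exact hgint.integrableOn)
    exact this
  have hint' : IntegrableOn (fun t => A * Real.exp (-(v t) ^ 2) + (Q / t ^ 2) * Real.exp (-(v t) ^ 2)) (Ioi 0) :=
    (integrableOn_congr_fun habs measurableSet_Ioi).mp hint
  have hmeas1 : AEStronglyMeasurable (fun t => A * Real.exp (-(v t) ^ 2)) (volume.restrict (Ioi 0)) := by
    apply ContinuousOn.aestronglyMeasurable ?_ measurableSet_Ioi
    apply ContinuousOn.mul continuousOn_const
    apply Real.continuous_exp.comp_continuousOn
    apply ContinuousOn.neg
    apply ContinuousOn.pow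
    exact ContinuousOn.sub (continuousOn_const.mul continuousOn_id)
      (continuousOn_const.div continuousOn_id (fun t ht => ne_of_gt ht))
  have hintA : IntegrableOn (fun t => A * Real.exp (-(v t) ^ 2)) (Ioi 0) := by
    apply Integrable.mono' hint' hmeas1
    filter_upwards [ae_restrict_mem measurableSet_Ioi] with t ht
    have ht0 : (0:ℝ) < t := ht
    have h1 : 0 < Real.exp (-(v t) ^ 2) := Real.exp_pos _
    rw [Real.norm_eq_abs, abs_of_pos (by positivity)]
    nlinarith [mul_pos (div_pos hQ (by positivity : (0:ℝ) < t^2)) h1]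
  have hintB : IntegrableOn (fun t => (Q / t ^ 2) * Real.exp (-(v t) ^ 2)) (Ioi 0) := by
    apply (hint'.sub hintA).congr
    filter_upwards with t
    simp only [Pi.sub_apply]
    ring
  rw [integral_add hintA hintB] at key
  have hsub : ∫ t in Ioi (0:ℝ), (Q / t ^ 2) * Real.exp (-(v t) ^ 2)
      = ∫ t in Ioi (0:ℝ), A * Real.exp (-(v t) ^ 2) := by
    set φ : ℝ → ℝ := fun t => Q / (A * t) with hφ
    have hφimg : φ '' Ioi 0 = Ioi 0 := by
      apply Subset.antisymm
      · rintro _ ⟨t, ht, rfl⟩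
        exact div_pos hQ (mul_pos hA ht)
      · intro y hy
        refine ⟨Q / (A * y), div_pos hQ (mul_pos hA hy), ?_⟩
        show Q / (A * (Q / (A * y))) = y
        field_simp
    have hφ' : ∀ t ∈ Ioi (0:ℝ), HasDerivWithinAt φ (-(Q / A) / t ^ 2) (Ioi 0) t := by
      intro t ht
      have ht0 : t ≠ 0 := ne_of_gt ht
      have h2 : HasDerivAt (fun t : ℝ => (Q / A) / t) (-(Q / A) / t ^ 2) t :=
        hasDerivAt_const_div (Q / A) t ht0
      have : HasDerivAt φ (-(Q / A) / t ^ 2) t := by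
        apply h2.congr_of_eventuallyEq
        filter_upwards with s
        show Q / (A * s) = Q / A / s
        rw [div_div]
      exact this.hasDerivWithinAt
    have hφinj : InjOn φ (Ioi 0) := by
      intro a ha b hb hab
      have ha0 : (0:ℝ) < a := ha
      have hb0 : (0:ℝ) < b := hb
      have h := (div_eq_div_iff (by positivity : A * a ≠ 0) (by positivity : A * b ≠ 0)).mp hab
      have h2 : A * b = A * a := mul_left_cancel₀ (ne_of_gt hQ) h
      have := mul_left_cancel₀ (ne_of_gt hA) h2
      linarith
    have key2 := integral_image_eq_integral_abs_deriv_smul measurableSet_Ioi hφ' hφinj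
      (fun t => A * Real.exp (-(v t) ^ 2))
    rw [hφimg] at key2
    rw [key2]
    apply setIntegral_congr_fun measurableSet_Ioi
    intro t ht
    have ht0 : (0:ℝ) < t := ht
    have ht0' : t ≠ 0 := ne_of_gt ht0
    have hA0' : A ≠ 0 := ne_of_gt hA
    have hQ0' : Q ≠ 0 := ne_of_gt hQ
    have hvφ : v (φ t) = -(v t) := by
      show A * (Q / (A * t)) - Q / (Q / (A * t)) = -(A * t - Q / t)
      rw [div_div_eq_mul_div, mul_comm Q (A * t), mul_div_assoc, div_self hQ0', mul_one]
      field_simp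
      ring
    show (Q / t ^ 2) * Real.exp (-(v t) ^ 2)
        = |-(Q / A) / t ^ 2| • (A * Real.exp (-(v (φ t)) ^ 2))
    rw [hvφ, show -(Q / A) / t ^ 2 = -((Q / A) / t ^ 2) from by rw [neg_div],
      abs_neg, abs_of_pos (by positivity)]
    simp only [smul_eq_mul, neg_sq]
    field_simp
  rw [hsub, integral_const_mul] at key
  rw [eq_div_iff (by positivity : (2 : ℝ) * A ≠ 0)]
  linarith [key]
lemma glasser {a q : ℝ} (ha : 0 < a) (hq : 0 ≤ q) :
    ∫ t in Ioi (0:ℝ), Real.exp (-(a * t ^ 2 + q / t ^ 2))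
      = Real.sqrt π / (2 * Real.sqrt a) * Real.exp (-2 * Real.sqrt (a * q)) := by
  have hA : 0 < Real.sqrt a := Real.sqrt_pos.mpr ha
  rcases eq_or_lt_of_le hq with rfl | hq0
  · simp only [zero_div, add_zero, mul_zero, Real.sqrt_zero, Real.exp_zero, mul_one, neg_zero]
    simp_rw [← neg_mul]
    rw [integral_gaussian_Ioi, Real.sqrt_div pi_pos.le, div_div]
    ring_nf
  · have hQ : 0 < Real.sqrt q := Real.sqrt_pos.mpr hq0
    have hpt : ∀ t ∈ Ioi (0:ℝ), Real.exp (-(a * t ^ 2 + q / t ^ 2))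
        = Real.exp (-2 * Real.sqrt (a * q)) * Real.exp (-(Real.sqrt a * t - Real.sqrt q / t) ^ 2) := by
      intro t ht
      have ht0 : (0:ℝ) < t := ht
      have ht0' : t ≠ 0 := ne_of_gt ht0
      rw [← Real.exp_add]
      congr 1
      have h1 : Real.sqrt a ^ 2 = a := Real.sq_sqrt ha.le
      have h2 : Real.sqrt q ^ 2 = q := Real.sq_sqrt hq
      have h3 : Real.sqrt a * Real.sqrt q = Real.sqrt (a * q) := (Real.sqrt_mul ha.le q).symm
      have hXY : Real.sqrt a * t * (Real.sqrt q / t) = Real.sqrt (a * q) := by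
        rw [← h3]
        field_simp
      have key : (Real.sqrt a * t - Real.sqrt q / t) ^ 2
          = a * t ^ 2 - 2 * Real.sqrt (a * q) + q / t ^ 2 := by
        rw [sub_sq, mul_pow, h1, div_pow, h2, mul_assoc 2, hXY]
      rw [key]; ring
    rw [setIntegral_congr_fun measurableSet_Ioi hpt, integral_const_mul, glasser_J hA hQ]
    ring

lemma sqrt_four_pi_sq {t : ℝ} (ht : 0 < t) :
    Real.sqrt (4 * π * t ^ 2) = 2 * Real.sqrt π * t := by
  rw [Real.sqrt_mul (by positivity) (t ^ 2), Real.sqrt_sq ht.le,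
    show (4:ℝ) * π = 2 ^ 2 * π by norm_num, Real.sqrt_mul (by positivity) π,
    Real.sqrt_sq (by norm_num : (0:ℝ) ≤ 2)]

lemma heat_laplace {a : ℝ} (ha : 0 < a) (y : ℝ) :
    ∫ s in Ioi (0:ℝ), Real.exp (-(a * s + y ^ 2 / (4 * s))) / Real.sqrt (4 * π * s)
      = Real.exp (-(Real.sqrt a * |y|)) / (2 * Real.sqrt a) := by
  have hA : 0 < Real.sqrt a := Real.sqrt_pos.mpr ha
  -- change of variables s = t^2
  set f : ℝ → ℝ := fun t => t ^ 2 with hf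
  have himg : f '' Ioi 0 = Ioi 0 := by
    apply Subset.antisymm
    · rintro _ ⟨t, ht, rfl⟩
      have h : (0:ℝ) < t := ht
      simp only [mem_Ioi]
      positivity
    · intro s hs
      exact ⟨Real.sqrt s, Real.sqrt_pos.mpr hs, Real.sq_sqrt (le_of_lt hs)⟩
  have hf' : ∀ t ∈ Ioi (0:ℝ), HasDerivWithinAt f (2 * t) (Ioi 0) t := by
    intro t ht
    have : HasDerivAt f (2 * t) t := by
      simpa using hasDerivAt_pow 2 t
    exact this.hasDerivWithinAt
  have hinj : InjOn f (Ioi 0) := by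
    intro s hs r hr h
    have hs0 : (0:ℝ) < s := hs
    have hr0 : (0:ℝ) < r := hr
    have := congrArg Real.sqrt h
    rwa [Real.sqrt_sq hs0.le, Real.sqrt_sq hr0.le] at this
  have key := integral_image_eq_integral_abs_deriv_smul measurableSet_Ioi hf' hinj
    (fun s => Real.exp (-(a * s + y ^ 2 / (4 * s))) / Real.sqrt (4 * π * s))
  rw [himg] at key
  rw [key]
  have hpt : ∀ t ∈ Ioi (0:ℝ),
      |2 * t| • (Real.exp (-(a * f t + y ^ 2 / (4 * f t))) / Real.sqrt (4 * π * f t))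
      = (Real.sqrt π)⁻¹ * Real.exp (-(a * t ^ 2 + y ^ 2 / 4 / t ^ 2)) := by
    intro t ht
    have ht0 : (0:ℝ) < t := ht
    have hsq : Real.sqrt (4 * π * f t) = 2 * Real.sqrt π * t := sqrt_four_pi_sq ht0
    have hexp : a * f t + y ^ 2 / (4 * f t) = a * t ^ 2 + y ^ 2 / 4 / t ^ 2 := by
      show a * t ^ 2 + y ^ 2 / (4 * t ^ 2) = a * t ^ 2 + y ^ 2 / 4 / t ^ 2
      rw [div_div]
    rw [hsq, hexp, abs_of_pos (by positivity), smul_eq_mul]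
    have hπ : Real.sqrt π ≠ 0 := by positivity
    field_simp
  rw [setIntegral_congr_fun measurableSet_Ioi hpt, integral_const_mul,
    glasser ha (by positivity : (0:ℝ) ≤ y ^ 2 / 4)]
  have h4 : Real.sqrt (a * (y ^ 2 / 4)) = Real.sqrt a * (|y| / 2) := by
    rw [Real.sqrt_mul ha.le, show y ^ 2 / 4 = (|y| / 2) ^ 2 by rw [div_pow, sq_abs]; norm_num,
      Real.sqrt_sq (by positivity)]
  rw [h4]
  have hπ : Real.sqrt π ≠ 0 := by positivity
  have : -2 * (Real.sqrt a * (|y| / 2)) = -(Real.sqrt a * |y|) := by ring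
  rw [this]
  field_simp
lemma image_mul_Iic {α x : ℝ} (hα : 0 < α) : (fun z : ℝ => α * z) '' Iic x = Iic (α * x) := by
  apply Subset.antisymm
  · rintro _ ⟨z, hz, rfl⟩
    exact mul_le_mul_of_nonneg_left hz hα.le
  · intro w hw
    refine ⟨w / α, ?_, by field_simp⟩
    rw [mem_Iic, div_le_iff₀ hα, mul_comm]
    exact hw

lemma image_mul_Ioi {α x : ℝ} (hα : 0 < α) : (fun z : ℝ => α * z) '' Ioi x = Ioi (α * x) := by
  apply Subset.antisymm
  · rintro _ ⟨z, hz, rfl⟩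
    exact mul_lt_mul_of_pos_left hz hα
  · intro w hw
    refine ⟨w / α, ?_, by field_simp⟩
    rw [mem_Ioi, lt_div_iff₀ hα, mul_comm]
    exact hw

lemma hasDerivWithinAt_mul (α : ℝ) (s : Set ℝ) :
    ∀ z ∈ s, HasDerivWithinAt (fun z : ℝ => α * z) α s z := by
  intro z _
  exact (by simpa using (hasDerivAt_id z).const_mul α : HasDerivAt (fun z : ℝ => α * z) α z).hasDerivWithinAt

lemma mul_injOn {α : ℝ} (hα : 0 < α) (s : Set ℝ) : InjOn (fun z : ℝ => α * z) s :=
  fun a _ b _ h => mul_left_cancel₀ (ne_of_gt hα) h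

lemma integrableOn_exp_neg_mul_Ioi {β : ℝ} (hβ : 0 < β) (x : ℝ) :
    IntegrableOn (fun z => Real.exp (-(β * z))) (Ioi x) := by
  have := exp_neg_integrableOn_Ioi x hβ
  apply this.congr
  filter_upwards with z
  rw [neg_mul]

lemma integral_exp_neg_mul_Ioi {β : ℝ} (hβ : 0 < β) (x : ℝ) :
    ∫ z in Ioi x, Real.exp (-(β * z)) = Real.exp (-(β * x)) / β := by
  have h := integral_image_eq_integral_abs_deriv_smul measurableSet_Ioi
    (hasDerivWithinAt_mul β (Ioi x)) (mul_injOn hβ (Ioi x)) (fun w => Real.exp (-w))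
  rw [image_mul_Ioi hβ, integral_exp_neg_Ioi] at h
  have : ∫ z in Ioi x, |β| • Real.exp (-(β * z)) = β * ∫ z in Ioi x, Real.exp (-(β * z)) := by
    simp_rw [smul_eq_mul, abs_of_pos hβ]
    exact integral_const_mul β _
  rw [this] at h
  field_simp [ne_of_gt hβ] at h ⊢
  linarith [h]
noncomputable def AAfun (α : ℝ) (u : ℝ → ℝ) (x : ℝ) : ℝ := ∫ z in Iic x, Real.exp (α * z) * u z
noncomputable def BBfun (β : ℝ) (u : ℝ → ℝ) (x : ℝ) : ℝ := ∫ z in Ioi x, Real.exp (-(β * z)) * u z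
noncomputable def Wfun (α β μ' : ℝ) (u : ℝ → ℝ) (x : ℝ) : ℝ :=
  μ' / (α + β) * (Real.exp (-(α * x)) * AAfun α u x + Real.exp (β * x) * BBfun β u x)
noncomputable def W1fun (α β μ' : ℝ) (u : ℝ → ℝ) (x : ℝ) : ℝ :=
  μ' / (α + β) * (-α * Real.exp (-(α * x)) * AAfun α u x + β * Real.exp (β * x) * BBfun β u x)
noncomputable def W2fun (α β μ' : ℝ) (u : ℝ → ℝ) (x : ℝ) : ℝ :=
  μ' / (α + β) * (α ^ 2 * Real.exp (-(α * x)) * AAfun α u x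
    + β ^ 2 * Real.exp (β * x) * BBfun β u x) - μ' * u x

section explicitW

variable {α β μ' M : ℝ} {u : ℝ → ℝ}

lemma cont_exp_mul_u (α : ℝ) (hu : Continuous u) :
    Continuous (fun z => Real.exp (α * z) * u z) :=
  (Real.continuous_exp.comp (continuous_const.mul continuous_id)).mul hu

lemma cont_exp_neg_mul_u (β : ℝ) (hu : Continuous u) :
    Continuous (fun z => Real.exp (-(β * z)) * u z) :=
  (Real.continuous_exp.comp ((continuous_const.mul continuous_id).neg)).mul hu

lemma intAA (hα : 0 < α) (hu : Continuous u) (hM : ∀ z, |u z| ≤ M) (x : ℝ) :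
    IntegrableOn (fun z => Real.exp (α * z) * u z) (Iic x) := by
  apply Integrable.mono' ((integrableOn_exp_mul_Iic hα x).const_mul M)
    ((cont_exp_mul_u α hu).aestronglyMeasurable.restrict)
  filter_upwards with z
  rw [norm_mul, Real.norm_eq_abs, Real.norm_eq_abs, Real.abs_exp]
  calc Real.exp (α * z) * |u z| ≤ Real.exp (α * z) * M := by
        exact mul_le_mul_of_nonneg_left (hM z) (Real.exp_pos _).le
    _ = M * Real.exp (α * z) := by ring

lemma intBB (hβ : 0 < β) (hu : Continuous u) (hM : ∀ z, |u z| ≤ M) (x : ℝ) :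
    IntegrableOn (fun z => Real.exp (-(β * z)) * u z) (Ioi x) := by
  apply Integrable.mono' ((integrableOn_exp_neg_mul_Ioi hβ x).const_mul M)
    ((cont_exp_neg_mul_u β hu).aestronglyMeasurable.restrict)
  filter_upwards with z
  rw [norm_mul, Real.norm_eq_abs, Real.norm_eq_abs, Real.abs_exp]
  calc Real.exp (-(β * z)) * |u z| ≤ Real.exp (-(β * z)) * M := by
        exact mul_le_mul_of_nonneg_left (hM z) (Real.exp_pos _).le
    _ = M * Real.exp (-(β * z)) := by ring

lemma absAA (hα : 0 < α) (hu : Continuous u) (hM : ∀ z, |u z| ≤ M) (x : ℝ) :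
    |AAfun α u x| ≤ M * (Real.exp (α * x) / α) := by
  have h := norm_integral_le_of_norm_le (μ := volume.restrict (Iic x))
    (f := fun z => Real.exp (α * z) * u z)
    (g := fun z => M * Real.exp (α * z)) ((integrableOn_exp_mul_Iic hα x).const_mul M)
    (by
      filter_upwards with z
      rw [norm_mul, Real.norm_eq_abs, Real.norm_eq_abs, Real.abs_exp]
      calc Real.exp (α * z) * |u z| ≤ Real.exp (α * z) * M :=
            mul_le_mul_of_nonneg_left (hM z) (Real.exp_pos _).le
        _ = M * Real.exp (α * z) := by ring)
  rw [Real.norm_eq_abs] at h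
  unfold AAfun
  calc |∫ z in Iic x, Real.exp (α * z) * u z| ≤ ∫ z in Iic x, M * Real.exp (α * z) := h
    _ = M * (Real.exp (α * x) / α) := by rw [integral_const_mul, integral_exp_mul_Iic hα]

lemma absBB (hβ : 0 < β) (hu : Continuous u) (hM : ∀ z, |u z| ≤ M) (x : ℝ) :
    |BBfun β u x| ≤ M * (Real.exp (-(β * x)) / β) := by
  have h := norm_integral_le_of_norm_le (μ := volume.restrict (Ioi x))
    (f := fun z => Real.exp (-(β * z)) * u z)
    (g := fun z => M * Real.exp (-(β * z))) ((integrableOn_exp_neg_mul_Ioi hβ x).const_mul M)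
    (by
      filter_upwards with z
      rw [norm_mul, Real.norm_eq_abs, Real.norm_eq_abs, Real.abs_exp]
      calc Real.exp (-(β * z)) * |u z| ≤ Real.exp (-(β * z)) * M :=
            mul_le_mul_of_nonneg_left (hM z) (Real.exp_pos _).le
        _ = M * Real.exp (-(β * z)) := by ring)
  rw [Real.norm_eq_abs] at h
  unfold BBfun
  calc |∫ z in Ioi x, Real.exp (-(β * z)) * u z| ≤ ∫ z in Ioi x, M * Real.exp (-(β * z)) := h
    _ = M * (Real.exp (-(β * x)) / β) := by rw [integral_const_mul, integral_exp_neg_mul_Ioi hβ]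

lemma hasDerivAA (hα : 0 < α) (hu : Continuous u) (hM : ∀ z, |u z| ≤ M) (x : ℝ) :
    HasDerivAt (AAfun α u) (Real.exp (α * x) * u x) x := by
  have key : ∀ y, AAfun α u y = AAfun α u 0 + ∫ t in (0:ℝ)..y, Real.exp (α * t) * u t := by
    intro y
    have h := intervalIntegral.integral_Iic_sub_Iic (intAA hα hu hM 0) (intAA hα hu hM y)
    simp only [AAfun]
    linarith [h]
  have hD : HasDerivAt (fun y => ∫ t in (0:ℝ)..y, Real.exp (α * t) * u t)
      (Real.exp (α * x) * u x) x := by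
    apply intervalIntegral.integral_hasDerivAt_right
      ((cont_exp_mul_u α hu).intervalIntegrable 0 x)
      ((cont_exp_mul_u α hu).stronglyMeasurableAtFilter _ _)
      (cont_exp_mul_u α hu).continuousAt
  exact (hD.const_add (AAfun α u 0)).congr_of_eventuallyEq (Filter.Eventually.of_forall key)

lemma hasDerivBB (hβ : 0 < β) (hu : Continuous u) (hM : ∀ z, |u z| ≤ M) (x : ℝ) :
    HasDerivAt (BBfun β u) (-(Real.exp (-(β * x)) * u x)) x := by
  have hsub : ∀ a b : ℝ, a ≤ b → BBfun β u a
      = (∫ t in a..b, Real.exp (-(β * t)) * u t) + BBfun β u b := by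
    intro a b hab
    rw [intervalIntegral.integral_of_le hab]
    have := setIntegral_union (Set.Ioc_disjoint_Ioi le_rfl) measurableSet_Ioi
      ((intBB hβ hu hM a).mono_set Set.Ioc_subset_Ioi_self) (intBB hβ hu hM b)
      (f := fun z => Real.exp (-(β * z)) * u z)
    rw [Set.Ioc_union_Ioi_eq_Ioi hab] at this
    exact this
  have key : ∀ y, BBfun β u y = BBfun β u 0 - ∫ t in (0:ℝ)..y, Real.exp (-(β * t)) * u t := by
    intro y
    rcases le_total 0 y with hy | hy
    · have := hsub 0 y hy
      linarith [this]
    · have := hsub y 0 hy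
      rw [intervalIntegral.integral_symm]
      linarith [this]
  have hD : HasDerivAt (fun y => ∫ t in (0:ℝ)..y, Real.exp (-(β * t)) * u t)
      (Real.exp (-(β * x)) * u x) x := by
    apply intervalIntegral.integral_hasDerivAt_right
      ((cont_exp_neg_mul_u β hu).intervalIntegrable 0 x)
      ((cont_exp_neg_mul_u β hu).stronglyMeasurableAtFilter _ _)
      (cont_exp_neg_mul_u β hu).continuousAt
  exact (hD.const_sub (BBfun β u 0)).congr_of_eventuallyEq (Filter.Eventually.of_forall key)

lemma hasDerivW (hα : 0 < α) (hβ : 0 < β) (hu : Continuous u) (hM : ∀ z, |u z| ≤ M) (x : ℝ) :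
    HasDerivAt (Wfun α β μ' u) (W1fun α β μ' u x) x := by
  have hE1 : HasDerivAt (fun x : ℝ => Real.exp (-(α * x))) (-α * Real.exp (-(α * x))) x := by
    have h : HasDerivAt (fun x : ℝ => -(α * x)) (-α) x := by
      rw [show -α = -(α * 1) by ring]; exact ((hasDerivAt_id' x).const_mul α).neg
    simpa [mul_comm] using h.exp
  have hE2 : HasDerivAt (fun x : ℝ => Real.exp (β * x)) (β * Real.exp (β * x)) x := by
    have h : HasDerivAt (fun x : ℝ => β * x) β x := by
      simpa using (hasDerivAt_id x).const_mul β
    simpa [mul_comm] using h.exp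
  have h1 := hE1.mul (hasDerivAA hα hu hM x)
  have h2 := hE2.mul (hasDerivBB hβ hu hM x)
  have h3 := ((h1.add h2).const_mul (μ' / (α + β)))
  have e1 : Real.exp (-(α * x)) * (Real.exp (α * x) * u x) = u x := by
    rw [← mul_assoc, ← Real.exp_add]
    simp
  have e2 : Real.exp (β * x) * (Real.exp (-(β * x)) * u x) = u x := by
    rw [← mul_assoc, ← Real.exp_add]
    simp
  refine h3.congr_deriv (Eq.symm ?_)
  simp only [W1fun]
  rw [mul_neg, e2]
  rw [show Real.exp (-(α * x)) * (Real.exp (α * x) * u x) = u x from e1]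
  ring

lemma hasDerivW1 (hα : 0 < α) (hβ : 0 < β) (hu : Continuous u) (hM : ∀ z, |u z| ≤ M) (x : ℝ) :
    HasDerivAt (W1fun α β μ' u) (W2fun α β μ' u x) x := by
  have hE1 : HasDerivAt (fun x : ℝ => -α * Real.exp (-(α * x)))
      (-α * (-α * Real.exp (-(α * x)))) x := by
    have h : HasDerivAt (fun x : ℝ => -(α * x)) (-α) x := by
      rw [show -α = -(α * 1) by ring]; exact ((hasDerivAt_id' x).const_mul α).neg
    have := (h.exp).const_mul (-α)
    refine this.congr_deriv (Eq.symm ?_)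
    ring
  have hE2 : HasDerivAt (fun x : ℝ => β * Real.exp (β * x)) (β * (β * Real.exp (β * x))) x := by
    have h : HasDerivAt (fun x : ℝ => β * x) β x := by
      simpa using (hasDerivAt_id x).const_mul β
    have := (h.exp).const_mul β
    refine this.congr_deriv (Eq.symm ?_)
    ring
  have h1 := hE1.mul (hasDerivAA hα hu hM x)
  have h2 := hE2.mul (hasDerivBB hβ hu hM x)
  have h3 := ((h1.add h2).const_mul (μ' / (α + β)))
  have e1 : Real.exp (-(α * x)) * (Real.exp (α * x) * u x) = u x := by
    rw [← mul_assoc, ← Real.exp_add]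
    simp
  have e2 : Real.exp (β * x) * (Real.exp (-(β * x)) * u x) = u x := by
    rw [← mul_assoc, ← Real.exp_add]
    simp
  refine h3.congr_deriv (Eq.symm ?_)
  simp only [W2fun]
  have hab : α + β ≠ 0 := by positivity
  field_simp
  linear_combination (μ' * α) * e1 + (μ' * β) * e2

end explicitW
section identification

variable {b lam μ' M : ℝ} {u : ℝ → ℝ}

lemma V_eq_W (hb : 0 ≤ b) (hlam : 0 < lam) (hu : Continuous u) (hM : ∀ z, |u z| ≤ M) (x : ℝ) :
    (μ' * ∫ s in Ioi (0:ℝ), ∫ z : ℝ,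
        Real.exp (-lam * s) / Real.sqrt (4 * π * s) *
          Real.exp (-(x - z) ^ 2 / (4 * s)) * u (z + b * s))
      = Wfun (Real.sqrt (lam + b ^ 2 / 4) + b / 2) (Real.sqrt (lam + b ^ 2 / 4) - b / 2) μ' u x := by
  have hM0 : 0 ≤ M := le_trans (abs_nonneg _) (hM 0)
  set a : ℝ := lam + b ^ 2 / 4 with ha_def
  have ha : 0 < a := by positivity
  set κ : ℝ := Real.sqrt a with hκ_def
  have hκ : 0 < κ := Real.sqrt_pos.mpr ha
  have hκ2 : κ ^ 2 = a := Real.sq_sqrt ha.le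
  set α : ℝ := κ + b / 2 with hα_def
  set β : ℝ := κ - b / 2 with hβ_def
  have hα : 0 < α := by positivity
  have hβ : 0 < β := by
    have h1 : b / 2 < κ := by
      rw [hκ_def]
      rw [show b / 2 = Real.sqrt ((b / 2) ^ 2) from (Real.sqrt_sq (by positivity)).symm]
      apply Real.sqrt_lt_sqrt (by positivity)
      rw [ha_def]
      nlinarith
    simp only [hβ_def]
    linarith
  -- the kernel after shifting
  set F : ℝ × ℝ → ℝ := fun p =>
    Real.exp (-lam * p.1) / Real.sqrt (4 * π * p.1) *
      Real.exp (-(x + b * p.1 - p.2) ^ 2 / (4 * p.1)) * u p.2 with hF_def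
  -- Step 1: translation in the inner integral
  have step1 : ∀ s ∈ Ioi (0:ℝ),
      (∫ z : ℝ, Real.exp (-lam * s) / Real.sqrt (4 * π * s) *
        Real.exp (-(x - z) ^ 2 / (4 * s)) * u (z + b * s))
      = ∫ w : ℝ, F (s, w) := by
    intro s _
    rw [← integral_add_right_eq_self (fun w => F (s, w)) (b * s)]
    congr 1
    funext z
    show _ = Real.exp (-lam * s) / Real.sqrt (4 * π * s) *
      Real.exp (-(x + b * s - (z + b * s)) ^ 2 / (4 * s)) * u (z + b * s)
    rw [show x + b * s - (z + b * s) = x - z by ring]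
  -- measurability of F on (Ioi 0) ×ˢ univ
  have hmeasF : AEStronglyMeasurable F ((volume.restrict (Ioi (0:ℝ))).prod volume) := by
    have hprod : (volume.restrict (Ioi (0:ℝ))).prod (volume : Measure ℝ)
        = ((volume : Measure ℝ).prod volume).restrict ((Ioi 0) ×ˢ univ) := by
      rw [← Measure.prod_restrict, Measure.restrict_univ]
    rw [hprod]
    apply ContinuousOn.aestronglyMeasurable ?_ (measurableSet_Ioi.prod MeasurableSet.univ)
    have hfst : ∀ p : ℝ × ℝ, p ∈ (Ioi (0:ℝ)) ×ˢ (univ : Set ℝ) → 0 < p.1 := by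
      intro p hp
      exact hp.1
    apply ContinuousOn.mul
    apply ContinuousOn.mul
    · apply ContinuousOn.div
      · exact (Real.continuous_exp.comp (continuous_const.mul continuous_fst)).continuousOn
      · exact (Real.continuous_sqrt.comp ((continuous_const.mul continuous_const).mul
          continuous_fst)).continuousOn
      · intro p hp
        have := hfst p hp
        positivity
    · apply Real.continuous_exp.comp_continuousOn
      apply ContinuousOn.div
      · apply ContinuousOn.neg
        apply ContinuousOn.pow
        exact ((continuous_const.add (continuous_const.mul continuous_fst)).sub
          continuous_snd).continuousOn
      · exact (continuous_const.mul continuous_fst).continuousOn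
      · intro p hp
        have := hfst p hp
        positivity
    · exact (hu.comp continuous_snd).continuousOn
  -- gaussian integrability in w for fixed s > 0
  have hgauss : ∀ s : ℝ, 0 < s →
      Integrable (fun w : ℝ => Real.exp (-(x + b * s - w) ^ 2 / (4 * s))) := by
    intro s hs
    have h0 := integrable_exp_neg_mul_sq (show (0:ℝ) < 1 / (4 * s) by positivity)
    have h1 : Integrable (fun w : ℝ => Real.exp (-(1 / (4 * s)) * (w + -(x + b * s)) ^ 2)) := by
      exact h0.comp_add_right (-(x + b * s))
    apply h1.congr
    filter_upwards with w
    congr 1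
    have hs0 : (4:ℝ) * s ≠ 0 := by positivity
    field_simp
    ring
  have hinner : ∀ s : ℝ, 0 < s → Integrable (fun w => F (s, w)) := by
    intro s hs
    have h2 : Integrable (fun w : ℝ => Real.exp (-lam * s) / Real.sqrt (4 * π * s) *
        Real.exp (-(x + b * s - w) ^ 2 / (4 * s))) :=
      (hgauss s hs).const_mul _
    have h3 := h2.bdd_mul (c := M) (hu.aestronglyMeasurable) (Filter.Eventually.of_forall fun w => by
      rw [Real.norm_eq_abs]; exact hM w)
    apply h3.congr
    filter_upwards with w
    show u w * _ = F (s, w)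
    rw [hF_def]
    ring
  -- the gaussian total mass
  have hmass : ∀ s : ℝ, 0 < s →
      (∫ w : ℝ, Real.exp (-(x + b * s - w) ^ 2 / (4 * s))) = Real.sqrt (4 * π * s) := by
    intro s hs
    have h1 : (∫ w : ℝ, Real.exp (-(1 / (4 * s)) * (w + -(x + b * s)) ^ 2))
        = ∫ w : ℝ, Real.exp (-(1 / (4 * s)) * w ^ 2) :=
      integral_add_right_eq_self (fun w => Real.exp (-(1 / (4 * s)) * w ^ 2)) (-(x + b * s))
    have h2 : (∫ w : ℝ, Real.exp (-(x + b * s - w) ^ 2 / (4 * s)))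
        = ∫ w : ℝ, Real.exp (-(1 / (4 * s)) * (w + -(x + b * s)) ^ 2) := by
      congr 1
      funext w
      congr 1
      have hs0 : (4:ℝ) * s ≠ 0 := by positivity
      field_simp
      ring
    rw [h2, h1, integral_gaussian, show π / (1 / (4 * s)) = 4 * π * s by field_simp]
  -- integrability of F on the product
  have hFint : Integrable F ((volume.restrict (Ioi (0:ℝ))).prod volume) := by
    rw [integrable_prod_iff hmeasF]
    constructor
    · filter_upwards [ae_restrict_mem measurableSet_Ioi] with s hs
      exact hinner s hs
    · apply Integrable.mono' (g := fun s => M * Real.exp (-lam * s))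
        (((exp_neg_integrableOn_Ioi 0 hlam)).const_mul M)
        (hmeasF.norm.integral_prod_right')
      filter_upwards [ae_restrict_mem measurableSet_Ioi] with s hs
      have hnn : 0 ≤ ∫ w : ℝ, ‖F (s, w)‖ := integral_nonneg fun w => norm_nonneg _
      rw [Real.norm_eq_abs, abs_of_nonneg hnn]
      have hCpos : 0 ≤ Real.exp (-lam * s) / Real.sqrt (4 * π * s) := by positivity
      have hle : (∫ w : ℝ, ‖F (s, w)‖)
          ≤ ∫ w : ℝ, Real.exp (-lam * s) / Real.sqrt (4 * π * s) *
              Real.exp (-(x + b * s - w) ^ 2 / (4 * s)) * M := by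
        apply integral_mono_of_nonneg
        · filter_upwards with w; exact norm_nonneg _
        · exact ((hgauss s hs).const_mul _).mul_const M
        · filter_upwards with w
          show ‖F (s, w)‖ ≤ _
          rw [hF_def, norm_mul, norm_mul, Real.norm_eq_abs, Real.norm_eq_abs, Real.norm_eq_abs,
            abs_of_nonneg hCpos, abs_of_nonneg (Real.exp_pos _).le]
          exact mul_le_mul_of_nonneg_left ((hM w)) (by positivity)
      calc (∫ w : ℝ, ‖F (s, w)‖) ≤ _ := hle
        _ = Real.exp (-lam * s) / Real.sqrt (4 * π * s) * Real.sqrt (4 * π * s) * M := by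
            rw [show (fun w : ℝ => Real.exp (-lam * s) / Real.sqrt (4 * π * s) *
                Real.exp (-(x + b * s - w) ^ 2 / (4 * s)) * M)
              = fun w : ℝ => Real.exp (-lam * s) / Real.sqrt (4 * π * s) *
                (Real.exp (-(x + b * s - w) ^ 2 / (4 * s)) * M) from by funext w; ring]
            rw [integral_const_mul, integral_mul_const, hmass s hs]
            ring
        _ ≤ M * Real.exp (-lam * s) := by
            have hs0 : (0:ℝ) < s := hs
            have hsq : Real.sqrt (4 * π * s) ≠ 0 := by positivity
            rw [div_mul_cancel₀ _ hsq]
            linarith [mul_comm (Real.exp (-lam * s)) M]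
    
  -- Fubini
  have swap := integral_integral_swap (f := fun s w => F (s, w))
    (μ := volume.restrict (Ioi (0:ℝ))) (ν := volume) (by exact hFint)
  -- Step 3: compute the s-integral for each w
  have hlap : ∀ w : ℝ, (∫ s in Ioi (0:ℝ), F (s, w))
      = u w * (Real.exp (-(b * (x - w) / 2)) * (Real.exp (-(κ * |x - w|)) / (2 * κ))) := by
    intro w
    set y : ℝ := x - w with hy_def
    have hptw : ∀ s ∈ Ioi (0:ℝ), F (s, w)
        = (Real.exp (-(b * y / 2)) * (Real.exp (-(a * s + y ^ 2 / (4 * s))) / Real.sqrt (4 * π * s))) * u w := by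
      intro s hs
      have hs0 : (0:ℝ) < s := hs
      rw [hF_def]
      show Real.exp (-lam * s) / Real.sqrt (4 * π * s) *
          Real.exp (-(x + b * s - w) ^ 2 / (4 * s)) * u w = _
      congr 1
      rw [div_mul_eq_mul_div, ← Real.exp_add, mul_comm (Real.exp (-(b * y / 2))),
        div_mul_eq_mul_div, ← Real.exp_add]
      congr 2
      have h4s : (4:ℝ) * s ≠ 0 := by positivity
      rw [ha_def, hy_def]
      field_simp
      ring
    rw [setIntegral_congr_fun measurableSet_Ioi hptw, integral_mul_const, integral_const_mul,
      heat_laplace ha y]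
    rw [← hκ_def]
    ring
  -- assemble
  set G : ℝ → ℝ := fun w =>
    u w * (Real.exp (-(b * (x - w) / 2)) * (Real.exp (-(κ * |x - w|)) / (2 * κ))) with hG_def
  have hpt_Iic : ∀ w ∈ Iic x,
      G w = Real.exp (-(α * x)) / (2 * κ) * (Real.exp (α * w) * u w) := by
    intro w hw
    rw [hG_def]
    show u w * (Real.exp (-(b * (x - w) / 2)) * (Real.exp (-(κ * |x - w|)) / (2 * κ))) = _
    rw [abs_of_nonneg (sub_nonneg.2 hw)]
    rw [mul_div_assoc', ← Real.exp_add,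
      show -(b * (x - w) / 2) + -(κ * (x - w)) = -(α * x) + α * w from by rw [hα_def]; ring,
      Real.exp_add]
    ring
  have hpt_Ioi : ∀ w ∈ Ioi x,
      G w = Real.exp (β * x) / (2 * κ) * (Real.exp (-(β * w)) * u w) := by
    intro w hw
    rw [hG_def]
    show u w * (Real.exp (-(b * (x - w) / 2)) * (Real.exp (-(κ * |x - w|)) / (2 * κ))) = _
    have hw' : x - w < 0 := by
      have : x < w := hw
      linarith
    rw [abs_of_neg hw']
    rw [mul_div_assoc', ← Real.exp_add,
      show -(b * (x - w) / 2) + -(κ * -(x - w)) = β * x + -(β * w) from by rw [hβ_def]; ring,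
      Real.exp_add]
    ring
  have hGIic : IntegrableOn G (Iic x) := by
    apply (((intAA hα hu hM x).const_mul (Real.exp (-(α * x)) / (2 * κ)))).congr
    filter_upwards [ae_restrict_mem measurableSet_Iic] with w hw
    exact (hpt_Iic w hw).symm
  have hGIoi : IntegrableOn G (Ioi x) := by
    apply (((intBB hβ hu hM x).const_mul (Real.exp (β * x) / (2 * κ)))).congr
    filter_upwards [ae_restrict_mem measurableSet_Ioi] with w hw
    exact (hpt_Ioi w hw).symm
  have swap' : (∫ s in Ioi (0:ℝ), ∫ w : ℝ, F (s, w)) = ∫ w : ℝ, ∫ s in Ioi (0:ℝ), F (s, w) := swap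
  calc μ' * ∫ s in Ioi (0:ℝ), ∫ z : ℝ,
        Real.exp (-lam * s) / Real.sqrt (4 * π * s) *
          Real.exp (-(x - z) ^ 2 / (4 * s)) * u (z + b * s)
      = μ' * ∫ s in Ioi (0:ℝ), ∫ w : ℝ, F (s, w) := by
        rw [setIntegral_congr_fun measurableSet_Ioi step1]
    _ = μ' * ∫ w : ℝ, ∫ s in Ioi (0:ℝ), F (s, w) := by rw [swap']
    _ = μ' * ∫ w : ℝ, G w := by
        congr 1
        apply integral_congr_ae
        filter_upwards with w
        exact hlap w
    _ = μ' * ((∫ w in Iic x, G w) + ∫ w in Ioi x, G w) := by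
        rw [intervalIntegral.integral_Iic_add_Ioi hGIic hGIoi]
    _ = μ' * (Real.exp (-(α * x)) / (2 * κ) * AAfun α u x
          + Real.exp (β * x) / (2 * κ) * BBfun β u x) := by
        rw [setIntegral_congr_fun measurableSet_Iic hpt_Iic,
          setIntegral_congr_fun measurableSet_Ioi hpt_Ioi,
          integral_const_mul, integral_const_mul]
        rfl
    _ = Wfun α β μ' u x := by
        unfold Wfun
        rw [show α + β = 2 * κ from by rw [hα_def, hβ_def]; ring]
        have h2κ : (2:ℝ) * κ ≠ 0 := by positivity
        field_simp

end identification
/-- properties of V(x) := μ'∫₀^∞∫_ℝ (e^{−λs}/√(4πs))e^{−(x−z)²/(4s)}u(z+τcs) dz ds: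
it is C², bounded, nonnegative, solves V'' + cτV' − λV + μ'u = 0, and
sup|V| ≤ (μ'/λ)·sup|u|. -/
theorem stmt_11 (c τ lam μ' : ℝ) (hc : 0 ≤ c) (hτ : 0 < τ) (hlam : 0 < lam)
    (hμ' : 0 < μ') (u : ℝ → ℝ)
    (huc : UniformContinuous u) (hub : ∃ C, ∀ x, |u x| ≤ C) (hun : ∀ x, 0 ≤ u x)
    (V : ℝ → ℝ)
    (hV : V = fun x => μ' * ∫ s in Set.Ioi (0:ℝ), ∫ z : ℝ,
      Real.exp (-lam * s) / Real.sqrt (4 * Real.pi * s) *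
        Real.exp (-(x - z) ^ 2 / (4 * s)) * u (z + τ * c * s)) :
    ContDiff ℝ 2 V ∧ (∃ C, ∀ x, |V x| ≤ C) ∧ (∀ x, 0 ≤ V x) ∧
    (∀ x : ℝ, deriv (deriv V) x + c * τ * deriv V x - lam * V x + μ' * u x = 0) ∧
    (∀ x : ℝ, |V x| ≤ μ' / lam * ⨆ y, |u y|) := by
  have hu : Continuous u := huc.continuous
  obtain ⟨C₀, hC₀⟩ := hub
  set M : ℝ := ⨆ y, |u y| with hM_def
  have hbdd : BddAbove (Set.range fun y => |u y|) := ⟨C₀, by rintro _ ⟨y, rfl⟩; exact hC₀ y⟩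
  have hM : ∀ z, |u z| ≤ M := fun z => le_ciSup hbdd z
  have hM0 : 0 ≤ M := le_trans (abs_nonneg _) (hM 0)
  set b : ℝ := τ * c with hb_def
  have hb : 0 ≤ b := mul_nonneg hτ.le hc
  have ha : 0 < lam + b ^ 2 / 4 := by positivity
  set κ : ℝ := Real.sqrt (lam + b ^ 2 / 4) with hκ_def
  have hκ : 0 < κ := Real.sqrt_pos.mpr ha
  have hκ2 : κ ^ 2 = lam + b ^ 2 / 4 := Real.sq_sqrt ha.le
  set α : ℝ := κ + b / 2 with hα_def
  set β : ℝ := κ - b / 2 with hβ_def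
  have hα : 0 < α := by positivity
  have hβ : 0 < β := by
    have h1 : b / 2 < κ := by
      rw [hκ_def, show b / 2 = Real.sqrt ((b / 2) ^ 2) from (Real.sqrt_sq (by positivity)).symm]
      apply Real.sqrt_lt_sqrt (by positivity)
      nlinarith
    rw [hβ_def]
    linarith
  have hαβ : α * β = lam := by
    rw [hα_def, hβ_def]
    nlinarith [hκ2]
  have hsum : 0 < α + β := by linarith
  have hVW : V = Wfun α β μ' u := by
    funext x
    rw [hV]
    exact V_eq_W hb hlam hu hM x
  -- derivatives
  have hWd : Differentiable ℝ (Wfun α β μ' u) :=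
    fun x => (hasDerivW hα hβ hu hM x).differentiableAt
  have hd1 : deriv (Wfun α β μ' u) = W1fun α β μ' u :=
    funext fun x => (hasDerivW hα hβ hu hM x).deriv
  have hW1d : Differentiable ℝ (W1fun α β μ' u) :=
    fun x => (hasDerivW1 hα hβ hu hM x).differentiableAt
  have hd2 : deriv (W1fun α β μ' u) = W2fun α β μ' u :=
    funext fun x => (hasDerivW1 hα hβ hu hM x).deriv
  have hAAc : Continuous (AAfun α u) :=
    continuous_iff_continuousAt.mpr fun x => (hasDerivAA hα hu hM x).continuousAt
  have hBBc : Continuous (BBfun β u) :=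
    continuous_iff_continuousAt.mpr fun x => (hasDerivBB hβ hu hM x).continuousAt
  have hW2c : Continuous (W2fun α β μ' u) := by
    unfold W2fun
    apply Continuous.sub
    · apply continuous_const.mul
      apply Continuous.add
      · exact (continuous_const.mul
          (Real.continuous_exp.comp (continuous_const.mul continuous_id).neg)).mul hAAc
      · exact (continuous_const.mul
          (Real.continuous_exp.comp (continuous_const.mul continuous_id))).mul hBBc
    · exact continuous_const.mul hu
  -- the sup bound
  have hbound : ∀ x : ℝ, |V x| ≤ μ' / lam * M := by
    intro x
    rw [hVW]
    unfold Wfun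
    have h1 := absAA hα hu hM x
    have h2 := absBB hβ hu hM x
    have e1 : Real.exp (-(α * x)) * Real.exp (α * x) = 1 := by
      rw [← Real.exp_add]; simp
    have e2 : Real.exp (β * x) * Real.exp (-(β * x)) = 1 := by
      rw [← Real.exp_add]; simp
    have key1 : Real.exp (-(α * x)) * (M * (Real.exp (α * x) / α)) = M / α := by
      rw [eq_div_iff hα.ne']
      field_simp
      linear_combination M * e1
    have key2 : Real.exp (β * x) * (M * (Real.exp (-(β * x)) / β)) = M / β := by
      rw [eq_div_iff hβ.ne']
      field_simp
      linear_combination M * e2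
    calc |μ' / (α + β) * (Real.exp (-(α * x)) * AAfun α u x + Real.exp (β * x) * BBfun β u x)|
        = μ' / (α + β) * |Real.exp (-(α * x)) * AAfun α u x + Real.exp (β * x) * BBfun β u x| := by
          rw [abs_mul, abs_of_pos (by positivity)]
      _ ≤ μ' / (α + β) * (Real.exp (-(α * x)) * |AAfun α u x|
            + Real.exp (β * x) * |BBfun β u x|) := by
          apply mul_le_mul_of_nonneg_left _ (by positivity)
          calc |Real.exp (-(α * x)) * AAfun α u x + Real.exp (β * x) * BBfun β u x|
              ≤ |Real.exp (-(α * x)) * AAfun α u x| + |Real.exp (β * x) * BBfun β u x| :=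
                abs_add_le _ _
            _ = Real.exp (-(α * x)) * |AAfun α u x| + Real.exp (β * x) * |BBfun β u x| := by
                rw [abs_mul, abs_mul, abs_of_pos (Real.exp_pos _), abs_of_pos (Real.exp_pos _)]
      _ ≤ μ' / (α + β) * (Real.exp (-(α * x)) * (M * (Real.exp (α * x) / α))
            + Real.exp (β * x) * (M * (Real.exp (-(β * x)) / β))) := by
          apply mul_le_mul_of_nonneg_left _ (by positivity)
          exact add_le_add (mul_le_mul_of_nonneg_left h1 (Real.exp_pos _).le)
            (mul_le_mul_of_nonneg_left h2 (Real.exp_pos _).le)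
      _ = μ' / lam * M := by
          rw [key1, key2, ← hαβ]
          field_simp
          ring
  refine ⟨?_, ⟨μ' / lam * M, hbound⟩, ?_, ?_, hbound⟩
  · -- C²
    rw [hVW]
    have h2 : ContDiff ℝ (1 + 1) (Wfun α β μ' u) := by
      rw [contDiff_succ_iff_deriv]
      refine ⟨hWd, by simp, ?_⟩
      rw [hd1, contDiff_one_iff_deriv]
      exact ⟨hW1d, hd2 ▸ hW2c⟩
    exact h2
  · -- nonneg
    intro x
    rw [hV]
    apply mul_nonneg hμ'.le
    apply setIntegral_nonneg measurableSet_Ioi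
    intro s _
    apply integral_nonneg
    intro z
    exact mul_nonneg (mul_nonneg (div_nonneg (Real.exp_pos _).le (Real.sqrt_nonneg _))
      (Real.exp_pos _).le) (hun _)
  · -- the ODE
    intro x
    rw [hVW, hd1, hd2]
    have hct : c * τ = α - β := by
      rw [hα_def, hβ_def, hb_def]
      ring
    rw [hct, ← hαβ]
    unfold W2fun W1fun Wfun
    field_simp
    ring
end

section
/- (Theorem 3.1(1)) Assume 0 < μ < √a, (1−τ)μ² < λᵢ + τa for i = 1,2 whenever τ < 1, and b + χ₂μ₂ − χ₁μ₁ > M̄ + c_μτK. Set C̃₀ := a/(b + χ₂μ₂ − χ₁μ₁ − M̄ − c_μτK). Then for every C₀ ≥ C̃₀, every admissible μ̃ and d, and every u ∈ E_{τ,μ}(C₀), one has for all x ∈ ℝ: a + (χ₂λ₂V₂(x;u) − χ₁λ₁V₁(x;u)) + c_μτ·d/dx(χ₁V₁ − χ₂V₂)(x;u) − (b + χ₂μ₂ − χ₁μ₁)·C₀ ≤ 0; consequently the constant function C₀ is a super-solution of the associated parabolic equation. -/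
open MeasureTheory

/-- Vᵢ(x;u), with c_μ = μ + a/μ; `lam` is λᵢ, `m` is μᵢ. -/
noncomputable def Vfun (a τ lam m μ : ℝ) (u : ℝ → ℝ) (x : ℝ) : ℝ :=
  m * ∫ s in Set.Ioi (0:ℝ), ∫ z : ℝ,
    Real.exp (-lam * s) / Real.sqrt (4 * Real.pi * s) *
      Real.exp (-(x - z) ^ 2 / (4 * s)) * u (z + τ * (μ + a / μ) * s)

/-- u ∈ E_{τ,μ}(C₀). -/
def memE (C₀ μ μt d : ℝ) (u : ℝ → ℝ) : Prop :=
  Continuous u ∧ ∀ x : ℝ,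
    max 0 (Real.exp (-μ * x) - d * Real.exp (-μt * x)) ≤ u x ∧
    u x ≤ min C₀ (Real.exp (-μ * x))

/-- M̄ := ∫₀^∞ (χ₂λ₂μ₂e^{−λ₂s} − χ₁λ₁μ₁e^{−λ₁s})₊ ds -/
noncomputable def Mbar (χ₁ χ₂ lam₁ lam₂ μ₁ μ₂ : ℝ) : ℝ :=
  ∫ s in Set.Ioi (0:ℝ),
    max 0 (χ₂ * lam₂ * μ₂ * Real.exp (-lam₂ * s) - χ₁ * lam₁ * μ₁ * Real.exp (-lam₁ * s))

/-- K := ∫₀^∞ |χ₁μ₁e^{−λ₁s} − χ₂μ₂e^{−λ₂s}|/(2√(πs)) ds -/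
noncomputable def Kconst (χ₁ χ₂ lam₁ lam₂ μ₁ μ₂ : ℝ) : ℝ :=
  ∫ s in Set.Ioi (0:ℝ),
    |χ₁ * μ₁ * Real.exp (-lam₁ * s) - χ₂ * μ₂ * Real.exp (-lam₂ * s)| /
      (2 * Real.sqrt (Real.pi * s))


open Real Set


lemma gauss_int {s : ℝ} (hs : 0 < s) (x : ℝ) :
    ∫ z : ℝ, Real.exp (-(x - z)^2 / (4*s)) = Real.sqrt (4*Real.pi*s) := by
  have h1 : ∀ z : ℝ, Real.exp (-(x - z)^2 / (4*s))
      = Real.exp (-(1/(4*s)) * (z - x)^2) := by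
    intro z; congr 1; field_simp; ring
  simp_rw [h1]
  rw [show (fun z : ℝ => Real.exp (-(1/(4*s)) * (z - x)^2)) = fun z : ℝ =>
      (fun t : ℝ => Real.exp (-(1/(4*s)) * t^2)) (z - x) from rfl]
  rw [integral_sub_right_eq_self (fun t : ℝ => Real.exp (-(1/(4*s)) * t^2)) x]
  rw [integral_gaussian]
  congr 1
  field_simp

lemma gauss_integrable {s : ℝ} (hs : 0 < s) (x : ℝ) :
    Integrable (fun z : ℝ => Real.exp (-(x - z)^2 / (4*s))) := by
  have h1 : (fun z : ℝ => Real.exp (-(x - z)^2 / (4*s)))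
      = fun z : ℝ => (fun t : ℝ => Real.exp (-(1/(4*s)) * t^2)) (z - x) := by
    funext z; congr 1; field_simp; ring
  rw [h1]
  exact (integrable_exp_neg_mul_sq (by positivity)).comp_sub_right x


noncomputable def ker (s x z : ℝ) : ℝ :=
  Real.exp (-(x - z)^2 / (4*s)) / Real.sqrt (4*Real.pi*s)

noncomputable def Ifun (v : ℝ) (u : ℝ → ℝ) (s x : ℝ) : ℝ :=
  ∫ z : ℝ, ker s x z * u (z + v*s)

lemma ker_nonneg (s x z : ℝ) : 0 ≤ ker s x z := by
  unfold ker; positivity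

lemma ker_integrable {s : ℝ} (hs : 0 < s) (x : ℝ) :
    Integrable (fun z : ℝ => ker s x z) := by
  unfold ker
  exact (gauss_integrable hs x).div_const _

lemma ker_integral {s : ℝ} (hs : 0 < s) (x : ℝ) :
    ∫ z : ℝ, ker s x z = 1 := by
  unfold ker
  rw [integral_div, gauss_int hs x, div_self (by positivity)]

lemma integrand_integrable {s : ℝ} (hs : 0 < s) (x v C₀ : ℝ) {u : ℝ → ℝ}
    (hu : Continuous u) (hu0 : ∀ z, 0 ≤ u z) (huC : ∀ z, u z ≤ C₀) :
    Integrable (fun z : ℝ => ker s x z * u (z + v*s)) := by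
  have hker : Continuous (fun z : ℝ => ker s x z) := by
    unfold ker
    exact (Real.continuous_exp.comp (by continuity)).div_const _
  refine Integrable.mono' ((ker_integrable hs x).const_mul C₀) ?_ ?_
  · exact (hker.mul (hu.comp (by continuity))).aestronglyMeasurable
  · refine Filter.Eventually.of_forall fun z => ?_
    rw [Real.norm_eq_abs, abs_mul, abs_of_nonneg (ker_nonneg s x z),
      abs_of_nonneg (hu0 _), mul_comm]
    exact mul_le_mul_of_nonneg_right (huC _) (ker_nonneg s x z)

lemma Ifun_nonneg {s : ℝ} (hs : 0 < s) (x v : ℝ) {u : ℝ → ℝ}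
    (hu0 : ∀ z, 0 ≤ u z) : 0 ≤ Ifun v u s x :=
  integral_nonneg fun z => mul_nonneg (ker_nonneg s x z) (hu0 _)

lemma Ifun_le {s : ℝ} (hs : 0 < s) (x v C₀ : ℝ) {u : ℝ → ℝ}
    (hu : Continuous u) (hu0 : ∀ z, 0 ≤ u z) (huC : ∀ z, u z ≤ C₀) :
    Ifun v u s x ≤ C₀ := by
  have h := integral_mono (integrand_integrable hs x v C₀ hu hu0 huC)
    ((ker_integrable hs x).const_mul C₀) (fun z => ?_)
  · calc Ifun v u s x ≤ ∫ z : ℝ, C₀ * ker s x z := h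
      _ = C₀ := by rw [integral_const_mul, ker_integral hs x, mul_one]
  · have := mul_le_mul_of_nonneg_left (huC (z + v*s)) (ker_nonneg s x z)
    calc ker s x z * u (z + v*s) ≤ ker s x z * C₀ := this
      _ = C₀ * ker s x z := mul_comm _ _


lemma sqrt_exp' (y : ℝ) : Real.sqrt (Real.exp y) = Real.exp (y/2) := by
  rw [show Real.exp y = (Real.exp (y/2))^2 by rw [sq, ← Real.exp_add]; congr 1; ring,
    Real.sqrt_sq (Real.exp_pos _).le]

lemma key1 {c t : ℝ} (hc : 0 < c) :
    |t| * Real.exp (-t^2/(4*c)) ≤ Real.sqrt (8*c) * Real.exp (-t^2/(8*c)) := by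
  have h1 : t^2/(8*c) ≤ Real.exp (t^2/(8*c)) := by
    have := Real.add_one_le_exp (t^2/(8*c)); linarith
  have h0 : t^2 ≤ 8*c * Real.exp (t^2/(8*c)) := by
    calc t^2 = (8*c) * (t^2/(8*c)) := by field_simp
    _ ≤ (8*c) * Real.exp (t^2/(8*c)) := by
        exact mul_le_mul_of_nonneg_left h1 (by positivity)
  have h2 : |t| ≤ Real.sqrt (8*c) * Real.exp (t^2/(16*c)) := by
    rw [← Real.sqrt_sq_eq_abs]
    calc Real.sqrt (t^2) ≤ Real.sqrt (8*c * Real.exp (t^2/(8*c))) := Real.sqrt_le_sqrt h0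
    _ = Real.sqrt (8*c) * Real.sqrt (Real.exp (t^2/(8*c))) := Real.sqrt_mul (by positivity) _
    _ = Real.sqrt (8*c) * Real.exp (t^2/(16*c)) := by rw [sqrt_exp']; congr 1; ring
  have hq : 0 ≤ t^2/(16*c) := by positivity
  have e1 : t^2/(4*c) = 4*(t^2/(16*c)) := by field_simp; ring
  have e2 : t^2/(8*c) = 2*(t^2/(16*c)) := by field_simp; ring
  calc |t| * Real.exp (-t^2/(4*c))
      ≤ (Real.sqrt (8*c) * Real.exp (t^2/(16*c))) * Real.exp (-t^2/(4*c)) :=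
        mul_le_mul_of_nonneg_right h2 (Real.exp_pos _).le
    _ = Real.sqrt (8*c) * Real.exp (t^2/(16*c) + -t^2/(4*c)) := by
        rw [mul_assoc, ← Real.exp_add]
    _ ≤ Real.sqrt (8*c) * Real.exp (-t^2/(8*c)) := by
        refine mul_le_mul_of_nonneg_left (Real.exp_le_exp.2 ?_) (Real.sqrt_nonneg _)
        rw [show -t^2/(4*c) = -(t^2/(4*c)) by ring, show -t^2/(8*c) = -(t^2/(8*c)) by ring,
          e1, e2]
        linarith

lemma Ioi_mul_exp {c : ℝ} (hc : 0 < c) :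
    ∫ t in Ioi (0:ℝ), t * Real.exp (-t^2/(4*c)) = 2*c := by
  have hderiv : ∀ t ∈ Ioi (0:ℝ),
      HasDerivAt (fun t : ℝ => -(2*c) * Real.exp (-t^2/(4*c)))
        (t * Real.exp (-t^2/(4*c))) t := by
    intro t _
    have h1 : HasDerivAt (fun t : ℝ => -t^2/(4*c)) (-(2*t)/(4*c)) t := by
      have : HasDerivAt (fun t : ℝ => t^2) (2*t) t := by
        simpa [mul_comm] using (hasDerivAt_pow 2 t)
      simpa [neg_div] using (this.neg.div_const (4*c))
    have h2 := (h1.exp.const_mul (-(2*c)))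
    refine h2.congr_deriv ?_
    field_simp
    ring
  have hint : IntegrableOn (fun t : ℝ => t * Real.exp (-t^2/(4*c))) (Ioi 0) := by
    have h := integrableOn_rpow_mul_exp_neg_mul_sq (b := 1/(4*c)) (by positivity)
      (s := 1) (by norm_num)
    refine h.congr_fun (fun t ht => ?_) measurableSet_Ioi
    beta_reduce
    rw [Real.rpow_one]
    congr 1
    ring
  have htend : Filter.Tendsto (fun t : ℝ => -(2*c) * Real.exp (-t^2/(4*c)))
      Filter.atTop (nhds 0) := by
    have h1 : Filter.Tendsto (fun t : ℝ => -t^2/(4*c)) Filter.atTop Filter.atBot := by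
      have h2 : Filter.Tendsto (fun t : ℝ => t^2/(4*c)) Filter.atTop Filter.atTop :=
        (Filter.tendsto_pow_atTop (by norm_num)).atTop_div_const (by positivity)
      have h3 := Filter.tendsto_neg_atTop_atBot.comp h2
      simpa [Function.comp_def, neg_div] using h3
    have := Real.tendsto_exp_atBot.comp h1
    simpa using this.const_mul (-(2*c))
  have := integral_Ioi_of_hasDerivAt_of_tendsto
    (by fun_prop : Continuous (fun t : ℝ => -(2*c) * Real.exp (-t^2/(4*c)))).continuousWithinAt
    hderiv hint htend
  rw [this]
  simp

lemma ker_cont (s x : ℝ) : Continuous (fun z : ℝ => ker s x z) := by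
  unfold ker
  fun_prop

lemma key2 {s x y z : ℝ} (hs : 0 < s) (hyx : (y - x)^2 ≤ 1) :
    Real.exp (-(z-y)^2/(8*s)) ≤ Real.exp (1/(4*s)) * Real.exp (-(z-x)^2/(16*s)) := by
  rw [← Real.exp_add]
  refine Real.exp_le_exp.2 ?_
  have hB : (z-x)^2 ≤ 2*(z-y)^2 + 4 := by nlinarith [sq_nonneg ((z-y)-(y-x))]
  rw [show -(z-y)^2/(8*s) = (-2*(z-y)^2)/(16*s) by ring,
    show (1:ℝ)/(4*s) + -(z-x)^2/(16*s) = (4 - (z-x)^2)/(16*s) by ring]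
  exact (div_le_div_iff_of_pos_right (by linarith)).2 (by linarith)

noncomputable def Dfun (v : ℝ) (u : ℝ → ℝ) (s x : ℝ) : ℝ :=
  ∫ z : ℝ, ((z - x)/(2*s)) * ker s x z * u (z + v*s)

set_option maxHeartbeats 1000000 in
lemma hasDerivAt_Ifun {s : ℝ} (hs : 0 < s) (v C₀ : ℝ) {u : ℝ → ℝ}
    (hu : Continuous u) (hu0 : ∀ z, 0 ≤ u z) (huC : ∀ z, u z ≤ C₀) (x : ℝ) :
    Integrable (fun z : ℝ => ((z - x)/(2*s)) * ker s x z * u (z + v*s)) ∧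
    HasDerivAt (fun y => Ifun v u s y) (Dfun v u s x) x := by
  have hC0 : 0 ≤ C₀ := le_trans (hu0 0) (huC 0)
  set B : ℝ := C₀/(2*s) * Real.sqrt (8*s) * Real.exp (1/(4*s)) / Real.sqrt (4*Real.pi*s) with hB
  have h2s : (0:ℝ) < 2*s := by linarith
  have hnn : 0 ≤ C₀/(2*s)/Real.sqrt (4*Real.pi*s) :=
    div_nonneg (div_nonneg hC0 h2s.le) (Real.sqrt_nonneg _)
  have hBpos : 0 ≤ B := by
    rw [hB]
    refine div_nonneg (mul_nonneg (mul_nonneg (div_nonneg hC0 h2s.le)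
      (Real.sqrt_nonneg _)) (Real.exp_pos _).le) (Real.sqrt_nonneg _)
  have key : ∀ y ∈ Metric.ball x 1, ∀ z : ℝ,
      ‖((z - y)/(2*s)) * ker s y z * u (z + v*s)‖ ≤ B * Real.exp (-(z-x)^2/(16*s)) := by
    intro y hy z
    have hyx : (y - x)^2 ≤ 1 := by
      have h1 : |y - x| < 1 := by simpa [Real.dist_eq] using hy
      nlinarith [abs_nonneg (y - x), sq_abs (y - x)]
    have e1 : ‖((z - y)/(2*s)) * ker s y z * u (z + v*s)‖
        ≤ (|z-y|/(2*s)) * ker s y z * C₀ := by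
      rw [norm_mul, norm_mul, Real.norm_eq_abs, Real.norm_eq_abs, Real.norm_eq_abs,
        abs_of_nonneg (ker_nonneg s y z), abs_of_nonneg (hu0 _), abs_div,
        abs_of_pos h2s]
      exact mul_le_mul_of_nonneg_left (huC _) (mul_nonneg (div_nonneg (abs_nonneg _) h2s.le) (ker_nonneg s y z))
    refine e1.trans ?_
    calc (|z-y|/(2*s)) * ker s y z * C₀
        = (C₀/(2*s)/Real.sqrt (4*Real.pi*s)) * (|z-y| * Real.exp (-(z-y)^2/(4*s))) := by
          unfold ker
          rw [show (y-z)^2 = (z-y)^2 by ring]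
          ring
      _ ≤ (C₀/(2*s)/Real.sqrt (4*Real.pi*s)) * (Real.sqrt (8*s) * Real.exp (-(z-y)^2/(8*s))) :=
          mul_le_mul_of_nonneg_left (key1 hs) hnn
      _ ≤ (C₀/(2*s)/Real.sqrt (4*Real.pi*s)) *
            (Real.sqrt (8*s) * (Real.exp (1/(4*s)) * Real.exp (-(z-x)^2/(16*s)))) := by
          refine mul_le_mul_of_nonneg_left ?_ hnn
          exact mul_le_mul_of_nonneg_left (key2 hs hyx) (Real.sqrt_nonneg _)
      _ = B * Real.exp (-(z-x)^2/(16*s)) := by rw [hB]; ring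
  have hbd_int : Integrable (fun z : ℝ => B * Real.exp (-(z-x)^2/(16*s))) := by
    have h := (gauss_integrable (by linarith : (0:ℝ) < 4*s) x).const_mul B
    have e : (fun z : ℝ => B * Real.exp (-(x - z)^2/(4*(4*s))))
        = (fun z : ℝ => B * Real.exp (-(z-x)^2/(16*s))) := by
      funext z; congr 1; ring
    rw [← e]
    exact h
  have h_diff : ∀ᵐ z : ℝ, ∀ y ∈ Metric.ball x 1,
      HasDerivAt (fun y => ker s y z * u (z + v*s))
        (((z - y)/(2*s)) * ker s y z * u (z + v*s)) y := by
    refine Filter.Eventually.of_forall fun z y _ => ?_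
    have h1 : HasDerivAt (fun y : ℝ => -(y - z)^2/(4*s)) (-(2*(y-z))/(4*s)) y := by
      have h0 : HasDerivAt (fun y : ℝ => (y - z)^2) (2*(y-z)) y := by
        simpa [mul_comm] using (((hasDerivAt_id y).sub_const z).fun_pow 2)
      simpa [neg_div] using (h0.neg.div_const (4*s))
    have h2 := (h1.exp.div_const (Real.sqrt (4*Real.pi*s))).mul_const (u (z + v*s))
    have hsq : Real.sqrt (4*Real.pi*s) ≠ 0 :=
      ne_of_gt (Real.sqrt_pos.2 (mul_pos (by positivity) hs))
    simp only [ker]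
    have e : ((z - y)/(2*s)) * (Real.exp (-(y - z)^2/(4*s)) / Real.sqrt (4*Real.pi*s))
          * u (z + v*s)
        = Real.exp (-(y - z)^2/(4*s)) * (-(2*(y-z))/(4*s)) / Real.sqrt (4*Real.pi*s)
            * u (z + v*s) := by
      field_simp
      ring
    rw [e]
    exact h2
  have hF_meas : ∀ᶠ y in nhds x, AEStronglyMeasurable
      (fun z : ℝ => ker s y z * u (z + v*s)) volume := by
    refine Filter.Eventually.of_forall fun y => ?_
    exact ((ker_cont s y).mul (hu.comp (by fun_prop))).aestronglyMeasurable
  have hF'_meas : AEStronglyMeasurable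
      (fun z : ℝ => ((z - x)/(2*s)) * ker s x z * u (z + v*s)) volume := by
    exact ((((continuous_id.sub continuous_const).div_const _).mul (ker_cont s x)).mul
      (hu.comp (by fun_prop))).aestronglyMeasurable
  have h := hasDerivAt_integral_of_dominated_loc_of_deriv_le (Metric.ball_mem_nhds x one_pos) hF_meas
    (integrand_integrable hs x v C₀ hu hu0 huC) hF'_meas
    (Filter.Eventually.of_forall fun z y hy => key y hy z) hbd_int h_diff
  exact h

lemma sqrt_four_pi (s : ℝ) : Real.sqrt (4*Real.pi*s) = 2 * Real.sqrt (Real.pi*s) := by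
  rw [show 4*Real.pi*s = 2^2*(Real.pi*s) by ring, Real.sqrt_mul (by norm_num) _,
    Real.sqrt_sq (by norm_num)]

lemma J_eq {s : ℝ} (hs : 0 < s) :
    ∫ t : ℝ, max 0 t * Real.exp (-t^2/(4*s)) = 2*s := by
  rw [← MeasureTheory.setIntegral_eq_integral_of_forall_compl_eq_zero
    (s := Ioi (0:ℝ)) (fun t ht => by
      simp only [mem_Ioi, not_lt] at ht
      simp [max_eq_left ht])]
  have e2 : ∫ t in Ioi (0:ℝ), max 0 t * Real.exp (-t^2/(4*s))
      = ∫ t in Ioi (0:ℝ), t * Real.exp (-t^2/(4*s)) :=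
    setIntegral_congr_fun measurableSet_Ioi
      (fun t (ht : t ∈ Ioi 0) => by simp [max_eq_right (le_of_lt (show (0:ℝ) < t from ht))])
  rw [e2]
  exact Ioi_mul_exp hs

lemma maxker_integrable {s : ℝ} (hs : 0 < s) (x c : ℝ) :
    Integrable (fun z : ℝ => c * max 0 (z - x) * ker s x z) := by
  have h2 := ((gauss_integrable (by linarith : (0:ℝ) < 2*s) x).const_mul
    (|c| * Real.sqrt (8*s) / Real.sqrt (4*Real.pi*s)))
  have hbint : Integrable (fun z : ℝ =>
      |c| * Real.sqrt (8*s) / Real.sqrt (4*Real.pi*s) * Real.exp (-(z-x)^2/(8*s))) :=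
    h2.congr (Filter.Eventually.of_forall fun z => by
      dsimp only
      rw [show -(x - z)^2/(4*(2*s)) = -(z-x)^2/(8*s) by ring])
  refine Integrable.mono' hbint ?_ (Filter.Eventually.of_forall fun z => ?_)
  · exact ((continuous_const.mul ((continuous_const.max
      (continuous_id.sub continuous_const)))).mul (ker_cont s x)).aestronglyMeasurable
  · have key := key1 (t := z - x) hs
    have hker : ker s x z = Real.exp (-(z-x)^2/(4*s)) / Real.sqrt (4*Real.pi*s) := by
      unfold ker; rw [show (x-z)^2 = (z-x)^2 by ring]
    rw [Real.norm_eq_abs, abs_mul, abs_mul, abs_of_nonneg (ker_nonneg s x z),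
      abs_of_nonneg (le_max_left (0:ℝ) _), hker]
    calc |c| * max 0 (z-x) * (Real.exp (-(z-x)^2/(4*s)) / Real.sqrt (4*Real.pi*s))
        ≤ |c| * |z-x| * (Real.exp (-(z-x)^2/(4*s)) / Real.sqrt (4*Real.pi*s)) := by
          refine mul_le_mul_of_nonneg_right (mul_le_mul_of_nonneg_left ?_ (abs_nonneg c))
            (div_nonneg (Real.exp_pos _).le (Real.sqrt_nonneg _))
          exact max_le (abs_nonneg _) (le_abs_self _)
      _ = (|c| / Real.sqrt (4*Real.pi*s)) * (|z-x| * Real.exp (-(z-x)^2/(4*s))) := by ring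
      _ ≤ (|c| / Real.sqrt (4*Real.pi*s)) * (Real.sqrt (8*s) * Real.exp (-(z-x)^2/(8*s))) :=
          mul_le_mul_of_nonneg_left key (by positivity)
      _ = |c| * Real.sqrt (8*s) / Real.sqrt (4*Real.pi*s) * Real.exp (-(z-x)^2/(8*s)) := by
          ring

lemma maxker_integral {s : ℝ} (hs : 0 < s) (x c : ℝ) :
    ∫ z : ℝ, c * max 0 (z - x) * ker s x z
      = c * (2*s) / Real.sqrt (4*Real.pi*s) := by
  have e : (fun z : ℝ => c * max 0 (z - x) * ker s x z)
      = fun z : ℝ => (fun t : ℝ => (c / Real.sqrt (4*Real.pi*s))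
          * (max 0 t * Real.exp (-t^2/(4*s)))) (z - x) := by
    funext z
    unfold ker
    rw [show (x-z)^2 = (z-x)^2 by ring]
    ring
  rw [e, integral_sub_right_eq_self (fun t : ℝ => (c / Real.sqrt (4*Real.pi*s))
    * (max 0 t * Real.exp (-t^2/(4*s)))) x, integral_const_mul, J_eq hs]
  ring

lemma maxker_integrable' {s : ℝ} (hs : 0 < s) (x c : ℝ) :
    Integrable (fun z : ℝ => c * max 0 (x - z) * ker s x z) := by
  have h2 := ((gauss_integrable (by linarith : (0:ℝ) < 2*s) x).const_mul
    (|c| * Real.sqrt (8*s) / Real.sqrt (4*Real.pi*s)))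
  have hbint : Integrable (fun z : ℝ =>
      |c| * Real.sqrt (8*s) / Real.sqrt (4*Real.pi*s) * Real.exp (-(z-x)^2/(8*s))) :=
    h2.congr (Filter.Eventually.of_forall fun z => by
      dsimp only
      rw [show -(x - z)^2/(4*(2*s)) = -(z-x)^2/(8*s) by ring])
  refine Integrable.mono' hbint ?_ (Filter.Eventually.of_forall fun z => ?_)
  · exact ((continuous_const.mul ((continuous_const.max
      (continuous_const.sub continuous_id)))).mul (ker_cont s x)).aestronglyMeasurable
  · have key := key1 (t := z - x) hs
    have hker : ker s x z = Real.exp (-(z-x)^2/(4*s)) / Real.sqrt (4*Real.pi*s) := by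
      unfold ker; rw [show (x-z)^2 = (z-x)^2 by ring]
    rw [Real.norm_eq_abs, abs_mul, abs_mul, abs_of_nonneg (ker_nonneg s x z),
      abs_of_nonneg (le_max_left (0:ℝ) _), hker]
    calc |c| * max 0 (x-z) * (Real.exp (-(z-x)^2/(4*s)) / Real.sqrt (4*Real.pi*s))
        ≤ |c| * |z-x| * (Real.exp (-(z-x)^2/(4*s)) / Real.sqrt (4*Real.pi*s)) := by
          refine mul_le_mul_of_nonneg_right (mul_le_mul_of_nonneg_left ?_ (abs_nonneg c))
            (div_nonneg (Real.exp_pos _).le (Real.sqrt_nonneg _))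
          refine max_le (abs_nonneg _) ?_
          rw [abs_sub_comm]
          exact le_abs_self _
      _ = (|c| / Real.sqrt (4*Real.pi*s)) * (|z-x| * Real.exp (-(z-x)^2/(4*s))) := by ring
      _ ≤ (|c| / Real.sqrt (4*Real.pi*s)) * (Real.sqrt (8*s) * Real.exp (-(z-x)^2/(8*s))) :=
          mul_le_mul_of_nonneg_left key (by positivity)
      _ = |c| * Real.sqrt (8*s) / Real.sqrt (4*Real.pi*s) * Real.exp (-(z-x)^2/(8*s)) := by
          ring

lemma maxker_integral' {s : ℝ} (hs : 0 < s) (x c : ℝ) :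
    ∫ z : ℝ, c * max 0 (x - z) * ker s x z
      = c * (2*s) / Real.sqrt (4*Real.pi*s) := by
  have e : (fun z : ℝ => c * max 0 (x - z) * ker s x z)
      = fun z : ℝ => (fun t : ℝ => (c / Real.sqrt (4*Real.pi*s))
          * (max 0 t * Real.exp (-t^2/(4*s)))) (x - z) := by
    funext z
    unfold ker
    ring
  rw [e, integral_sub_left_eq_self (fun t : ℝ => (c / Real.sqrt (4*Real.pi*s))
    * (max 0 t * Real.exp (-t^2/(4*s)))) volume x, integral_const_mul, J_eq hs]
  ring

lemma Dfun_bound {s : ℝ} (hs : 0 < s) (v C₀ : ℝ) {u : ℝ → ℝ}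
    (hu : Continuous u) (hu0 : ∀ z, 0 ≤ u z) (huC : ∀ z, u z ≤ C₀) (x : ℝ) :
    |Dfun v u s x| ≤ C₀ / (2*Real.sqrt (Real.pi*s)) := by
  have hC0 : 0 ≤ C₀ := le_trans (hu0 0) (huC 0)
  have h2s : (0:ℝ) < 2*s := by linarith
  have hint := (hasDerivAt_Ifun hs v C₀ hu hu0 huC x).1
  have hAval : C₀/(2*s) * (2*s) / Real.sqrt (4*Real.pi*s) = C₀ / (2*Real.sqrt (Real.pi*s)) := by
    rw [sqrt_four_pi, div_mul_cancel₀ _ (ne_of_gt h2s)]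
  have hup : Dfun v u s x ≤ C₀ / (2*Real.sqrt (Real.pi*s)) := by
    rw [← hAval, ← maxker_integral hs x (C₀/(2*s))]
    refine integral_mono hint (maxker_integrable hs x (C₀/(2*s))) fun z => ?_
    calc (z-x)/(2*s) * ker s x z * u (z + v*s)
        ≤ max 0 (z-x)/(2*s) * ker s x z * u (z + v*s) := by
          refine mul_le_mul_of_nonneg_right (mul_le_mul_of_nonneg_right
            ((div_le_div_iff_of_pos_right h2s).2 (le_max_right 0 _)) (ker_nonneg s x z)) (hu0 _)
      _ ≤ max 0 (z-x)/(2*s) * ker s x z * C₀ := by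
          refine mul_le_mul_of_nonneg_left (huC _) ?_
          exact mul_nonneg (div_nonneg (le_max_left 0 _) h2s.le) (ker_nonneg s x z)
      _ = C₀/(2*s) * max 0 (z-x) * ker s x z := by ring
  have hlo : -Dfun v u s x ≤ C₀ / (2*Real.sqrt (Real.pi*s)) := by
    rw [← hAval, ← maxker_integral' hs x (C₀/(2*s))]
    unfold Dfun
    rw [← integral_neg]
    refine integral_mono hint.neg (maxker_integrable' hs x (C₀/(2*s))) fun z => ?_
    calc -((z-x)/(2*s) * ker s x z * u (z + v*s))
        = (x-z)/(2*s) * ker s x z * u (z + v*s) := by ring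
      _ ≤ max 0 (x-z)/(2*s) * ker s x z * u (z + v*s) := by
          refine mul_le_mul_of_nonneg_right (mul_le_mul_of_nonneg_right
            ((div_le_div_iff_of_pos_right h2s).2 (le_max_right 0 _)) (ker_nonneg s x z)) (hu0 _)
      _ ≤ max 0 (x-z)/(2*s) * ker s x z * C₀ := by
          refine mul_le_mul_of_nonneg_left (huC _) ?_
          exact mul_nonneg (div_nonneg (le_max_left 0 _) h2s.le) (ker_nonneg s x z)
      _ = C₀/(2*s) * max 0 (x-z) * ker s x z := by ring
  exact abs_le.mpr ⟨by linarith, hup⟩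

lemma prod_meas_eq : (volume.restrict (Ioi (0:ℝ))).prod (volume : Measure ℝ)
    = ((volume : Measure ℝ).prod (volume : Measure ℝ)).restrict (Ioi 0 ×ˢ univ) := by
  rw [← Measure.prod_restrict, Measure.restrict_univ]

lemma Ifun_meas (v : ℝ) {u : ℝ → ℝ} (hu : Continuous u) (x : ℝ) :
    AEStronglyMeasurable (fun s => Ifun v u s x) (volume.restrict (Ioi 0)) := by
  have h : AEStronglyMeasurable (fun p : ℝ × ℝ => ker p.1 x p.2 * u (p.2 + v*p.1))
      ((volume.restrict (Ioi (0:ℝ))).prod volume) := by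
    rw [prod_meas_eq]
    refine ContinuousOn.aestronglyMeasurable ?_ (measurableSet_Ioi.prod MeasurableSet.univ)
    unfold ker
    refine ContinuousOn.mul (ContinuousOn.div ?_ ?_ ?_) ?_
    · refine Real.continuous_exp.comp_continuousOn
        (ContinuousOn.div (by fun_prop) (by fun_prop) ?_)
      intro p hp
      have hp1 : (0:ℝ) < p.1 := hp.1
      positivity
    · exact (Real.continuous_sqrt.comp (by fun_prop)).continuousOn
    · intro p hp
      have hp1 : (0:ℝ) < p.1 := hp.1
      exact ne_of_gt (Real.sqrt_pos.2 (by positivity))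
    · exact (hu.comp (by fun_prop)).continuousOn
  exact h.integral_prod_right'

lemma Dfun_meas (v : ℝ) {u : ℝ → ℝ} (hu : Continuous u) (x : ℝ) :
    AEStronglyMeasurable (fun s => Dfun v u s x) (volume.restrict (Ioi 0)) := by
  have h : AEStronglyMeasurable
      (fun p : ℝ × ℝ => ((p.2 - x)/(2*p.1)) * ker p.1 x p.2 * u (p.2 + v*p.1))
      ((volume.restrict (Ioi (0:ℝ))).prod volume) := by
    rw [prod_meas_eq]
    refine ContinuousOn.aestronglyMeasurable ?_ (measurableSet_Ioi.prod MeasurableSet.univ)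
    refine ContinuousOn.mul (ContinuousOn.mul (ContinuousOn.div ?_ ?_ ?_) ?_) ?_
    · fun_prop
    · fun_prop
    · intro p hp
      have hp1 : (0:ℝ) < p.1 := hp.1
      positivity
    · unfold ker
      refine ContinuousOn.div ?_ ?_ ?_
      · refine Real.continuous_exp.comp_continuousOn
          (ContinuousOn.div (by fun_prop) (by fun_prop) ?_)
        intro p hp
        have hp1 : (0:ℝ) < p.1 := hp.1
        positivity
      · exact (Real.continuous_sqrt.comp (by fun_prop)).continuousOn
      · intro p hp
        have hp1 : (0:ℝ) < p.1 := hp.1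
        exact ne_of_gt (Real.sqrt_pos.2 (by positivity))
    · exact (hu.comp (by fun_prop)).continuousOn
  exact h.integral_prod_right'

lemma int_exp_div_sqrt {lam : ℝ} (hlam : 0 < lam) :
    IntegrableOn (fun s : ℝ => Real.exp (-lam*s) / Real.sqrt s) (Ioi 0) := by
  have hcont : ContinuousOn (fun s : ℝ => Real.exp (-lam*s) / Real.sqrt s) (Ioi 0) := by
    refine ContinuousOn.div (by fun_prop) (Real.continuous_sqrt.continuousOn) ?_
    intro s hs
    exact ne_of_gt (Real.sqrt_pos.2 hs)
  have h1 : IntegrableOn (fun s : ℝ => Real.exp (-lam*s) / Real.sqrt s) (Ioc 0 1) := by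
    have hr : IntegrableOn (fun s : ℝ => s ^ (-(1:ℝ)/2)) (Ioc (0:ℝ) 1) := by
      have := intervalIntegral.intervalIntegrable_rpow' (a := 0) (b := 1)
        (show (-1:ℝ) < -(1:ℝ)/2 by norm_num)
      rwa [intervalIntegrable_iff_integrableOn_Ioc_of_le (by norm_num)] at this
    refine Integrable.mono' hr
      ((hcont.mono Ioc_subset_Ioi_self).aestronglyMeasurable measurableSet_Ioc) ?_
    refine (ae_restrict_iff' measurableSet_Ioc).2 (Filter.Eventually.of_forall fun s hs => ?_)
    have hs0 : 0 < s := hs.1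
    have hrw : s ^ (-(1:ℝ)/2) = 1 / Real.sqrt s := by
      rw [show -(1:ℝ)/2 = -(1/2) by ring, Real.rpow_neg hs0.le, Real.sqrt_eq_rpow]
      norm_num
    rw [Real.norm_eq_abs, abs_of_nonneg (by positivity), hrw]
    rw [div_le_div_iff₀ (Real.sqrt_pos.2 hs0) (Real.sqrt_pos.2 hs0), one_mul]
    refine mul_le_of_le_one_left (Real.sqrt_nonneg s) (Real.exp_le_one_iff.2 ?_)
    have : 0 ≤ lam * s := by positivity
    linarith
  have h2 : IntegrableOn (fun s : ℝ => Real.exp (-lam*s) / Real.sqrt s) (Ioi 1) := by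
    refine Integrable.mono' (exp_neg_integrableOn_Ioi 1 hlam)
      ((hcont.mono (Ioi_subset_Ioi (by norm_num))).aestronglyMeasurable measurableSet_Ioi) ?_
    refine (ae_restrict_iff' measurableSet_Ioi).2 (Filter.Eventually.of_forall fun s hs => ?_)
    have hs1 : (1:ℝ) < s := hs
    rw [Real.norm_eq_abs, abs_of_nonneg (by positivity)]
    refine div_le_self (Real.exp_pos _).le ?_
    rw [show (1:ℝ) = Real.sqrt 1 by simp]
    exact Real.sqrt_le_sqrt (by linarith)
  have := h1.union h2
  rwa [Ioc_union_Ioi_eq_Ioi (by norm_num : (0:ℝ) ≤ 1)] at this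

set_option maxHeartbeats 1000000 in
/-- Theorem 3.1(1): the constant C₀ ≥ C̃₀ is a super-solution. -/
theorem stmt_14 (a b τ χ₁ χ₂ lam₁ lam₂ μ₁ μ₂ μ : ℝ)
    (ha : 0 < a) (hb : 0 < b) (hτ : 0 < τ)
    (hχ₁ : 0 < χ₁) (hχ₂ : 0 < χ₂) (hlam₁ : 0 < lam₁) (hlam₂ : 0 < lam₂)
    (hμ₁ : 0 < μ₁) (hμ₂ : 0 < μ₂)
    (hμ0 : 0 < μ) (hμa : μ < Real.sqrt a)
    (hτμ : τ < 1 → (1 - τ) * μ ^ 2 < lam₁ + τ * a ∧ (1 - τ) * μ ^ 2 < lam₂ + τ * a)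
    (hbig : b + χ₂ * μ₂ - χ₁ * μ₁ >
      Mbar χ₁ χ₂ lam₁ lam₂ μ₁ μ₂ + (μ + a / μ) * τ * Kconst χ₁ χ₂ lam₁ lam₂ μ₁ μ₂) :
    ∀ C₀ ≥ a / (b + χ₂ * μ₂ - χ₁ * μ₁ - Mbar χ₁ χ₂ lam₁ lam₂ μ₁ μ₂
        - (μ + a / μ) * τ * Kconst χ₁ χ₂ lam₁ lam₂ μ₁ μ₂),
    ∀ μt : ℝ, μ < μt → μt < min (2 * μ) (Real.sqrt a) →
      (τ < 1 → (1 - τ) * μt ^ 2 < lam₁ + τ * a ∧ (1 - τ) * μt ^ 2 < lam₂ + τ * a) →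
    ∀ d > max 1 (C₀ ^ ((μ - μt) / μ)),
    ∀ u : ℝ → ℝ, memE C₀ μ μt d u →
    ∀ x : ℝ,
      a + (χ₂ * lam₂ * Vfun a τ lam₂ μ₂ μ u x - χ₁ * lam₁ * Vfun a τ lam₁ μ₁ μ u x) +
        (μ + a / μ) * τ *
          deriv (fun y => χ₁ * Vfun a τ lam₁ μ₁ μ u y - χ₂ * Vfun a τ lam₂ μ₂ μ u y) x -
        (b + χ₂ * μ₂ - χ₁ * μ₁) * C₀ ≤ 0 := by

  intro C₀ hC₀ μt hμt1 hμt2 hμt3 d hd u hu x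
  obtain ⟨hucont, hbnds⟩ := hu
  set M := Mbar χ₁ χ₂ lam₁ lam₂ μ₁ μ₂ with hMdef
  set K := Kconst χ₁ χ₂ lam₁ lam₂ μ₁ μ₂ with hKdef
  have hδpos : 0 < b + χ₂ * μ₂ - χ₁ * μ₁ - M - (μ + a / μ) * τ * K := by linarith
  have hC₀pos : 0 < C₀ := lt_of_lt_of_le (div_pos ha hδpos) hC₀
  have hu0 : ∀ z, 0 ≤ u z := fun z => le_trans (le_max_left _ _) (hbnds z).1
  have huC : ∀ z, u z ≤ C₀ := fun z => le_trans (hbnds z).2 (min_le_left _ _)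
  set v : ℝ := τ * (μ + a / μ) with hv
  -- rewrite Vfun via Ifun
  have hVrw : ∀ lam m : ℝ, ∀ y : ℝ, Vfun a τ lam m μ u y
      = m * ∫ s in Ioi (0:ℝ), Real.exp (-lam*s) * Ifun v u s y := by
    intro lam m y
    unfold Vfun
    congr 1
    refine setIntegral_congr_fun measurableSet_Ioi (fun s _ => ?_)
    simp only [Ifun]
    rw [← integral_const_mul]
    refine integral_congr_ae (Filter.Eventually.of_forall fun z => ?_)
    simp only [ker]
    rw [hv]
    ring
  have hIint : ∀ lam : ℝ, 0 < lam → ∀ y : ℝ,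
      IntegrableOn (fun s => Real.exp (-lam*s) * Ifun v u s y) (Ioi 0) := by
    intro lam hlam y
    refine Integrable.mono' ((exp_neg_integrableOn_Ioi 0 hlam).const_mul C₀)
      (((Real.continuous_exp.comp (by fun_prop)).aestronglyMeasurable.restrict).mul
        (Ifun_meas v hucont y)) ?_
    refine (ae_restrict_iff' measurableSet_Ioi).2 (Filter.Eventually.of_forall fun s hs => ?_)
    have hs0 : (0:ℝ) < s := hs
    rw [Real.norm_eq_abs, abs_mul, Real.abs_exp,
      abs_of_nonneg (Ifun_nonneg hs0 y v hu0)]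
    rw [mul_comm C₀ _]
    exact mul_le_mul_of_nonneg_left (Ifun_le hs0 y v C₀ hucont hu0 huC) (Real.exp_pos _).le
  -- the M̄ bound
  have hM : χ₂ * lam₂ * Vfun a τ lam₂ μ₂ μ u x - χ₁ * lam₁ * Vfun a τ lam₁ μ₁ μ u x
      ≤ M * C₀ := by
    rw [hVrw lam₂ μ₂ x, hVrw lam₁ μ₁ x, ← mul_assoc, ← mul_assoc,
      ← integral_const_mul, ← integral_const_mul,
      ← integral_sub ((hIint lam₂ hlam₂ x).const_mul (χ₂ * lam₂ * μ₂))
        ((hIint lam₁ hlam₁ x).const_mul (χ₁ * lam₁ * μ₁))]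
    have hmaxint : IntegrableOn (fun s => max 0 (χ₂ * lam₂ * μ₂ * Real.exp (-lam₂ * s)
        - χ₁ * lam₁ * μ₁ * Real.exp (-lam₁ * s)) * C₀) (Ioi 0) := by
      have hf : IntegrableOn (fun s => χ₂ * lam₂ * μ₂ * Real.exp (-lam₂ * s)
          - χ₁ * lam₁ * μ₁ * Real.exp (-lam₁ * s)) (Ioi 0) :=
        ((exp_neg_integrableOn_Ioi 0 hlam₂).const_mul _).sub
          ((exp_neg_integrableOn_Ioi 0 hlam₁).const_mul _)
      exact (hf.pos_part.mul_const C₀).congr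
        (Filter.Eventually.of_forall fun s => by dsimp only; rw [max_comm])
    have hle : (fun s => χ₂ * lam₂ * μ₂ * (Real.exp (-lam₂*s) * Ifun v u s x)
          - χ₁ * lam₁ * μ₁ * (Real.exp (-lam₁*s) * Ifun v u s x))
        ≤ᵐ[volume.restrict (Ioi 0)]
          (fun s => max 0 (χ₂ * lam₂ * μ₂ * Real.exp (-lam₂ * s)
            - χ₁ * lam₁ * μ₁ * Real.exp (-lam₁ * s)) * C₀) := by
      refine (ae_restrict_iff' measurableSet_Ioi).2 (Filter.Eventually.of_forall fun s hs => ?_)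
      have hs0 : (0:ℝ) < s := hs
      have hI0 := Ifun_nonneg hs0 x v hu0
      have hIC := Ifun_le hs0 x v C₀ hucont hu0 huC
      calc χ₂ * lam₂ * μ₂ * (Real.exp (-lam₂*s) * Ifun v u s x)
          - χ₁ * lam₁ * μ₁ * (Real.exp (-lam₁*s) * Ifun v u s x)
          = (χ₂ * lam₂ * μ₂ * Real.exp (-lam₂*s)
              - χ₁ * lam₁ * μ₁ * Real.exp (-lam₁*s)) * Ifun v u s x := by ring
        _ ≤ max 0 (χ₂ * lam₂ * μ₂ * Real.exp (-lam₂*s)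
              - χ₁ * lam₁ * μ₁ * Real.exp (-lam₁*s)) * Ifun v u s x :=
            mul_le_mul_of_nonneg_right (le_max_right _ _) hI0
        _ ≤ max 0 (χ₂ * lam₂ * μ₂ * Real.exp (-lam₂*s)
              - χ₁ * lam₁ * μ₁ * Real.exp (-lam₁*s)) * C₀ :=
            mul_le_mul_of_nonneg_left hIC (le_max_left _ _)
    refine le_trans (integral_mono_ae
      (((hIint lam₂ hlam₂ x).const_mul (χ₂ * lam₂ * μ₂)).sub
        ((hIint lam₁ hlam₁ x).const_mul (χ₁ * lam₁ * μ₁))) hmaxint hle) ?_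
    rw [integral_mul_const]
    exact le_of_eq (by rw [hMdef]; rfl)
  -- the derivative bound
  have hgW : (fun y => χ₁ * Vfun a τ lam₁ μ₁ μ u y - χ₂ * Vfun a τ lam₂ μ₂ μ u y)
      = fun y => ∫ s in Ioi (0:ℝ),
          (χ₁ * μ₁ * Real.exp (-lam₁ * s) - χ₂ * μ₂ * Real.exp (-lam₂ * s)) * Ifun v u s y := by
    funext y
    rw [hVrw lam₁ μ₁ y, hVrw lam₂ μ₂ y, ← mul_assoc, ← mul_assoc,
      ← integral_const_mul, ← integral_const_mul,
      ← integral_sub ((hIint lam₁ hlam₁ y).const_mul (χ₁ * μ₁))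
        ((hIint lam₂ hlam₂ y).const_mul (χ₂ * μ₂))]
    refine integral_congr_ae (Filter.Eventually.of_forall fun s => ?_)
    ring
  have hKbint : Integrable (fun s => |χ₁ * μ₁ * Real.exp (-lam₁ * s)
        - χ₂ * μ₂ * Real.exp (-lam₂ * s)| * (C₀ / (2 * Real.sqrt (Real.pi * s))))
      (volume.restrict (Ioi 0)) := by
    refine Integrable.mono'
      (((int_exp_div_sqrt hlam₁).const_mul (χ₁ * μ₁ * C₀ / 2 / Real.sqrt Real.pi)).add
        ((int_exp_div_sqrt hlam₂).const_mul (χ₂ * μ₂ * C₀ / 2 / Real.sqrt Real.pi))) ?_ ?_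
    · refine (ContinuousOn.aestronglyMeasurable ?_ measurableSet_Ioi)
      refine ContinuousOn.mul (by fun_prop) ?_
      refine ContinuousOn.div continuousOn_const
        ((continuous_const.mul (Real.continuous_sqrt.comp (by fun_prop))).continuousOn) ?_
      intro s hs
      have hs0 : (0:ℝ) < s := hs
      have : (0:ℝ) < Real.sqrt (Real.pi * s) := Real.sqrt_pos.2 (by positivity)
      positivity
    · refine (ae_restrict_iff' measurableSet_Ioi).2 (Filter.Eventually.of_forall fun s hs => ?_)
      have hs0 : (0:ℝ) < s := hs
      have hsq : Real.sqrt (Real.pi * s) = Real.sqrt Real.pi * Real.sqrt s :=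
        Real.sqrt_mul Real.pi_pos.le s
      have habs : |χ₁ * μ₁ * Real.exp (-lam₁ * s) - χ₂ * μ₂ * Real.exp (-lam₂ * s)|
          ≤ χ₁ * μ₁ * Real.exp (-lam₁ * s) + χ₂ * μ₂ * Real.exp (-lam₂ * s) := by
        refine (abs_sub _ _).trans ?_
        rw [abs_of_nonneg (by positivity), abs_of_nonneg (by positivity)]
      rw [Real.norm_eq_abs, abs_of_nonneg (mul_nonneg (abs_nonneg _)
        (div_nonneg hC₀pos.le (by positivity)))]
      calc |χ₁ * μ₁ * Real.exp (-lam₁ * s) - χ₂ * μ₂ * Real.exp (-lam₂ * s)|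
            * (C₀ / (2 * Real.sqrt (Real.pi * s)))
          ≤ (χ₁ * μ₁ * Real.exp (-lam₁ * s) + χ₂ * μ₂ * Real.exp (-lam₂ * s))
            * (C₀ / (2 * Real.sqrt (Real.pi * s))) :=
            mul_le_mul_of_nonneg_right habs (div_nonneg hC₀pos.le (by positivity))
        _ = χ₁ * μ₁ * C₀ / 2 / Real.sqrt Real.pi * (Real.exp (-lam₁ * s) / Real.sqrt s)
            + χ₂ * μ₂ * C₀ / 2 / Real.sqrt Real.pi * (Real.exp (-lam₂ * s) / Real.sqrt s) := by
            rw [hsq]; ring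
  have hderK : deriv (fun y => χ₁ * Vfun a τ lam₁ μ₁ μ u y
      - χ₂ * Vfun a τ lam₂ μ₂ μ u y) x ≤ C₀ * K := by
    rw [hgW]
    have hgcont : Continuous (fun s : ℝ => χ₁ * μ₁ * Real.exp (-lam₁ * s)
        - χ₂ * μ₂ * Real.exp (-lam₂ * s)) := by fun_prop
    have hFint : Integrable (fun s => (χ₁ * μ₁ * Real.exp (-lam₁ * s)
        - χ₂ * μ₂ * Real.exp (-lam₂ * s)) * Ifun v u s x) (volume.restrict (Ioi 0)) := by
      have := ((hIint lam₁ hlam₁ x).const_mul (χ₁ * μ₁)).sub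
        ((hIint lam₂ hlam₂ x).const_mul (χ₂ * μ₂))
      exact this.congr (Filter.Eventually.of_forall fun s => by simp only [Pi.sub_apply]; ring)
    have hd := hasDerivAt_integral_of_dominated_loc_of_deriv_le
      (F := fun y s => (χ₁ * μ₁ * Real.exp (-lam₁ * s)
        - χ₂ * μ₂ * Real.exp (-lam₂ * s)) * Ifun v u s y)
      (F' := fun y s => (χ₁ * μ₁ * Real.exp (-lam₁ * s)
        - χ₂ * μ₂ * Real.exp (-lam₂ * s)) * Dfun v u s y)
      (x₀ := x)
      (bound := fun s => |χ₁ * μ₁ * Real.exp (-lam₁ * s)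
        - χ₂ * μ₂ * Real.exp (-lam₂ * s)| * (C₀ / (2 * Real.sqrt (Real.pi * s))))
      (Metric.ball_mem_nhds x one_pos)
      (Filter.Eventually.of_forall fun y =>
        (hgcont.aestronglyMeasurable.restrict).mul (Ifun_meas v hucont y))
      hFint
      ((hgcont.aestronglyMeasurable.restrict).mul (Dfun_meas v hucont x))
      ?_ hKbint ?_
    · rw [hd.2.deriv]
      refine le_trans (integral_mono_ae hd.1 hKbint ?_) ?_
      · refine (ae_restrict_iff' measurableSet_Ioi).2
          (Filter.Eventually.of_forall fun s hs => ?_)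
        have hs0 : (0:ℝ) < s := hs
        calc (χ₁ * μ₁ * Real.exp (-lam₁ * s) - χ₂ * μ₂ * Real.exp (-lam₂ * s)) * Dfun v u s x
            ≤ |(χ₁ * μ₁ * Real.exp (-lam₁ * s) - χ₂ * μ₂ * Real.exp (-lam₂ * s))
                * Dfun v u s x| := le_abs_self _
          _ = |χ₁ * μ₁ * Real.exp (-lam₁ * s) - χ₂ * μ₂ * Real.exp (-lam₂ * s)|
                * |Dfun v u s x| := abs_mul _ _
          _ ≤ |χ₁ * μ₁ * Real.exp (-lam₁ * s) - χ₂ * μ₂ * Real.exp (-lam₂ * s)|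
                * (C₀ / (2 * Real.sqrt (Real.pi * s))) :=
              mul_le_mul_of_nonneg_left (Dfun_bound hs0 v C₀ hucont hu0 huC x) (abs_nonneg _)
      · have e : ∀ s : ℝ, |χ₁ * μ₁ * Real.exp (-lam₁ * s) - χ₂ * μ₂ * Real.exp (-lam₂ * s)|
            * (C₀ / (2 * Real.sqrt (Real.pi * s)))
            = C₀ * (|χ₁ * μ₁ * Real.exp (-lam₁ * s) - χ₂ * μ₂ * Real.exp (-lam₂ * s)|
              / (2 * Real.sqrt (Real.pi * s))) := fun s => by ring
        simp_rw [e]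
        rw [integral_const_mul]
        rw [hKdef]
        rfl
    · refine (ae_restrict_iff' measurableSet_Ioi).2
        (Filter.Eventually.of_forall fun s hs => ?_)
      intro y _
      have hs0 : (0:ℝ) < s := hs
      rw [Real.norm_eq_abs, abs_mul]
      exact mul_le_mul_of_nonneg_left (Dfun_bound hs0 v C₀ hucont hu0 huC y) (abs_nonneg _)
    · refine (ae_restrict_iff' measurableSet_Ioi).2
        (Filter.Eventually.of_forall fun s hs => ?_)
      intro y _
      have hs0 : (0:ℝ) < s := hs
      exact ((hasDerivAt_Ifun hs0 v C₀ hucont hu0 huC y).2).const_mul _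
  -- conclusion
  have hP : 0 ≤ (μ + a / μ) * τ := by positivity
  have h1 : (μ + a / μ) * τ * deriv (fun y => χ₁ * Vfun a τ lam₁ μ₁ μ u y
      - χ₂ * Vfun a τ lam₂ μ₂ μ u y) x ≤ (μ + a / μ) * τ * (C₀ * K) :=
    mul_le_mul_of_nonneg_left hderK hP
  have h2 : (a / (b + χ₂ * μ₂ - χ₁ * μ₁ - M - (μ + a / μ) * τ * K))
      * (b + χ₂ * μ₂ - χ₁ * μ₁ - M - (μ + a / μ) * τ * K) = a :=
    div_mul_cancel₀ a (ne_of_gt hδpos)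
  have h3 := mul_le_mul_of_nonneg_right hC₀ hδpos.le
  have hexp : C₀ * (b + χ₂ * μ₂ - χ₁ * μ₁ - M - (μ + a / μ) * τ * K)
      = (b + χ₂ * μ₂ - χ₁ * μ₁) * C₀ - M * C₀ - (μ + a / μ) * τ * (C₀ * K) := by ring
  linarith
end

section
/- (Theorem 3.1(3)) Assume 0 < μ < √a, (1−τ)μ² < λᵢ + τa for i = 1,2 whenever τ < 1, b + χ₂μ₂ − χ₁μ₁ > (τc_μ + μ)K_{τ,μ} + M̄_{τ,μ}, and b + 2(χ₂μ₂ − χ₁μ₁) > 2(M̄ + τc_μK). Let C₀ > 0 and let μ̃ satisfy μ < μ̃ < min{√a, 2μ, μ + (b + χ₂μ₂ − χ₁μ₁ − (τc_μ + μ)K_{τ,μ})/(1 + K_{τ,μ})} (and (1−τ)μ̃² < λᵢ + τa if τ < 1). Then there exists d₀ ≥ max{1, C₀^{(μ−μ̃)/μ}} such that for every d ≥ d₀ and every u ∈ E_{τ,μ}(C₀), the function W(x) := e^{−μx} − d·e^{−μ̃x} satisfies, for all x > ln(d)/(μ̃ − μ): W''(x) + (c_μ + d/dx(χ₂V₂ −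 χ₁V₁)(x;u))·W'(x) + (a + χ₂λ₂V₂(x;u) − χ₁λ₁V₁(x;u))·W(x) + (c_μτ·d/dx(χ₁V₁ − χ₂V₂)(x;u) − (b + χ₂μ₂ − χ₁μ₁)·W(x))·W(x) ≥ 0; i.e., U⁻ is a sub-solution of the associated equation on (ln(d)/(μ̃−μ), ∞). -/
open MeasureTheory

/-- M̄_{τ,μ} := ∫₀^∞ (χ₂μ₂λ₂e^{−λ₂s} − χ₁μ₁λ₁e^{−λ₁s})₊ e^{−(τμc_μ−μ²)s} ds -/
noncomputable def Mbartm (a τ χ₁ χ₂ lam₁ lam₂ μ₁ μ₂ μ : ℝ) : ℝ :=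
  ∫ s in Set.Ioi (0:ℝ),
    max 0 (χ₂ * μ₂ * lam₂ * Real.exp (-lam₂ * s) - χ₁ * μ₁ * lam₁ * Real.exp (-lam₁ * s)) *
      Real.exp (-(τ * μ * (μ + a / μ) - μ ^ 2) * s)

/-- K_{τ,μ} := ∫₀^∞ |χ₁μ₁e^{−λ₁s} − χ₂μ₂e^{−λ₂s}|·(1+μ√(πs))·e^{−(τμc_μ−μ²)s}/√(πs) ds -/
noncomputable def Ktm (a τ χ₁ χ₂ lam₁ lam₂ μ₁ μ₂ μ : ℝ) : ℝ :=
  ∫ s in Set.Ioi (0:ℝ),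
    |χ₁ * μ₁ * Real.exp (-lam₁ * s) - χ₂ * μ₂ * Real.exp (-lam₂ * s)| *
      (1 + μ * Real.sqrt (Real.pi * s)) *
      Real.exp (-(τ * μ * (μ + a / μ) - μ ^ 2) * s) / Real.sqrt (Real.pi * s)

open Real Set Metric

set_option maxHeartbeats 1000000

lemma gauss_lin {b : ℝ} (hb : 0 < b) (ν x : ℝ) :
    ∫ z : ℝ, Real.exp (-b * (x - z) ^ 2) * Real.exp (-ν * z)
      = Real.sqrt (π / b) * Real.exp (-ν * x + ν ^ 2 / (4 * b)) := by
  have key : ∀ z : ℝ, Real.exp (-b * (x - z) ^ 2) * Real.exp (-ν * z)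
      = Real.exp (-b * (z - (x - ν / (2 * b))) ^ 2) * Real.exp (-ν * x + ν ^ 2 / (4 * b)) := by
    intro z
    rw [← Real.exp_add, ← Real.exp_add]
    congr 1
    field_simp
    ring
  simp_rw [key]
  rw [integral_mul_const, integral_sub_right_eq_self (fun z => Real.exp (-b * z ^ 2)),
    integral_gaussian]

lemma integrable_gauss_lin {b : ℝ} (hb : 0 < b) (ν x : ℝ) :
    Integrable (fun z : ℝ => Real.exp (-b * (x - z) ^ 2) * Real.exp (-ν * z)) := by
  have key : ∀ z : ℝ, Real.exp (-b * (x - z) ^ 2) * Real.exp (-ν * z)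
      = Real.exp (-b * (z - (x - ν / (2 * b))) ^ 2) * Real.exp (-ν * x + ν ^ 2 / (4 * b)) := by
    intro z
    rw [← Real.exp_add, ← Real.exp_add]
    congr 1
    field_simp
    ring
  simp_rw [key]
  exact (((integrable_exp_neg_mul_sq hb).comp_sub_right (x - ν / (2 * b)))).mul_const _


lemma integrableOn_exp_div_sqrt {δ : ℝ} (hδ : 0 < δ) :
    IntegrableOn (fun s : ℝ => Real.exp (-δ * s) / Real.sqrt s) (Ioi 0) := by
  have h := Real.GammaIntegral_convergent (by norm_num : (0:ℝ) < 1/2)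
  have h2 := (integrableOn_Ioi_comp_mul_left_iff
    (fun x : ℝ => Real.exp (-x) * x ^ ((1:ℝ)/2 - 1)) 0 hδ).2 (by simpa using h)
  have h3 := h2.const_mul (δ ^ ((1:ℝ)/2 - 1))⁻¹
  apply IntegrableOn.congr_fun h3 ?_ measurableSet_Ioi
  intro s hs
  simp only [mem_Ioi] at hs
  dsimp only
  have hδs : (0:ℝ) < δ * s := by positivity
  rw [Real.mul_rpow hδ.le hs.le]
  rw [Real.sqrt_eq_rpow]
  have : ((1:ℝ)/2 - 1) = -(1/2) := by norm_num
  rw [this, Real.rpow_neg hδ.le, Real.rpow_neg hs.le]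
  field_simp


lemma r_le_exp_sq {r : ℝ} : r ≤ Real.exp (r ^ 2) := by
  nlinarith [Real.add_one_le_exp (r^2), sq_nonneg (r - 1)]

lemma integrable_gauss_shift {b : ℝ} (hb : 0 < b) (x : ℝ) :
    Integrable (fun z : ℝ => Real.exp (-b * (x - z) ^ 2)) := by
  have key : ∀ z : ℝ, Real.exp (-b * (x - z) ^ 2)
      = Real.exp (-b * (z - x) ^ 2) := by
    intro z; congr 1; ring
  simp_rw [key]
  exact (integrable_exp_neg_mul_sq hb).comp_sub_right x

lemma kernel_bd {s ε w : ℝ} (hs : 0 < s) (hε : 0 < ε) :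
    Real.exp (-w ^ 2 / (4 * s)) * (|w| / (2 * s))
      ≤ Real.exp (-((1 - ε) / (4 * s)) * w ^ 2) / Real.sqrt (ε * s) := by
  have hss : Real.sqrt s > 0 := Real.sqrt_pos.2 hs
  have hse : Real.sqrt ε > 0 := Real.sqrt_pos.2 hε
  have hr : (Real.sqrt ε * |w| / (2 * Real.sqrt s)) ^ 2 = ε * w ^ 2 / (4 * s) := by
    rw [div_pow, mul_pow, mul_pow, Real.sq_sqrt hε.le, Real.sq_sqrt hs.le, sq_abs]
    norm_num
  have h1 : |w| / (2 * s) ≤ Real.exp (ε * w ^ 2 / (4 * s)) / Real.sqrt (ε * s) := by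
    have h2 : Real.sqrt ε * |w| / (2 * Real.sqrt s) ≤ Real.exp (ε * w ^ 2 / (4 * s)) := by
      rw [← hr]; exact r_le_exp_sq
    rw [Real.sqrt_mul hε.le, div_le_div_iff₀ (by positivity) (by positivity)]
    calc |w| * (Real.sqrt ε * Real.sqrt s) = (Real.sqrt ε * |w| / (2 * Real.sqrt s)) * (2 * s) := by
          field_simp
          rw [Real.sq_sqrt hs.le]
      _ ≤ Real.exp (ε * w ^ 2 / (4 * s)) * (2 * s) := by
          apply mul_le_mul_of_nonneg_right h2 (by positivity)
  calc Real.exp (-w ^ 2 / (4 * s)) * (|w| / (2 * s))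
      ≤ Real.exp (-w ^ 2 / (4 * s)) * (Real.exp (ε * w ^ 2 / (4 * s)) / Real.sqrt (ε * s)) := by
        apply mul_le_mul_of_nonneg_left h1 (Real.exp_nonneg _)
    _ = Real.exp (-((1 - ε) / (4 * s)) * w ^ 2) / Real.sqrt (ε * s) := by
        rw [mul_div_assoc', ← Real.exp_add]
        congr 2
        field_simp
        ring


lemma inner_hasDeriv (lam c C₀ : ℝ) (u : ℝ → ℝ) (hu : Continuous u)
    (hu0 : ∀ z, 0 ≤ u z) (huC : ∀ z, u z ≤ C₀) {s : ℝ} (hs : 0 < s) (y₀ : ℝ) :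
    HasDerivAt (fun y => ∫ z : ℝ, Real.exp (-lam * s) / Real.sqrt (4 * Real.pi * s) *
        Real.exp (-(y - z) ^ 2 / (4 * s)) * u (z + c * s))
      (∫ z : ℝ, Real.exp (-lam * s) / Real.sqrt (4 * Real.pi * s) *
        (Real.exp (-(y₀ - z) ^ 2 / (4 * s)) * (-(y₀ - z) / (2 * s))) * u (z + c * s)) y₀ := by
  have hπ : (0:ℝ) < Real.pi := Real.pi_pos
  set k := Real.exp (-lam * s) / Real.sqrt (4 * Real.pi * s) with hk
  have hk0 : 0 ≤ k := by positivity
  have hcont : ∀ y : ℝ, Continuous (fun z : ℝ =>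
      k * Real.exp (-(y - z) ^ 2 / (4 * s)) * u (z + c * s)) := by
    intro y
    exact (continuous_const.mul (by continuity)).mul (hu.comp (by continuity))
  have hcont' : ∀ y : ℝ, Continuous (fun z : ℝ =>
      k * (Real.exp (-(y - z) ^ 2 / (4 * s)) * (-(y - z) / (2 * s))) * u (z + c * s)) := by
    intro y
    exact (continuous_const.mul (by continuity)).mul (hu.comp (by continuity))
  have h16 : (0:ℝ) < 1 / (16 * s) := by positivity
  have h4 : (0:ℝ) < 1 / (4 * s) := by positivity
  have key := hasDerivAt_integral_of_dominated_loc_of_deriv_le (μ := volume)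
    (F := fun y z => k * Real.exp (-(y - z) ^ 2 / (4 * s)) * u (z + c * s))
    (F' := fun y z => k * (Real.exp (-(y - z) ^ 2 / (4 * s)) * (-(y - z) / (2 * s))) * u (z + c * s))
    (x₀ := y₀)
    (bound := fun z => (k * Real.exp (1 / (8 * s)) / Real.sqrt (s / 2) * C₀) *
      Real.exp (-(1 / (16 * s)) * (y₀ - z) ^ 2))
    (Metric.ball_mem_nhds y₀ one_pos)
    (Filter.Eventually.of_forall fun y => (hcont y).aestronglyMeasurable)
    ?hFint ((hcont' y₀).aestronglyMeasurable) ?hbound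
    ((integrable_gauss_shift h16 y₀).const_mul _) ?hdiff
  · exact key.2
  case hFint =>
    apply Integrable.mono' ((integrable_gauss_shift h4 y₀).const_mul (k * C₀))
      (hcont y₀).aestronglyMeasurable
    refine Filter.Eventually.of_forall fun z => ?_
    have h1 : (0:ℝ) ≤ u (z + c * s) := hu0 _
    rw [Real.norm_eq_abs, abs_of_nonneg (by positivity)]
    have : Real.exp (-(y₀ - z) ^ 2 / (4 * s)) = Real.exp (-(1 / (4 * s)) * (y₀ - z) ^ 2) := by
      congr 1; ring
    rw [this]
    calc k * Real.exp (-(1 / (4 * s)) * (y₀ - z) ^ 2) * u (z + c * s)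
        ≤ k * Real.exp (-(1 / (4 * s)) * (y₀ - z) ^ 2) * C₀ := by
          apply mul_le_mul_of_nonneg_left (huC _) (by positivity)
      _ = k * C₀ * Real.exp (-(1 / (4 * s)) * (y₀ - z) ^ 2) := by ring
  case hbound =>
    refine Filter.Eventually.of_forall fun z => fun y hy => ?_
    have h1 : (0:ℝ) ≤ u (z + c * s) := hu0 _
    rw [Real.norm_eq_abs, abs_mul, abs_mul, abs_of_nonneg hk0, abs_of_nonneg h1, abs_mul,
      abs_of_nonneg (Real.exp_nonneg _)]
    have hker : Real.exp (-(y - z) ^ 2 / (4 * s)) * |(-(y - z) / (2 * s))|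
        ≤ Real.exp (-((1 - 1/2) / (4 * s)) * (y - z) ^ 2) / Real.sqrt ((1/2) * s) := by
      have := kernel_bd (w := y - z) hs (by norm_num : (0:ℝ) < 1/2)
      calc Real.exp (-(y - z) ^ 2 / (4 * s)) * |(-(y - z) / (2 * s))|
          = Real.exp (-(y - z) ^ 2 / (4 * s)) * (|y - z| / (2 * s)) := by
            rw [abs_div, abs_neg, abs_of_nonneg (by positivity : (0:ℝ) ≤ 2 * s)]
        _ ≤ _ := this
    have hsh : Real.exp (-((1 - 1/2) / (4 * s)) * (y - z) ^ 2)
        ≤ Real.exp (1 / (8 * s)) * Real.exp (-(1 / (16 * s)) * (y₀ - z) ^ 2) := by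
      rw [← Real.exp_add]
      apply Real.exp_le_exp.2
      have hyy : |y - y₀| < 1 := by
        have := mem_ball_iff_norm.1 hy; simpa [Real.norm_eq_abs] using this
      have h2 : (y - y₀) ^ 2 ≤ 1 := by
        nlinarith [abs_nonneg (y - y₀), sq_abs (y - y₀)]
      have e1 : -((1 - 1/2) / (4 * s)) * (y - z) ^ 2 = (-2 * (y - z) ^ 2) / (16 * s) := by
        field_simp; ring
      have e2 : 1 / (8 * s) + -(1 / (16 * s)) * (y₀ - z) ^ 2
          = (2 - (y₀ - z) ^ 2) / (16 * s) := by field_simp; ring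
      rw [e1, e2, div_le_div_iff_of_pos_right (by positivity)]
      nlinarith [sq_nonneg ((y₀ - y) - (y - z))]
    calc k * (Real.exp (-(y - z) ^ 2 / (4 * s)) * |(-(y - z) / (2 * s))|) * u (z + c * s)
        ≤ k * (Real.exp (-((1 - 1/2) / (4 * s)) * (y - z) ^ 2) / Real.sqrt ((1/2) * s)) * C₀ := by
          apply mul_le_mul (mul_le_mul_of_nonneg_left hker hk0) (huC _) h1
          positivity
      _ ≤ k * (Real.exp (1 / (8 * s)) * Real.exp (-(1 / (16 * s)) * (y₀ - z) ^ 2) /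
            Real.sqrt ((1/2) * s)) * C₀ := by
          have hC : (0:ℝ) ≤ C₀ := le_trans (hu0 0) (huC 0)
          apply mul_le_mul_of_nonneg_right _ hC
          apply mul_le_mul_of_nonneg_left _ hk0
          exact (div_le_div_iff_of_pos_right (by positivity)).2 hsh
      _ = (k * Real.exp (1 / (8 * s)) / Real.sqrt (s / 2) * C₀) *
            Real.exp (-(1 / (16 * s)) * (y₀ - z) ^ 2) := by
          rw [show (1/2 : ℝ) * s = s / 2 by ring]; ring
  case hdiff =>
    refine Filter.Eventually.of_forall fun z => fun y _ => ?_
    have h1 : HasDerivAt (fun y : ℝ => y - z) 1 y := (hasDerivAt_id y).sub_const z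
    have hq : HasDerivAt (fun y : ℝ => -(y - z) ^ 2 / (4 * s)) (-(y - z) / (2 * s)) y := by
      have h2 := (h1.pow 2).neg.div_const (4 * s)
      refine h2.congr_deriv ?_
      field_simp
      ring
    exact (hq.exp.const_mul k).mul_const (u (z + c * s))


lemma inner_deriv_bound (lam c μ ε : ℝ) (u : ℝ → ℝ) (hu : Continuous u)
    (hu0 : ∀ z, 0 ≤ u z) (huμ : ∀ z, u z ≤ Real.exp (-μ * z))
    (hε0 : 0 < ε) (hε1 : ε < 1) {s : ℝ} (hs : 0 < s) (y : ℝ) :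
    |∫ z : ℝ, Real.exp (-lam * s) / Real.sqrt (4 * Real.pi * s) *
        (Real.exp (-(y - z) ^ 2 / (4 * s)) * (-(y - z) / (2 * s))) * u (z + c * s)|
      ≤ Real.exp (-μ * y) *
        (Real.exp (-(lam + (μ * c - μ ^ 2) - μ ^ 2 * ε / (1 - ε)) * s) /
          (Real.sqrt (ε * (1 - ε)) * Real.sqrt s)) := by
  have hπ : (0:ℝ) < Real.pi := Real.pi_pos
  have h1ε : (0:ℝ) < 1 - ε := by linarith
  set k := Real.exp (-lam * s) / Real.sqrt (4 * Real.pi * s) with hk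
  have hk0 : 0 ≤ k := by positivity
  have hb' : (0:ℝ) < (1 - ε) / (4 * s) := by positivity
  set b' := (1 - ε) / (4 * s) with hb'def
  set A := k / Real.sqrt (ε * s) * Real.exp (-(μ * (c * s))) with hA
  have hA0 : 0 ≤ A := by positivity
  have hptwise : ∀ z : ℝ, ‖Real.exp (-lam * s) / Real.sqrt (4 * Real.pi * s) *
      (Real.exp (-(y - z) ^ 2 / (4 * s)) * (-(y - z) / (2 * s))) * u (z + c * s)‖
      ≤ A * (Real.exp (-b' * (y - z) ^ 2) * Real.exp (-μ * z)) := by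
    intro z
    have h1 : (0:ℝ) ≤ u (z + c * s) := hu0 _
    rw [Real.norm_eq_abs, abs_mul, abs_mul, ← hk, abs_of_nonneg hk0, abs_of_nonneg h1, abs_mul,
      abs_of_nonneg (Real.exp_nonneg _)]
    have hker : Real.exp (-(y - z) ^ 2 / (4 * s)) * |(-(y - z) / (2 * s))|
        ≤ Real.exp (-b' * (y - z) ^ 2) / Real.sqrt (ε * s) := by
      have h2 := kernel_bd (w := y - z) hs hε0
      calc Real.exp (-(y - z) ^ 2 / (4 * s)) * |(-(y - z) / (2 * s))|
          = Real.exp (-(y - z) ^ 2 / (4 * s)) * (|y - z| / (2 * s)) := by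
            rw [abs_div, abs_neg, abs_of_nonneg (by positivity : (0:ℝ) ≤ 2 * s)]
        _ ≤ _ := h2
    have hu2 : u (z + c * s) ≤ Real.exp (-μ * z) * Real.exp (-(μ * (c * s))) := by
      rw [← Real.exp_add]
      calc u (z + c * s) ≤ Real.exp (-μ * (z + c * s)) := huμ _
        _ = Real.exp (-μ * z + -(μ * (c * s))) := by ring_nf
    calc k * (Real.exp (-(y - z) ^ 2 / (4 * s)) * |(-(y - z) / (2 * s))|) * u (z + c * s)
        ≤ k * (Real.exp (-b' * (y - z) ^ 2) / Real.sqrt (ε * s)) *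
            (Real.exp (-μ * z) * Real.exp (-(μ * (c * s)))) := by
          apply mul_le_mul (mul_le_mul_of_nonneg_left hker hk0) hu2 h1 (by positivity)
      _ = A * (Real.exp (-b' * (y - z) ^ 2) * Real.exp (-μ * z)) := by rw [hA]; ring
  have hgint : Integrable (fun z : ℝ => A * (Real.exp (-b' * (y - z) ^ 2) * Real.exp (-μ * z))) :=
    (integrable_gauss_lin hb' μ y).const_mul A
  calc |∫ z : ℝ, Real.exp (-lam * s) / Real.sqrt (4 * Real.pi * s) *
        (Real.exp (-(y - z) ^ 2 / (4 * s)) * (-(y - z) / (2 * s))) * u (z + c * s)|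
      ≤ ∫ z : ℝ, A * (Real.exp (-b' * (y - z) ^ 2) * Real.exp (-μ * z)) := by
        have := norm_integral_le_of_norm_le hgint (Filter.Eventually.of_forall hptwise)
        simpa [Real.norm_eq_abs] using this
    _ = A * (Real.sqrt (π / b') * Real.exp (-μ * y + μ ^ 2 / (4 * b'))) := by
        rw [integral_const_mul, gauss_lin hb' μ y]
    _ = Real.exp (-μ * y) *
        (Real.exp (-(lam + (μ * c - μ ^ 2) - μ ^ 2 * ε / (1 - ε)) * s) /
          (Real.sqrt (ε * (1 - ε)) * Real.sqrt s)) := by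
        have hsqrt : Real.sqrt (π / b') = Real.sqrt (4 * π * s) / Real.sqrt (1 - ε) := by
          rw [show π / b' = (4 * π * s) / (1 - ε) by rw [hb'def]; field_simp,
            Real.sqrt_div (by positivity)]
        have hS : (0:ℝ) < Real.sqrt (4 * π * s) := Real.sqrt_pos.2 (by positivity)
        have hse : (0:ℝ) < Real.sqrt ε := Real.sqrt_pos.2 hε0
        have hs1e : (0:ℝ) < Real.sqrt (1 - ε) := Real.sqrt_pos.2 h1ε
        have hss : (0:ℝ) < Real.sqrt s := Real.sqrt_pos.2 hs
        rw [hA, hk, hsqrt, Real.sqrt_mul hε0.le s, Real.sqrt_mul hε0.le (1 - ε)]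
        rw [show -μ * y + μ ^ 2 / (4 * b') = -μ * y + μ ^ 2 * s / (1 - ε) by
          rw [hb'def]; field_simp]
        rw [show -(lam + (μ * c - μ ^ 2) - μ ^ 2 * ε / (1 - ε)) * s
            = -lam * s + -(μ * (c * s)) + μ ^ 2 * s / (1 - ε) by field_simp; ring]
        rw [Real.exp_add, Real.exp_add, Real.exp_add]
        field_simp


lemma inner_val_bound (lam c μ C₀ : ℝ) (u : ℝ → ℝ)
    (hu0 : ∀ z, 0 ≤ u z) (huC : ∀ z, u z ≤ C₀) (huμ : ∀ z, u z ≤ Real.exp (-μ * z))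
    {s : ℝ} (hs : 0 < s) (y : ℝ) :
    0 ≤ (∫ z : ℝ, Real.exp (-lam * s) / Real.sqrt (4 * Real.pi * s) *
        Real.exp (-(y - z) ^ 2 / (4 * s)) * u (z + c * s)) ∧
    (∫ z : ℝ, Real.exp (-lam * s) / Real.sqrt (4 * Real.pi * s) *
        Real.exp (-(y - z) ^ 2 / (4 * s)) * u (z + c * s))
      ≤ Real.exp (-(lam + (μ * c - μ ^ 2)) * s) * Real.exp (-μ * y) ∧
    (∫ z : ℝ, Real.exp (-lam * s) / Real.sqrt (4 * Real.pi * s) *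
        Real.exp (-(y - z) ^ 2 / (4 * s)) * u (z + c * s))
      ≤ C₀ * Real.exp (-lam * s) := by
  have hπ : (0:ℝ) < Real.pi := Real.pi_pos
  set k := Real.exp (-lam * s) / Real.sqrt (4 * Real.pi * s) with hk
  have hk0 : 0 ≤ k := by positivity
  have hS : (0:ℝ) < Real.sqrt (4 * π * s) := Real.sqrt_pos.2 (by positivity)
  have hkS : k * Real.sqrt (4 * π * s) = Real.exp (-lam * s) := by
    rw [hk, div_mul_cancel₀ _ hS.ne']
  have hb : (0:ℝ) < 1 / (4 * s) := by positivity
  have hsq : Real.sqrt (π / (1 / (4 * s))) = Real.sqrt (4 * π * s) := by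
    congr 1; field_simp
  have hshape : ∀ z : ℝ, Real.exp (-(y - z) ^ 2 / (4 * s))
      = Real.exp (-(1 / (4 * s)) * (y - z) ^ 2) := by
    intro z; congr 1; ring
  have habs : ∀ z : ℝ, |Real.exp (-lam * s) / Real.sqrt (4 * Real.pi * s) *
      Real.exp (-(y - z) ^ 2 / (4 * s)) * u (z + c * s)|
      = k * Real.exp (-(y - z) ^ 2 / (4 * s)) * u (z + c * s) := by
    intro z
    have h0 := hu0 (z + c * s)
    rw [← hk, abs_of_nonneg (by positivity)]
  refine ⟨?_, ?_, ?_⟩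
  · apply integral_nonneg
    intro z
    have := hu0 (z + c * s)
    positivity
  · have hbd : ∀ z : ℝ, ‖Real.exp (-lam * s) / Real.sqrt (4 * Real.pi * s) *
        Real.exp (-(y - z) ^ 2 / (4 * s)) * u (z + c * s)‖
        ≤ (k * Real.exp (-(μ * (c * s)))) *
          (Real.exp (-(1 / (4 * s)) * (y - z) ^ 2) * Real.exp (-μ * z)) := by
      intro z
      rw [Real.norm_eq_abs, habs z, hshape z]
      have h2 : u (z + c * s) ≤ Real.exp (-μ * z) * Real.exp (-(μ * (c * s))) := by
        rw [← Real.exp_add]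
        calc u (z + c * s) ≤ Real.exp (-μ * (z + c * s)) := huμ _
          _ = Real.exp (-μ * z + -(μ * (c * s))) := by ring_nf
      calc k * Real.exp (-(1 / (4 * s)) * (y - z) ^ 2) * u (z + c * s)
          ≤ k * Real.exp (-(1 / (4 * s)) * (y - z) ^ 2) *
              (Real.exp (-μ * z) * Real.exp (-(μ * (c * s)))) := by
            apply mul_le_mul_of_nonneg_left h2 (by positivity)
        _ = _ := by ring
    have hgi : Integrable (fun z : ℝ => (k * Real.exp (-(μ * (c * s)))) *
        (Real.exp (-(1 / (4 * s)) * (y - z) ^ 2) * Real.exp (-μ * z))) :=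
      (integrable_gauss_lin hb μ y).const_mul _
    have h3 := norm_integral_le_of_norm_le hgi (Filter.Eventually.of_forall hbd)
    rw [Real.norm_eq_abs] at h3
    have h4 : (∫ z : ℝ, (k * Real.exp (-(μ * (c * s)))) *
        (Real.exp (-(1 / (4 * s)) * (y - z) ^ 2) * Real.exp (-μ * z)))
        = Real.exp (-(lam + (μ * c - μ ^ 2)) * s) * Real.exp (-μ * y) := by
      rw [integral_const_mul, gauss_lin hb μ y, hsq]
      rw [show -μ * y + μ ^ 2 / (4 * (1 / (4 * s))) = -μ * y + μ ^ 2 * s by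
        congr 1; field_simp]
      rw [show (-(lam + (μ * c - μ ^ 2)) * s) = -lam * s + (-(μ * (c * s)) + μ ^ 2 * s) by ring]
      rw [Real.exp_add, Real.exp_add, Real.exp_add, ← hkS]
      ring
    calc (∫ z : ℝ, Real.exp (-lam * s) / Real.sqrt (4 * Real.pi * s) *
        Real.exp (-(y - z) ^ 2 / (4 * s)) * u (z + c * s)) ≤ |_| := le_abs_self _
      _ ≤ _ := h4 ▸ h3
  · have hbd : ∀ z : ℝ, ‖Real.exp (-lam * s) / Real.sqrt (4 * Real.pi * s) *
        Real.exp (-(y - z) ^ 2 / (4 * s)) * u (z + c * s)‖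
        ≤ (k * C₀) * (Real.exp (-(1 / (4 * s)) * (y - z) ^ 2) * Real.exp (-(0:ℝ) * z)) := by
      intro z
      rw [Real.norm_eq_abs, habs z, hshape z]
      have hC : (0:ℝ) ≤ C₀ := le_trans (hu0 0) (huC 0)
      calc k * Real.exp (-(1 / (4 * s)) * (y - z) ^ 2) * u (z + c * s)
          ≤ k * Real.exp (-(1 / (4 * s)) * (y - z) ^ 2) * C₀ := by
            apply mul_le_mul_of_nonneg_left (huC _) (by positivity)
        _ = _ := by rw [neg_zero, zero_mul, Real.exp_zero]; ring
    have hgi : Integrable (fun z : ℝ => (k * C₀) *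
        (Real.exp (-(1 / (4 * s)) * (y - z) ^ 2) * Real.exp (-(0:ℝ) * z))) :=
      (integrable_gauss_lin hb 0 y).const_mul _
    have h3 := norm_integral_le_of_norm_le hgi (Filter.Eventually.of_forall hbd)
    rw [Real.norm_eq_abs] at h3
    have h4 : (∫ z : ℝ, (k * C₀) *
        (Real.exp (-(1 / (4 * s)) * (y - z) ^ 2) * Real.exp (-(0:ℝ) * z)))
        = C₀ * Real.exp (-lam * s) := by
      rw [integral_const_mul, gauss_lin hb 0 y, hsq, ← hkS]
      norm_num
      ring
    calc (∫ z : ℝ, Real.exp (-lam * s) / Real.sqrt (4 * Real.pi * s) *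
        Real.exp (-(y - z) ^ 2 / (4 * s)) * u (z + c * s)) ≤ |_| := le_abs_self _
      _ ≤ _ := h4 ▸ h3


lemma Vmaster (a τ lam m μ C₀ ε : ℝ) (u : ℝ → ℝ)
    (hm : 0 ≤ m) (hμ : 0 < μ) (hlam : 0 < lam) (hu : Continuous u)
    (hu0 : ∀ z, 0 ≤ u z) (huC : ∀ z, u z ≤ C₀) (huμ : ∀ z, u z ≤ Real.exp (-μ * z))
    (hε0 : 0 < ε) (hε1 : ε < 1)
    (hδ : 0 < lam + (μ * (τ * (μ + a / μ)) - μ ^ 2) - μ ^ 2 * ε / (1 - ε)) (x : ℝ) :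
    0 ≤ Vfun a τ lam m μ u x ∧
    Vfun a τ lam m μ u x ≤ m * (∫ s in Ioi (0:ℝ),
        Real.exp (-(lam + (μ * (τ * (μ + a / μ)) - μ ^ 2)) * s)) * Real.exp (-μ * x) ∧
    ∃ D, HasDerivAt (Vfun a τ lam m μ u) D x ∧
      |D| ≤ m * (∫ s in Ioi (0:ℝ),
          Real.exp (-(lam + (μ * (τ * (μ + a / μ)) - μ ^ 2) - μ ^ 2 * ε / (1 - ε)) * s) /
            (Real.sqrt (ε * (1 - ε)) * Real.sqrt s)) * Real.exp (-μ * x) := by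
  set c := τ * (μ + a / μ) with hc
  set κ := μ * c - μ ^ 2 with hκ
  set δ := lam + κ - μ ^ 2 * ε / (1 - ε) with hδdef
  have h1ε : (0:ℝ) < 1 - ε := by linarith
  have hratio : 0 ≤ μ ^ 2 * ε / (1 - ε) := by positivity
  have hlk : 0 < lam + κ := by simp only [hδdef] at hδ; linarith
  have hsε : (0:ℝ) < Real.sqrt (ε * (1 - ε)) := Real.sqrt_pos.2 (by positivity)
  -- integrability of the two dominating functions
  have hIδ : IntegrableOn (fun s : ℝ =>
      Real.exp (-δ * s) / (Real.sqrt (ε * (1 - ε)) * Real.sqrt s)) (Ioi 0) := by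
    have h1 := (integrableOn_exp_div_sqrt hδ).mul_const (Real.sqrt (ε * (1 - ε)))⁻¹
    have h2 : (fun s : ℝ => Real.exp (-δ * s) / Real.sqrt s * (Real.sqrt (ε * (1 - ε)))⁻¹)
        = fun s : ℝ => Real.exp (-δ * s) / (Real.sqrt (ε * (1 - ε)) * Real.sqrt s) := by
      funext s; ring
    rwa [h2] at h1
  have hIlk : IntegrableOn (fun s : ℝ => Real.exp (-(lam + κ) * s)) (Ioi 0) :=
    exp_neg_integrableOn_Ioi 0 hlk
  -- measurability of inner integrals
  have hmeasF : ∀ y : ℝ, AEStronglyMeasurable (fun s : ℝ =>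
      ∫ z : ℝ, Real.exp (-lam * s) / Real.sqrt (4 * Real.pi * s) *
        Real.exp (-(y - z) ^ 2 / (4 * s)) * u (z + c * s)) (volume.restrict (Ioi 0)) := by
    intro y
    have hum : Measurable u := hu.measurable
    have hPmeas : Measurable (fun p : ℝ × ℝ =>
        Real.exp (-lam * p.1) / Real.sqrt (4 * Real.pi * p.1) *
        Real.exp (-(y - p.2) ^ 2 / (4 * p.1)) * u (p.2 + c * p.1)) := by fun_prop
    exact hPmeas.aestronglyMeasurable.integral_prod_right'
  have hmeasF' : AEStronglyMeasurable (fun s : ℝ =>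
      ∫ z : ℝ, Real.exp (-lam * s) / Real.sqrt (4 * Real.pi * s) *
        (Real.exp (-(x - z) ^ 2 / (4 * s)) * (-(x - z) / (2 * s))) * u (z + c * s))
      (volume.restrict (Ioi 0)) := by
    have hum : Measurable u := hu.measurable
    have hPmeas : Measurable (fun p : ℝ × ℝ =>
        Real.exp (-lam * p.1) / Real.sqrt (4 * Real.pi * p.1) *
        (Real.exp (-(x - p.2) ^ 2 / (4 * p.1)) * (-(x - p.2) / (2 * p.1))) * u (p.2 + c * p.1)) := by
      fun_prop
    exact hPmeas.aestronglyMeasurable.integral_prod_right'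
  -- outer dominated differentiation
  have key := hasDerivAt_integral_of_dominated_loc_of_deriv_le
    (μ := volume.restrict (Ioi 0))
    (F := fun y s => ∫ z : ℝ, Real.exp (-lam * s) / Real.sqrt (4 * Real.pi * s) *
        Real.exp (-(y - z) ^ 2 / (4 * s)) * u (z + c * s))
    (F' := fun y s => ∫ z : ℝ, Real.exp (-lam * s) / Real.sqrt (4 * Real.pi * s) *
        (Real.exp (-(y - z) ^ 2 / (4 * s)) * (-(y - z) / (2 * s))) * u (z + c * s))
    (x₀ := x)
    (bound := fun s => Real.exp (μ * (|x| + 1)) *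
      (Real.exp (-δ * s) / (Real.sqrt (ε * (1 - ε)) * Real.sqrt s)))
    (Metric.ball_mem_nhds x one_pos)
    (Filter.Eventually.of_forall fun y => hmeasF y)
    ?hFint hmeasF' ?hbound (hIδ.const_mul _) ?hdiff
  case hFint =>
    apply Integrable.mono' ((exp_neg_integrableOn_Ioi 0 hlam).const_mul C₀) (hmeasF x)
    rw [ae_restrict_iff' measurableSet_Ioi]
    refine Filter.Eventually.of_forall fun s hs => ?_
    rw [mem_Ioi] at hs
    have h := inner_val_bound lam c μ C₀ u hu0 huC huμ hs x
    rw [Real.norm_eq_abs, abs_of_nonneg h.1]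
    exact h.2.2
  case hbound =>
    rw [ae_restrict_iff' measurableSet_Ioi]
    refine Filter.Eventually.of_forall fun s hs => fun y hy => ?_
    rw [mem_Ioi] at hs
    have h := inner_deriv_bound lam c μ ε u hu hu0 huμ hε0 hε1 hs y
    rw [Real.norm_eq_abs]
    refine le_trans h ?_
    apply mul_le_mul_of_nonneg_right _ (by positivity)
    apply Real.exp_le_exp.2
    have hy1 : |y - x| < 1 := by
      have := mem_ball_iff_norm.1 hy; simpa [Real.norm_eq_abs] using this
    have : -y ≤ |x| + 1 := by
      have h1 : x - 1 < y := by cases abs_lt.1 hy1 with | intro h1 h2 => linarith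
      have h2 : -|x| ≤ x := neg_abs_le x
      linarith
    nlinarith [hμ.le]
  case hdiff =>
    rw [ae_restrict_iff' measurableSet_Ioi]
    refine Filter.Eventually.of_forall fun s hs => fun y _ => ?_
    rw [mem_Ioi] at hs
    exact inner_hasDeriv lam c C₀ u hu hu0 huC hs y
  obtain ⟨hintF', hderiv⟩ := key
  -- the three conclusions
  refine ⟨?_, ?_, ?_⟩
  · apply mul_nonneg hm
    apply setIntegral_nonneg measurableSet_Ioi
    intro s hs
    exact (inner_val_bound lam c μ C₀ u hu0 huC huμ (mem_Ioi.1 hs) x).1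
  · have hb2 : ∀ᵐ s ∂(volume.restrict (Ioi (0:ℝ))),
        ‖∫ z : ℝ, Real.exp (-lam * s) / Real.sqrt (4 * Real.pi * s) *
          Real.exp (-(x - z) ^ 2 / (4 * s)) * u (z + c * s)‖
        ≤ Real.exp (-(lam + κ) * s) * Real.exp (-μ * x) := by
      rw [ae_restrict_iff' measurableSet_Ioi]
      refine Filter.Eventually.of_forall fun s hs => ?_
      rw [mem_Ioi] at hs
      have h := inner_val_bound lam c μ C₀ u hu0 huC huμ hs x
      rw [Real.norm_eq_abs, abs_of_nonneg h.1]
      exact h.2.1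
    have h3 := norm_integral_le_of_norm_le (hIlk.mul_const (Real.exp (-μ * x))) hb2
    rw [Real.norm_eq_abs] at h3
    have h4 : (∫ s in Ioi (0:ℝ), Real.exp (-(lam + κ) * s) * Real.exp (-μ * x))
        = (∫ s in Ioi (0:ℝ), Real.exp (-(lam + κ) * s)) * Real.exp (-μ * x) := by
      rw [integral_mul_const]
    show m * _ ≤ _
    rw [mul_assoc]
    apply mul_le_mul_of_nonneg_left _ hm
    calc (∫ s in Ioi (0:ℝ), ∫ z : ℝ, Real.exp (-lam * s) / Real.sqrt (4 * Real.pi * s) *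
          Real.exp (-(x - z) ^ 2 / (4 * s)) * u (z + c * s)) ≤ |_| := le_abs_self _
      _ ≤ _ := by rw [← h4]; exact h3
  · refine ⟨m * ∫ s in Ioi (0:ℝ),
      ∫ z : ℝ, Real.exp (-lam * s) / Real.sqrt (4 * Real.pi * s) *
        (Real.exp (-(x - z) ^ 2 / (4 * s)) * (-(x - z) / (2 * s))) * u (z + c * s), ?_, ?_⟩
    · exact hderiv.const_mul m
    · rw [abs_mul, abs_of_nonneg hm]
      rw [mul_assoc]
      apply mul_le_mul_of_nonneg_left _ hm
      have hb2 : ∀ᵐ s ∂(volume.restrict (Ioi (0:ℝ))),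
          ‖∫ z : ℝ, Real.exp (-lam * s) / Real.sqrt (4 * Real.pi * s) *
            (Real.exp (-(x - z) ^ 2 / (4 * s)) * (-(x - z) / (2 * s))) * u (z + c * s)‖
          ≤ Real.exp (-δ * s) / (Real.sqrt (ε * (1 - ε)) * Real.sqrt s) * Real.exp (-μ * x) := by
        rw [ae_restrict_iff' measurableSet_Ioi]
        refine Filter.Eventually.of_forall fun s hs => ?_
        rw [mem_Ioi] at hs
        have h := inner_deriv_bound lam c μ ε u hu hu0 huμ hε0 hε1 hs x
        rw [Real.norm_eq_abs]
        refine le_trans h (le_of_eq ?_)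
        ring
      have h3 := norm_integral_le_of_norm_le (hIδ.mul_const (Real.exp (-μ * x))) hb2
      rw [Real.norm_eq_abs] at h3
      rw [integral_mul_const] at h3
      exact h3

/-- Theorem 3.1(3): W(x) = e^{−μx} − d e^{−μ̃x} is a sub-solution on
(ln d/(μ̃−μ), ∞) for all d ≥ d₀. -/
theorem stmt_16 (a b τ χ₁ χ₂ lam₁ lam₂ μ₁ μ₂ μ μt C₀ : ℝ)
    (ha : 0 < a) (hb : 0 < b) (hτ : 0 < τ)
    (hχ₁ : 0 < χ₁) (hχ₂ : 0 < χ₂) (hlam₁ : 0 < lam₁) (hlam₂ : 0 < lam₂)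
    (hμ₁ : 0 < μ₁) (hμ₂ : 0 < μ₂)
    (hμ0 : 0 < μ) (hμa : μ < Real.sqrt a)
    (hτμ : τ < 1 → (1 - τ) * μ ^ 2 < lam₁ + τ * a ∧ (1 - τ) * μ ^ 2 < lam₂ + τ * a)
    (hb1 : b + χ₂ * μ₂ - χ₁ * μ₁ >
      (τ * (μ + a / μ) + μ) * Ktm a τ χ₁ χ₂ lam₁ lam₂ μ₁ μ₂ μ +
        Mbartm a τ χ₁ χ₂ lam₁ lam₂ μ₁ μ₂ μ)
    (hb2 : b + 2 * (χ₂ * μ₂ - χ₁ * μ₁) >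
      2 * (Mbar χ₁ χ₂ lam₁ lam₂ μ₁ μ₂ +
        τ * (μ + a / μ) * Kconst χ₁ χ₂ lam₁ lam₂ μ₁ μ₂))
    (hC₀ : 0 < C₀)
    (hμt₁ : μ < μt)
    (hμt₂ : μt < min (Real.sqrt a) (min (2 * μ)
      (μ + (b + χ₂ * μ₂ - χ₁ * μ₁ - (τ * (μ + a / μ) + μ) * Ktm a τ χ₁ χ₂ lam₁ lam₂ μ₁ μ₂ μ) /
        (1 + Ktm a τ χ₁ χ₂ lam₁ lam₂ μ₁ μ₂ μ))))
    (hτμt : τ < 1 → (1 - τ) * μt ^ 2 < lam₁ + τ * a ∧ (1 - τ) * μt ^ 2 < lam₂ + τ * a) :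
    ∃ d₀ ≥ max 1 (C₀ ^ ((μ - μt) / μ)),
    ∀ d ≥ d₀, ∀ u : ℝ → ℝ, memE C₀ μ μt d u →
    ∀ x : ℝ, x > Real.log d / (μt - μ) →
      deriv (deriv (fun y => Real.exp (-μ * y) - d * Real.exp (-μt * y))) x +
        ((μ + a / μ) +
          deriv (fun y => χ₂ * Vfun a τ lam₂ μ₂ μ u y - χ₁ * Vfun a τ lam₁ μ₁ μ u y) x) *
          deriv (fun y => Real.exp (-μ * y) - d * Real.exp (-μt * y)) x +
        (a + χ₂ * lam₂ * Vfun a τ lam₂ μ₂ μ u x - χ₁ * lam₁ * Vfun a τ lam₁ μ₁ μ u x) *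
          (Real.exp (-μ * x) - d * Real.exp (-μt * x)) +
        ((μ + a / μ) * τ *
            deriv (fun y => χ₁ * Vfun a τ lam₁ μ₁ μ u y - χ₂ * Vfun a τ lam₂ μ₂ μ u y) x -
          (b + χ₂ * μ₂ - χ₁ * μ₁) * (Real.exp (-μ * x) - d * Real.exp (-μt * x))) *
          (Real.exp (-μ * x) - d * Real.exp (-μt * x)) ≥ 0 := by
  have hμt2a : μt < Real.sqrt a := lt_of_lt_of_le hμt₂ (min_le_left _ _)
  have hμt2μ : μt < 2 * μ :=
    lt_of_lt_of_le hμt₂ (le_trans (min_le_right _ _) (min_le_left _ _))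
  clear hμt₂ hb1 hb2 hτμt
  have hμa2 : ∀ lam : ℝ, lam + (μ * (τ * (μ + a / μ)) - μ ^ 2) = lam + τ * (μ ^ 2 + a) - μ ^ 2 := by
    intro lam; field_simp; ring
  have hca : 0 < μ + a / μ := add_pos hμ0 (div_pos ha hμ0)
  -- positivity of lamᵢ + κ
  have hκ : ∀ lam : ℝ, 0 < lam → ((1 - τ) * μ ^ 2 < lam + τ * a ∨ 1 ≤ τ) →
      0 < lam + (μ * (τ * (μ + a / μ)) - μ ^ 2) := by
    intro lam hlam hcase
    rw [hμa2 lam]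
    rcases hcase with h | h
    · nlinarith
    · nlinarith [sq_nonneg μ]
  have hκ1 : 0 < lam₁ + (μ * (τ * (μ + a / μ)) - μ ^ 2) := by
    apply hκ lam₁ hlam₁
    rcases lt_or_ge τ 1 with h | h
    · exact Or.inl (hτμ h).1
    · exact Or.inr h
  have hκ2 : 0 < lam₂ + (μ * (τ * (μ + a / μ)) - μ ^ 2) := by
    apply hκ lam₂ hlam₂
    rcases lt_or_ge τ 1 with h | h
    · exact Or.inl (hτμ h).2
    · exact Or.inr h
  set m0 := min (lam₁ + (μ * (τ * (μ + a / μ)) - μ ^ 2))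
    (lam₂ + (μ * (τ * (μ + a / μ)) - μ ^ 2)) with hm0def
  have hm0 : 0 < m0 := lt_min hκ1 hκ2
  set ε := m0 / (2 * (m0 + μ ^ 2)) with hεdef
  have hε0 : 0 < ε := by
    rw [hεdef]; exact div_pos hm0 (by nlinarith [sq_nonneg μ])
  have hε1 : ε < 1 := by
    rw [hεdef, div_lt_one (by nlinarith [sq_nonneg μ])]; nlinarith [sq_nonneg μ]
  have hrat : μ ^ 2 * ε / (1 - ε) < m0 := by
    have h1e : 1 - ε = (m0 + 2 * μ ^ 2) / (2 * (m0 + μ ^ 2)) := by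
      rw [hεdef]; field_simp; ring
    have h2 : μ ^ 2 * ε / (1 - ε) = μ ^ 2 * m0 / (m0 + 2 * μ ^ 2) := by
      rw [hεdef, h1e]; field_simp
    rw [h2, div_lt_iff₀ (by nlinarith [sq_nonneg μ])]
    nlinarith [sq_nonneg μ]
  have hδ₁ : 0 < lam₁ + (μ * (τ * (μ + a / μ)) - μ ^ 2) - μ ^ 2 * ε / (1 - ε) := by
    have := min_le_left (lam₁ + (μ * (τ * (μ + a / μ)) - μ ^ 2))
      (lam₂ + (μ * (τ * (μ + a / μ)) - μ ^ 2))
    rw [← hm0def] at this; linarith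
  have hδ₂ : 0 < lam₂ + (μ * (τ * (μ + a / μ)) - μ ^ 2) - μ ^ 2 * ε / (1 - ε) := by
    have := min_le_right (lam₁ + (μ * (τ * (μ + a / μ)) - μ ^ 2))
      (lam₂ + (μ * (τ * (μ + a / μ)) - μ ^ 2))
    rw [← hm0def] at this; linarith
  -- the constants
  obtain ⟨Ie1, hIe1⟩ : ∃ r : ℝ, (∫ s in Ioi (0:ℝ),
    Real.exp (-(lam₁ + (μ * (τ * (μ + a / μ)) - μ ^ 2)) * s)) = r := ⟨_, rfl⟩
  obtain ⟨J1, hJ1⟩ : ∃ r : ℝ, (∫ s in Ioi (0:ℝ),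
    Real.exp (-(lam₁ + (μ * (τ * (μ + a / μ)) - μ ^ 2) - μ ^ 2 * ε / (1 - ε)) * s) /
      (Real.sqrt (ε * (1 - ε)) * Real.sqrt s)) = r := ⟨_, rfl⟩
  obtain ⟨J2, hJ2⟩ : ∃ r : ℝ, (∫ s in Ioi (0:ℝ),
    Real.exp (-(lam₂ + (μ * (τ * (μ + a / μ)) - μ ^ 2) - μ ^ 2 * ε / (1 - ε)) * s) /
      (Real.sqrt (ε * (1 - ε)) * Real.sqrt s)) = r := ⟨_, rfl⟩
  have hIe1_0 : 0 ≤ Ie1 := by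
    rw [← hIe1]; exact integral_nonneg fun s => (Real.exp_pos _).le
  have hJ1_0 : 0 ≤ J1 := by
    rw [← hJ1]
    exact integral_nonneg fun s => div_nonneg (Real.exp_pos _).le
      (mul_nonneg (Real.sqrt_nonneg _) (Real.sqrt_nonneg _))
  have hJ2_0 : 0 ≤ J2 := by
    rw [← hJ2]
    exact integral_nonneg fun s => div_nonneg (Real.exp_pos _).le
      (mul_nonneg (Real.sqrt_nonneg _) (Real.sqrt_nonneg _))
  obtain ⟨K', hK'⟩ : ∃ r : ℝ, r = χ₁ * μ₁ * J1 + χ₂ * μ₂ * J2 := ⟨_, rfl⟩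
  obtain ⟨M', hM'⟩ : ∃ r : ℝ, r = χ₁ * lam₁ * (μ₁ * Ie1) := ⟨_, rfl⟩
  have hK'0 : 0 ≤ K' := by
    rw [hK']
    exact add_nonneg (mul_nonneg (mul_nonneg hχ₁.le hμ₁.le) hJ1_0)
      (mul_nonneg (mul_nonneg hχ₂.le hμ₂.le) hJ2_0)
  have hM'0 : 0 ≤ M' := by
    rw [hM']
    exact mul_nonneg (mul_nonneg hχ₁.le hlam₁.le) (mul_nonneg hμ₁.le hIe1_0)
  obtain ⟨Cc, hCc⟩ : ∃ r : ℝ, r = K' * (μ + μt) + M' + (μ + a / μ) * τ * K' +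
    |b + χ₂ * μ₂ - χ₁ * μ₁| := ⟨_, rfl⟩
  have hCc0 : 0 ≤ Cc := by
    rw [hCc]
    have h1 : 0 ≤ K' * (μ + μt) :=
      mul_nonneg hK'0 (add_nonneg hμ0.le (le_of_lt (lt_trans hμ0 hμt₁)))
    have h2 : 0 ≤ (μ + a / μ) * τ * K' := mul_nonneg (mul_nonneg hca.le hτ.le) hK'0
    have h3 := abs_nonneg (b + χ₂ * μ₂ - χ₁ * μ₁)
    linarith only [h1, h2, h3, hM'0]
  obtain ⟨Dd, hDd⟩ : ∃ r : ℝ, r = (μ + a / μ) * μt - μt ^ 2 - a := ⟨_, rfl⟩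
  have hμμt : μ * μt < a := by
    nlinarith [mul_pos (sub_pos.2 hμa) (sub_pos.2 hμt2a), Real.sq_sqrt ha.le]
  have hDd0 : 0 < Dd := by
    have h1 : μ * Dd = (μt - μ) * (a - μ * μt) := by rw [hDd]; field_simp; ring
    nlinarith only [h1, hμ0, mul_pos (sub_pos.2 hμt₁) (sub_pos.2 hμμt)]
  refine ⟨max (max 1 (C₀ ^ ((μ - μt) / μ))) (Cc / Dd), le_max_left _ _, ?_⟩
  intro d hd u hu x hx
  have hd1 : (1:ℝ) ≤ d := le_trans (le_trans (le_max_left _ _) (le_max_left _ _)) hd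
  have hd0 : (0:ℝ) < d := lt_of_lt_of_le one_pos hd1
  have hdCD : Cc / Dd ≤ d := le_trans (le_max_right _ _) hd
  have hucont : Continuous u := hu.1
  have hu0 : ∀ z, 0 ≤ u z := fun z => le_trans (le_max_left _ _) (hu.2 z).1
  have huC : ∀ z, u z ≤ C₀ := fun z => le_trans (hu.2 z).2 (min_le_left _ _)
  have huμ : ∀ z, u z ≤ Real.exp (-μ * z) := fun z => le_trans (hu.2 z).2 (min_le_right _ _)
  -- V facts
  obtain ⟨hV1_0, hV1up, D₁, hD₁deriv, hD₁bd⟩ :=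
    Vmaster a τ lam₁ μ₁ μ C₀ ε u hμ₁.le hμ0 hlam₁ hucont hu0 huC huμ hε0 hε1 hδ₁ x
  obtain ⟨hV2_0, hV2up, D₂, hD₂deriv, hD₂bd⟩ :=
    Vmaster a τ lam₂ μ₂ μ C₀ ε u hμ₂.le hμ0 hlam₂ hucont hu0 huC huμ hε0 hε1 hδ₂ x
  rw [hIe1] at hV1up
  rw [hJ1] at hD₁bd
  rw [hJ2] at hD₂bd
  clear hIe1 hJ1 hJ2
  -- derivative rewrites
  have hDcomb2 : deriv (fun y => χ₂ * Vfun a τ lam₂ μ₂ μ u y -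
      χ₁ * Vfun a τ lam₁ μ₁ μ u y) x = χ₂ * D₂ - χ₁ * D₁ :=
    ((hD₂deriv.const_mul χ₂).sub (hD₁deriv.const_mul χ₁)).deriv
  have hDcomb1 : deriv (fun y => χ₁ * Vfun a τ lam₁ μ₁ μ u y -
      χ₂ * Vfun a τ lam₂ μ₂ μ u y) x = χ₁ * D₁ - χ₂ * D₂ :=
    ((hD₁deriv.const_mul χ₁).sub (hD₂deriv.const_mul χ₂)).deriv
  have hW : ∀ y : ℝ, HasDerivAt (fun y => Real.exp (-μ * y) - d * Real.exp (-μt * y))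
      (-μ * Real.exp (-μ * y) - d * (-μt * Real.exp (-μt * y))) y := by
    intro y
    have h1 : HasDerivAt (fun y : ℝ => -μ * y) (-μ) y := by
      simpa using (hasDerivAt_id y).const_mul (-μ)
    have h2 : HasDerivAt (fun y : ℝ => -μt * y) (-μt) y := by
      simpa using (hasDerivAt_id y).const_mul (-μt)
    have h3 := (h1.exp).sub ((h2.exp).const_mul d)
    refine h3.congr_deriv ?_
    ring
  have hWfun : deriv (fun y => Real.exp (-μ * y) - d * Real.exp (-μt * y))
      = fun y => -μ * Real.exp (-μ * y) - d * (-μt * Real.exp (-μt * y)) :=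
    funext fun y => (hW y).deriv
  have hW1x : deriv (fun y => Real.exp (-μ * y) - d * Real.exp (-μt * y)) x
      = -μ * Real.exp (-μ * x) - d * (-μt * Real.exp (-μt * x)) := (hW x).deriv
  have hW2x : deriv (deriv (fun y => Real.exp (-μ * y) - d * Real.exp (-μt * y))) x
      = μ ^ 2 * Real.exp (-μ * x) - d * (μt ^ 2 * Real.exp (-μt * x)) := by
    rw [hWfun]
    have h1 : HasDerivAt (fun y : ℝ => -μ * y) (-μ) x := by
      simpa using (hasDerivAt_id x).const_mul (-μ)
    have h2 : HasDerivAt (fun y : ℝ => -μt * y) (-μt) x := by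
      simpa using (hasDerivAt_id x).const_mul (-μt)
    have h3 := ((h1.exp).const_mul (-μ)).sub (((h2.exp).const_mul (-μt)).const_mul d)
    have h4 : HasDerivAt (fun y => -μ * Real.exp (-μ * y) - d * (-μt * Real.exp (-μt * y)))
        (μ ^ 2 * Real.exp (-μ * x) - d * (μt ^ 2 * Real.exp (-μt * x))) x := by
      refine h3.congr_deriv ?_
      ring
    exact h4.deriv
  rw [hW2x, hW1x, hDcomb2, hDcomb1]
  -- region facts
  set e1 := Real.exp (-μ * x) with he1
  set e2 := Real.exp (-μt * x) with he2
  have he1p : 0 < e1 := Real.exp_pos _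
  have he2p : 0 < e2 := Real.exp_pos _
  have hμtμ : 0 < μt - μ := sub_pos.2 hμt₁
  have hx0 : 0 < x := by
    have hlogd : 0 ≤ Real.log d := Real.log_nonneg hd1
    have := div_nonneg hlogd hμtμ.le
    linarith only [this, hx]
  have hregion : d * e2 < e1 := by
    have h1 : Real.log d < (μt - μ) * x := by
      rw [gt_iff_lt, div_lt_iff₀ hμtμ] at hx; linarith only [hx]
    have h2 : d < Real.exp ((μt - μ) * x) := by
      calc d = Real.exp (Real.log d) := (Real.exp_log hd0).symm
        _ < Real.exp ((μt - μ) * x) := Real.exp_lt_exp.2 h1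
    calc d * e2 < Real.exp ((μt - μ) * x) * e2 := by
          exact mul_lt_mul_of_pos_right h2 he2p
      _ = e1 := by rw [he1, he2, ← Real.exp_add]; congr 1; ring
  have he12 : e1 ^ 2 ≤ e2 := by
    rw [he1, he2, sq, ← Real.exp_add]
    apply Real.exp_le_exp.2
    nlinarith only [mul_pos (by linarith only [hμt2μ] : (0:ℝ) < 2 * μ - μt) hx0]
  have hT0 : Cc * e1 ^ 2 ≤ d * Dd * e2 := by
    have h1 : Cc ≤ d * Dd := by
      rw [div_le_iff₀ hDd0] at hdCD; linarith only [hdCD]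
    calc Cc * e1 ^ 2 ≤ Cc * e2 := mul_le_mul_of_nonneg_left he12 hCc0
      _ ≤ d * Dd * e2 := mul_le_mul_of_nonneg_right h1 he2p.le
  -- bounds on Q and Λ
  have habsQ : |χ₂ * D₂ - χ₁ * D₁| ≤ K' * e1 := by
    calc |χ₂ * D₂ - χ₁ * D₁| ≤ |χ₂ * D₂| + |χ₁ * D₁| := abs_sub _ _
      _ = χ₂ * |D₂| + χ₁ * |D₁| := by
          rw [abs_mul, abs_mul, abs_of_pos hχ₂, abs_of_pos hχ₁]
      _ ≤ χ₂ * (μ₂ * J2 * e1) + χ₁ * (μ₁ * J1 * e1) := by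
          apply add_le_add
          · exact mul_le_mul_of_nonneg_left hD₂bd hχ₂.le
          · exact mul_le_mul_of_nonneg_left hD₁bd hχ₁.le
      _ = K' * e1 := by rw [hK']; ring
  have hQ := abs_le.1 habsQ
  have hΛ : -(M' * e1) ≤ χ₂ * lam₂ * Vfun a τ lam₂ μ₂ μ u x -
      χ₁ * lam₁ * Vfun a τ lam₁ μ₁ μ u x := by
    have h1 : χ₁ * lam₁ * Vfun a τ lam₁ μ₁ μ u x ≤ M' * e1 := by
      calc χ₁ * lam₁ * Vfun a τ lam₁ μ₁ μ u x ≤ χ₁ * lam₁ * (μ₁ * Ie1 * e1) := by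
            exact mul_le_mul_of_nonneg_left hV1up (mul_nonneg hχ₁.le hlam₁.le)
        _ = M' * e1 := by rw [hM']; ring
    have h2 : 0 ≤ χ₂ * lam₂ * Vfun a τ lam₂ μ₂ μ u x :=
      mul_nonneg (mul_nonneg hχ₂.le hlam₂.le) hV2_0
    linarith only [h1, h2]
  -- final arithmetic
  obtain ⟨Q, hQdef⟩ : ∃ r : ℝ, r = χ₂ * D₂ - χ₁ * D₁ := ⟨_, rfl⟩
  obtain ⟨V₁, hV₁def⟩ : ∃ r : ℝ, r = Vfun a τ lam₁ μ₁ μ u x := ⟨_, rfl⟩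
  obtain ⟨V₂, hV₂def⟩ : ∃ r : ℝ, r = Vfun a τ lam₂ μ₂ μ u x := ⟨_, rfl⟩
  rw [← hQdef] at habsQ hQ ⊢
  rw [← hV₁def, ← hV₂def] at hΛ ⊢
  have hcμ : (μ + a / μ) * μ = μ ^ 2 + a := by field_simp
  have hde2 : 0 ≤ d * e2 := mul_nonneg hd0.le he2p.le
  have hW0 : 0 ≤ e1 - d * e2 := by linarith only [hregion]
  have hWe1 : e1 - d * e2 ≤ e1 := by linarith only [hde2]
  have expand : μ ^ 2 * e1 - d * (μt ^ 2 * e2) +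
      ((μ + a / μ) + Q) * (-μ * e1 - d * (-μt * e2)) +
      (a + χ₂ * lam₂ * V₂ - χ₁ * lam₁ * V₁) * (e1 - d * e2) +
      ((μ + a / μ) * τ * (χ₁ * D₁ - χ₂ * D₂) -
        (b + χ₂ * μ₂ - χ₁ * μ₁) * (e1 - d * e2)) * (e1 - d * e2)
      = d * Dd * e2 + Q * (μt * (d * e2) - μ * e1) +
        (χ₂ * lam₂ * V₂ - χ₁ * lam₁ * V₁) * (e1 - d * e2) -
        (μ + a / μ) * τ * Q * (e1 - d * e2) -
        (b + χ₂ * μ₂ - χ₁ * μ₁) * (e1 - d * e2) ^ 2 := by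
    rw [hDd, hQdef]
    linear_combination (-e1) * hcμ
  rw [ge_iff_le]
  rw [expand]
  -- bound the four bad terms
  have hT1 : -(K' * e1 * ((μt + μ) * e1)) ≤ Q * (μt * (d * e2) - μ * e1) := by
    have hμtpos : (0:ℝ) < μt := lt_trans hμ0 hμt₁
    have hp1 : μt * (d * e2) ≤ μt * e1 := mul_le_mul_of_nonneg_left hregion.le hμtpos.le
    have hp2 : 0 ≤ μt * (d * e2) := mul_nonneg hμtpos.le hde2
    have hp3 : 0 ≤ μ * e1 := mul_nonneg hμ0.le he1p.le
    have hp4 : 0 ≤ μt * e1 := mul_nonneg hμtpos.le he1p.le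
    have hv : |μt * (d * e2) - μ * e1| ≤ (μt + μ) * e1 := by
      rw [abs_le]
      constructor
      · nlinarith only [hp2, hp4, hp3]
      · nlinarith only [hp1, hp3]
    have h2 : |Q * (μt * (d * e2) - μ * e1)| ≤ K' * e1 * ((μt + μ) * e1) := by
      rw [abs_mul]
      exact mul_le_mul habsQ hv (abs_nonneg _) (mul_nonneg hK'0 he1p.le)
    linarith only [h2, neg_abs_le (Q * (μt * (d * e2) - μ * e1))]
  have hT2 : -(M' * e1 * e1) ≤ (χ₂ * lam₂ * V₂ - χ₁ * lam₁ * V₁) * (e1 - d * e2) := by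
    have s1 : (-(M' * e1)) * (e1 - d * e2) ≤ (χ₂ * lam₂ * V₂ - χ₁ * lam₁ * V₁) * (e1 - d * e2) :=
      mul_le_mul_of_nonneg_right hΛ hW0
    have s2 : M' * e1 * (e1 - d * e2) ≤ M' * e1 * e1 :=
      mul_le_mul_of_nonneg_left hWe1 (mul_nonneg hM'0 he1p.le)
    nlinarith only [s1, s2]
  have hT3 : (μ + a / μ) * τ * Q * (e1 - d * e2) ≤ (μ + a / μ) * τ * (K' * e1) * e1 := by
    have hcτ : 0 ≤ (μ + a / μ) * τ := mul_nonneg hca.le hτ.le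
    have h1 : Q * (e1 - d * e2) ≤ K' * e1 * e1 := by
      calc Q * (e1 - d * e2) ≤ K' * e1 * (e1 - d * e2) :=
            mul_le_mul_of_nonneg_right hQ.2 hW0
        _ ≤ K' * e1 * e1 := mul_le_mul_of_nonneg_left hWe1 (mul_nonneg hK'0 he1p.le)
    calc (μ + a / μ) * τ * Q * (e1 - d * e2) = (μ + a / μ) * τ * (Q * (e1 - d * e2)) := by ring
      _ ≤ (μ + a / μ) * τ * (K' * e1 * e1) := mul_le_mul_of_nonneg_left h1 hcτ
      _ = (μ + a / μ) * τ * (K' * e1) * e1 := by ring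
  have hT4 : (b + χ₂ * μ₂ - χ₁ * μ₁) * (e1 - d * e2) ^ 2 ≤ |b + χ₂ * μ₂ - χ₁ * μ₁| * e1 ^ 2 := by
    have h1 : (e1 - d * e2) ^ 2 ≤ e1 ^ 2 := by nlinarith only [hW0, hWe1, hde2]
    calc (b + χ₂ * μ₂ - χ₁ * μ₁) * (e1 - d * e2) ^ 2
        ≤ |b + χ₂ * μ₂ - χ₁ * μ₁| * (e1 - d * e2) ^ 2 := by
          apply mul_le_mul_of_nonneg_right (le_abs_self _) (sq_nonneg _)
      _ ≤ |b + χ₂ * μ₂ - χ₁ * μ₁| * e1 ^ 2 :=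
          mul_le_mul_of_nonneg_left h1 (abs_nonneg _)
  have hCceq : Cc * e1 ^ 2 = K' * e1 * ((μt + μ) * e1) + M' * e1 * e1 +
      (μ + a / μ) * τ * (K' * e1) * e1 + |b + χ₂ * μ₂ - χ₁ * μ₁| * e1 ^ 2 := by
    rw [hCc]; ring
  linarith only [hT0, hT1, hT2, hT3, hT4, hCceq]
end
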